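/- arXiv:1902.01322 — 3 statements merged into one kernel-verified Lean document; each statement's English description precedes it below -/
import Mathlib

section
/- Cyclewidth is monotone under subgraphs: if D' is a subgraph of a digraph D, then cw(D') ≤ cw(D). -/
set_option linter.unusedSectionVars false


open scoped Classical

/-- A finite digraph (without loops or multiple arcs) on a subset of `ℕ`. -/
structure Dgraph where
  verts : Finset ℕ
  arcs : Finset (ℕ × ℕ)
  arcs_mem : ∀ a ∈ arcs, a.1 ∈ verts ∧ a.2 ∈ verts
  no_loops : ∀ a ∈ arcs, a.1 ≠ a.2

/-- The cut of a digraph at a set `X`: all arcs with exactly one endpoint in `X`. -/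
noncomputable def Dgraph.cutArcs (D : Dgraph) (X : Set ℕ) : Finset (ℕ × ℕ) :=
  D.arcs.filter fun a => (a.1 ∈ X ∧ a.2 ∉ X) ∨ (a.1 ∉ X ∧ a.2 ∈ X)

/-- `F` is the union of the arc sets of a family of pairwise vertex-disjoint directed
cycles of `D`: every vertex has at most one outgoing arc in `F` and equally many
outgoing and incoming arcs in `F`. -/
def Dgraph.IsCycleFamily (D : Dgraph) (F : Finset (ℕ × ℕ)) : Prop :=
  F ⊆ D.arcs ∧ ∀ v : ℕ,
    (F.filter fun a => a.1 = v).card ≤ 1 ∧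
    (F.filter fun a => a.1 = v).card = (F.filter fun a => a.2 = v).card

/-- The cycle porosity of the cut at `X`: the maximum number of edges of the cut lying
on a family of pairwise vertex-disjoint directed cycles. -/
noncomputable def Dgraph.cycPorosity (D : Dgraph) (X : Set ℕ) : ℕ :=
  (D.arcs.powerset.filter fun F => D.IsCycleFamily F).sup fun F => (D.cutArcs X ∩ F).card

/-- A leaf of a tree (a vertex with at most one neighbour). -/
def IsTreeLeaf {W : Type} (T : SimpleGraph W) (t : W) : Prop :=
  (T.neighborSet t).ncard ≤ 1

/-- A cubic tree: a tree all of whose inner (non-leaf) vertices have degree exactly 3. -/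
def IsCubicTree {W : Type} (T : SimpleGraph W) : Prop :=
  T.IsTree ∧ ∀ t : W, ¬ IsTreeLeaf T t → (T.neighborSet t).ncard = 3

/-- The shore induced by the tree edge `t₁t₂`: the images of all leaves lying on the
`t₁`-side of the tree after deleting the edge `t₁t₂`. -/
def treeShore {W : Type} (T : SimpleGraph W) (φ : W → ℕ) (t₁ t₂ : W) : Set ℕ :=
  φ '' {l | IsTreeLeaf T l ∧ (T.deleteEdges {s(t₁, t₂)}).Reachable t₁ l}

/-- A cycle decomposition of a digraph `D`: a cubic tree together with a bijection `φ`
between its leaves and the vertices of `D`. -/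
structure CycleDecomp (D : Dgraph) where
  W : Type
  fin : Fintype W
  T : SimpleGraph W
  cubic : IsCubicTree T
  φ : W → ℕ
  bij : Set.BijOn φ {l | IsTreeLeaf T l} ↑D.verts

/-- The width of a cycle decomposition: the maximum cycle porosity over the cuts induced
by the edges of the tree. -/
noncomputable def CycleDecomp.width {D : Dgraph} (c : CycleDecomp D) : ℕ :=
  letI := c.fin
  Finset.univ.sup fun p : c.W × c.W =>
    if c.T.Adj p.1 p.2 then D.cycPorosity (treeShore c.T c.φ p.1 p.2) else 0

/-- The cyclewidth of a digraph: the least width of a cycle decomposition. -/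
noncomputable def cycleWidth (D : Dgraph) : ℕ :=
  sInf {k | ∃ c : CycleDecomp D, c.width = k}

/-- `H` is a subgraph of `D`. -/
def Dgraph.IsSubgraph (H D : Dgraph) : Prop :=
  H.verts ⊆ D.verts ∧ H.arcs ⊆ D.arcs

/-- The digraph obtained by reversing the orientation of every arc. -/
noncomputable def Dgraph.reverse (D : Dgraph) : Dgraph where
  verts := D.verts
  arcs := D.arcs.image Prod.swap
  arcs_mem := by
    intro a ha
    simp only [Finset.mem_image] at ha
    obtain ⟨b, hb, rfl⟩ := ha
    exact ⟨(D.arcs_mem b hb).2, (D.arcs_mem b hb).1⟩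
  no_loops := by
    intro a ha
    simp only [Finset.mem_image] at ha
    obtain ⟨b, hb, rfl⟩ := ha
    exact fun h => D.no_loops b hb h.symm


open scoped Classical

section Helpers

variable {α β : Type*}

/-- Transfer reachability along a vertex map with per-edge reachability. -/
lemma reach_map {G : SimpleGraph α} {H : SimpleGraph β} (f : α → β)
    (h : ∀ x y, G.Adj x y → H.Reachable (f x) (f y)) {u w : α}
    (hr : G.Reachable u w) : H.Reachable (f u) (f w) := by
  obtain ⟨p⟩ := hr
  induction p with
  | nil => exact SimpleGraph.Reachable.refl _
  | cons ha _ ih => exact (h _ _ ha).trans ih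

/-- A set closed under adjacency contains the reachable set. -/
lemma reach_closed {G : SimpleGraph α} {S : Set α}
    (h : ∀ x ∈ S, ∀ y, G.Adj x y → y ∈ S) {u w : α} (hu : u ∈ S)
    (hr : G.Reachable u w) : w ∈ S := by
  obtain ⟨p⟩ := hr
  induction p with
  | nil => exact hu
  | cons ha _ ih => exact ih (h _ hu _ ha)

/-- In a connected graph with another vertex, every vertex has a neighbour. -/
lemma exists_nbr {G : SimpleGraph α} (hc : G.Connected) {u w : α} (hne : u ≠ w) :
    ∃ x, G.Adj u x := by
  obtain ⟨p⟩ := hc.preconnected u w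
  cases p with
  | nil => exact absurd rfl hne
  | cons ha _ => exact ⟨_, ha⟩

lemma leaf_nbr_set [Finite α] {G : SimpleGraph α} {u t : α} (hl : (G.neighborSet u).ncard ≤ 1)
    (ht : G.Adj u t) : G.neighborSet u = {t} := by
  refine Set.eq_singleton_iff_unique_mem.2 ⟨ht, fun y hy => ?_⟩
  by_contra hne
  have h2 : ({y, t} : Set α) ⊆ G.neighborSet u := by
    rintro z (rfl | rfl); exact hy; exact ht
  have := Set.ncard_le_ncard h2 (Set.toFinite _)
  rw [Set.ncard_pair hne] at this
  omega

end Helpers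
open scoped Classical

section Porosity

/-- Cut arcs only depend on the trace of `X` on the vertex set. -/
lemma Dgraph.cutArcs_congr (D : Dgraph) {X Y : Set ℕ}
    (h : ∀ u ∈ D.verts, (u ∈ X ↔ u ∈ Y)) : D.cutArcs X = D.cutArcs Y := by
  unfold Dgraph.cutArcs
  apply Finset.filter_congr
  intro a ha
  have h1 := (D.arcs_mem a ha).1
  have h2 := (D.arcs_mem a ha).2
  rw [h _ h1, h _ h2]

lemma Dgraph.cycPorosity_congr (D : Dgraph) {X Y : Set ℕ}
    (h : ∀ u ∈ D.verts, (u ∈ X ↔ u ∈ Y)) : D.cycPorosity X = D.cycPorosity Y := by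
  unfold Dgraph.cycPorosity
  rw [D.cutArcs_congr h]

lemma Dgraph.cycPorosity_mono {D' D : Dgraph} (h : D'.IsSubgraph D) (X : Set ℕ) :
    D'.cycPorosity X ≤ D.cycPorosity X := by
  unfold Dgraph.cycPorosity
  apply Finset.sup_le
  intro F hF
  simp only [Finset.mem_filter, Finset.mem_powerset] at hF
  obtain ⟨hFsub, hfam⟩ := hF
  have hFD : F ⊆ D.arcs := hFsub.trans h.2
  have hfamD : D.IsCycleFamily F := ⟨hFD, hfam.2⟩
  have hmem : F ∈ D.arcs.powerset.filter fun F => D.IsCycleFamily F := by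
    simp only [Finset.mem_filter, Finset.mem_powerset]
    exact ⟨hFD, hfamD⟩
  refine le_trans ?_ (Finset.le_sup hmem)
  apply Finset.card_le_card
  intro a ha
  simp only [Finset.mem_inter] at ha ⊢
  refine ⟨?_, ha.2⟩
  have ha := ha.1
  simp only [Dgraph.cutArcs, Finset.mem_filter] at ha ⊢
  exact ⟨h.2 ha.1, ha.2⟩
section LeafExists

lemma ncard_neighborSet_eq_degree {W : Type} [Fintype W] (T : SimpleGraph W) (v : W) :
    (T.neighborSet v).ncard = T.degree v := by
  rw [← SimpleGraph.card_neighborSet_eq_degree, Set.ncard_eq_toFinset_card']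
  simp

/-- A finite cubic tree has a leaf. -/
lemma cubic_has_leaf {W : Type} [Fintype W] {T : SimpleGraph W} (h : IsCubicTree T) :
    ∃ l, IsTreeLeaf T l := by
  by_contra hno
  push_neg at hno
  have hdeg : ∀ v, T.degree v = 3 := fun v => by
    rw [← ncard_neighborSet_eq_degree]; exact h.2 v (hno v)
  have hsum := T.sum_degrees_eq_twice_card_edges
  have hcard := h.1.card_edgeFinset
  have hn : 1 ≤ Fintype.card W := by
    have : Nonempty W := h.1.isConnected.nonempty
    exact Fintype.card_pos
  have : ∑ v, T.degree v = 3 * Fintype.card W := by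
    rw [Finset.sum_congr rfl fun v _ => hdeg v]
    simp [Finset.sum_const, mul_comm]
  omega

lemma no_decomp_of_empty {D : Dgraph} (h : D.verts = ∅) (c : CycleDecomp D) : False := by
  letI := c.fin
  obtain ⟨l, hl⟩ := cubic_has_leaf c.cubic
  have := c.bij.mapsTo hl
  rw [h] at this
  simp at this

end LeafExists
section AttachDef

variable {W : Type}

/-- Graph obtained by subdividing the edge `m t` with a new vertex `inr false` and
attaching a new leaf `inr true` to it. -/
def attachGraph (T : SimpleGraph W) (m t : W) : SimpleGraph (W ⊕ Bool) where
  Adj x y := match x, y with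
    | .inl x, .inl y => T.Adj x y ∧ s(x, y) ≠ s(m, t)
    | .inl x, .inr c => c = false ∧ (x = m ∨ x = t)
    | .inr c, .inl y => c = false ∧ (y = m ∨ y = t)
    | .inr c, .inr d => c ≠ d
  symm := by
    constructor
    rintro (x | c) (y | d) h
    · exact ⟨h.1.symm, by rw [Sym2.eq_swap]; exact h.2⟩
    · exact h
    · exact h
    · exact h.symm
  loopless := by
    constructor
    rintro (x | c) h
    · exact T.irrefl h.1
    · exact h rfl

variable {T : SimpleGraph W} {m t : W}

@[simp] lemma attach_adj_inl_inl {x y : W} :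
    (attachGraph T m t).Adj (.inl x) (.inl y) ↔ T.Adj x y ∧ s(x, y) ≠ s(m, t) := Iff.rfl

@[simp] lemma attach_adj_inl_inr {x : W} {c : Bool} :
    (attachGraph T m t).Adj (.inl x) (.inr c) ↔ c = false ∧ (x = m ∨ x = t) := Iff.rfl

@[simp] lemma attach_adj_inr_inl {y : W} {c : Bool} :
    (attachGraph T m t).Adj (.inr c) (.inl y) ↔ c = false ∧ (y = m ∨ y = t) := Iff.rfl

@[simp] lemma attach_adj_inr_inr {c d : Bool} :
    (attachGraph T m t).Adj (.inr c) (.inr d) ↔ c ≠ d := Iff.rfl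

end AttachDef
section AttachLemmas

variable {W : Type} [Fintype W] {T : SimpleGraph W} {m t : W}

lemma sym2_inl_ne {x y x' y' : W} (h : s(x, y) ≠ s(x', y')) :
    s((Sum.inl x : W ⊕ Bool), Sum.inl y) ≠ s(Sum.inl x', Sum.inl y') := by
  intro hc
  rw [Sym2.eq_iff] at hc
  apply h
  rw [Sym2.eq_iff]
  rcases hc with ⟨h1, h2⟩ | ⟨h1, h2⟩ <;> simp only [Sum.inl.injEq] at h1 h2
  · exact Or.inl ⟨h1, h2⟩
  · exact Or.inr ⟨h1, h2⟩

lemma attach_nbr_inl_of_ne {x : W} (hm : x ≠ m) (ht : x ≠ t) :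
    (attachGraph T m t).neighborSet (.inl x) = Sum.inl '' T.neighborSet x := by
  ext y
  rcases y with y | c
  · simp only [SimpleGraph.mem_neighborSet, attach_adj_inl_inl, Set.mem_image,
      Sum.inl.injEq]
    constructor
    · rintro ⟨h1, _⟩; exact ⟨y, h1, rfl⟩
    · rintro ⟨y', h1, rfl⟩
      refine ⟨h1, fun hc => ?_⟩
      rw [Sym2.eq_iff] at hc
      tauto
  · simp only [SimpleGraph.mem_neighborSet, attach_adj_inl_inr, Set.mem_image]
    constructor
    · rintro ⟨_, h2⟩; tauto
    · rintro ⟨y', _, hc⟩; cases hc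

lemma attach_nbr_inl_m (hNm : T.neighborSet m = {t}) (hmt : m ≠ t) :
    (attachGraph T m t).neighborSet (.inl m) = {.inr false} := by
  ext y
  rcases y with y | c
  · simp only [SimpleGraph.mem_neighborSet, attach_adj_inl_inl, Set.mem_singleton_iff]
    constructor
    · rintro ⟨h1, h2⟩
      exfalso
      have : y ∈ T.neighborSet m := h1
      rw [hNm, Set.mem_singleton_iff] at this
      subst this
      exact h2 rfl
    · rintro hc; cases hc
  · simp [SimpleGraph.mem_neighborSet]

lemma attach_nbr_inl_t (hmt : m ≠ t) :
    (attachGraph T m t).neighborSet (.inl t) =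
      insert (Sum.inr false) (Sum.inl '' (T.neighborSet t \ {m})) := by
  ext y
  rcases y with y | c
  · simp only [SimpleGraph.mem_neighborSet, attach_adj_inl_inl, Set.mem_insert_iff,
      Set.mem_image, Set.mem_diff, Set.mem_singleton_iff, Sum.inl.injEq]
    constructor
    · rintro ⟨h1, h2⟩
      refine Or.inr ⟨y, ⟨h1, fun hc => ?_⟩, rfl⟩
      subst hc
      exact h2 (by rw [Sym2.eq_iff]; right; exact ⟨rfl, rfl⟩)
    · rintro (hc | ⟨y', ⟨h1, h2⟩, rfl⟩)
      · cases hc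
      · refine ⟨h1, fun hc => ?_⟩
        rw [Sym2.eq_iff] at hc
        rcases hc with ⟨h3, h4⟩ | ⟨h3, h4⟩
        · exact hmt h3.symm
        · exact h2 h4
  · simp only [SimpleGraph.mem_neighborSet, attach_adj_inl_inr, Set.mem_insert_iff,
      Set.mem_image, Set.mem_diff, Sum.inr.injEq]
    simp

lemma attach_nbr_inr_true :
    (attachGraph T m t).neighborSet (.inr true) = {.inr false} := by
  ext y
  rcases y with y | c
  · simp [SimpleGraph.mem_neighborSet]
  · simp only [SimpleGraph.mem_neighborSet, attach_adj_inr_inr, Set.mem_singleton_iff,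
      Sum.inr.injEq]
    constructor
    · intro h; cases c <;> simp_all
    · rintro rfl; simp

lemma attach_nbr_inr_false :
    (attachGraph T m t).neighborSet (.inr false) = {.inl m, .inl t, .inr true} := by
  ext y
  rcases y with y | c
  · simp only [SimpleGraph.mem_neighborSet, attach_adj_inr_inl, Set.mem_insert_iff,
      Set.mem_singleton_iff, Sum.inl.injEq]
    tauto
  · simp only [SimpleGraph.mem_neighborSet, attach_adj_inr_inr, Set.mem_insert_iff,
      Set.mem_singleton_iff, Sum.inr.injEq]
    cases c <;> simp

lemma attach_ncard_nbr_inl (hNm : T.neighborSet m = {t}) (hmt : T.Adj m t) (x : W) :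
    ((attachGraph T m t).neighborSet (.inl x)).ncard = (T.neighborSet x).ncard := by
  by_cases hm : x = m
  · rw [hm, attach_nbr_inl_m hNm hmt.ne, hNm, Set.ncard_singleton, Set.ncard_singleton]
  by_cases ht : x = t
  · rw [ht, attach_nbr_inl_t hmt.ne]
    have hmem : m ∈ T.neighborSet t := hmt.symm
    have h1 : (Sum.inr false : W ⊕ Bool) ∉ Sum.inl '' (T.neighborSet t \ {m}) := by
      rintro ⟨y, _, hc⟩; cases hc
    rw [Set.ncard_insert_of_notMem h1 ((Set.toFinite _).image _),
      Set.ncard_image_of_injective _ Sum.inl_injective,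
      Set.ncard_diff_singleton_add_one hmem (Set.toFinite _)]
  · rw [attach_nbr_inl_of_ne hm ht, Set.ncard_image_of_injective _ Sum.inl_injective]

lemma attach_leaf_inl (hNm : T.neighborSet m = {t}) (hmt : T.Adj m t) (x : W) :
    IsTreeLeaf (attachGraph T m t) (.inl x) ↔ IsTreeLeaf T x := by
  unfold IsTreeLeaf
  rw [attach_ncard_nbr_inl hNm hmt]

end AttachLemmas
section AttachTree

variable {W : Type} [Fintype W] {T : SimpleGraph W} {m t : W}

lemma attach_lift_reach (hmt : T.Adj m t) {x y : W} (h : T.Reachable x y) :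
    (attachGraph T m t).Reachable (.inl x) (.inl y) := by
  refine reach_map Sum.inl (fun p q hpq => ?_) h
  by_cases he : s(p, q) = s(m, t)
  · rw [Sym2.eq_iff] at he
    rcases he with ⟨rfl, rfl⟩ | ⟨rfl, rfl⟩
    · exact (SimpleGraph.Adj.reachable (attach_adj_inl_inr.2 ⟨rfl, Or.inl rfl⟩)).trans
        (SimpleGraph.Adj.reachable (attach_adj_inr_inl.2 ⟨rfl, Or.inr rfl⟩))
    · exact (SimpleGraph.Adj.reachable (attach_adj_inl_inr.2 ⟨rfl, Or.inr rfl⟩)).trans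
        (SimpleGraph.Adj.reachable (attach_adj_inr_inl.2 ⟨rfl, Or.inl rfl⟩))
  · exact SimpleGraph.Adj.reachable ⟨hpq, he⟩

lemma attach_connected (hT : T.Connected) (hmt : T.Adj m t) :
    (attachGraph T m t).Connected := by
  have key : ∀ x : W ⊕ Bool, (attachGraph T m t).Reachable x (.inr false) := by
    rintro (x | c)
    · exact (attach_lift_reach hmt (hT.preconnected x m)).trans
        (SimpleGraph.Adj.reachable (by simp))
    · cases c
      · exact SimpleGraph.Reachable.refl _
      · exact SimpleGraph.Adj.reachable (by simp)
  constructor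
  · intro x y
    exact (key x).trans (key y).symm

lemma attach_bridge_mi (hNm : T.neighborSet m = {t}) :
    ¬ ((attachGraph T m t).deleteEdges {s(.inl m, .inr false)}).Reachable
      (.inl m) (.inr false) := by
  intro hr
  have : (Sum.inr false : W ⊕ Bool) ∈ ({Sum.inl m} : Set (W ⊕ Bool)) := by
    refine reach_closed (fun p hp q hq => ?_) rfl hr
    exfalso
    rw [Set.mem_singleton_iff] at hp
    subst hp
    rw [SimpleGraph.deleteEdges_adj] at hq
    obtain ⟨hadj, hne⟩ := hq
    rcases q with y | c
    · obtain ⟨h1, h2⟩ := (attach_adj_inl_inl).1 hadj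
      have : y ∈ T.neighborSet m := h1
      rw [hNm, Set.mem_singleton_iff] at this
      subst this
      exact h2 rfl
    · obtain ⟨rfl, _⟩ := (attach_adj_inl_inr).1 hadj
      exact hne rfl
  simp at this

lemma attach_bridge_in :
    ¬ ((attachGraph T m t).deleteEdges {s(.inr false, .inr true)}).Reachable
      (.inr false) (.inr true) := by
  intro hr
  have : (Sum.inr false : W ⊕ Bool) ∈ ({Sum.inr true} : Set (W ⊕ Bool)) := by
    refine reach_closed (fun p hp q hq => ?_) rfl hr.symm
    exfalso
    rw [Set.mem_singleton_iff] at hp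
    subst hp
    rw [SimpleGraph.deleteEdges_adj] at hq
    obtain ⟨hadj, hne⟩ := hq
    rcases q with y | c
    · obtain ⟨hc, _⟩ := (attach_adj_inr_inl).1 hadj
      cases hc
    · have hc := (attach_adj_inr_inr).1 hadj
      cases c
      · exact hne (by rw [Set.mem_singleton_iff, Sym2.eq_swap])
      · exact hc rfl
  simp at this

lemma attach_bridge_ti (hT : T.IsTree) (hmt : T.Adj m t) :
    ¬ ((attachGraph T m t).deleteEdges {s(.inl t, .inr false)}).Reachable
      (.inl t) (.inr false) := by
  intro hr
  have hbr := (SimpleGraph.isAcyclic_iff_forall_adj_isBridge.1 hT.IsAcyclic) hmt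
  rw [SimpleGraph.isBridge_iff] at hbr
  apply hbr
  have key := reach_map (G := (attachGraph T m t).deleteEdges {s(.inl t, .inr false)})
    (H := T.deleteEdges {s(m, t)}) (Sum.elim id fun _ => m) ?_ hr
  · exact key.symm
  · rintro (p | c) (q | d) hpq <;> rw [SimpleGraph.deleteEdges_adj] at hpq <;>
      obtain ⟨hadj, hne⟩ := hpq
    · obtain ⟨h1, h2⟩ := (attach_adj_inl_inl).1 hadj
      exact SimpleGraph.Adj.reachable (by rw [SimpleGraph.deleteEdges_adj]; exact ⟨h1, by simpa using h2⟩)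
    · obtain ⟨rfl, hor⟩ := (attach_adj_inl_inr).1 hadj
      rcases hor with rfl | rfl
      · exact SimpleGraph.Reachable.refl _
      · exact absurd rfl hne
    · obtain ⟨rfl, hor⟩ := (attach_adj_inr_inl).1 hadj
      rcases hor with rfl | rfl
      · exact SimpleGraph.Reachable.refl _
      · exact absurd (Sym2.eq_swap) hne
    · exact SimpleGraph.Reachable.refl _

lemma attach_bridge_old (hT : T.IsTree) (hmt : T.Adj m t) {x₀ y₀ : W}
    (hxy : T.Adj x₀ y₀) (hne : s(x₀, y₀) ≠ s(m, t)) :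
    ¬ ((attachGraph T m t).deleteEdges {s(.inl x₀, .inl y₀)}).Reachable
      (.inl x₀) (.inl y₀) := by
  intro hr
  have hbr := (SimpleGraph.isAcyclic_iff_forall_adj_isBridge.1 hT.IsAcyclic) hxy
  rw [SimpleGraph.isBridge_iff] at hbr
  apply hbr
  refine reach_map (G := (attachGraph T m t).deleteEdges {s(.inl x₀, .inl y₀)})
    (H := T.deleteEdges {s(x₀, y₀)}) (Sum.elim id fun _ => t) ?_ hr
  rintro (p | c) (q | d) hpq <;> rw [SimpleGraph.deleteEdges_adj] at hpq <;>
      obtain ⟨hadj, hne'⟩ := hpq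
  · obtain ⟨h1, h2⟩ := (attach_adj_inl_inl).1 hadj
    refine SimpleGraph.Adj.reachable ?_
    rw [SimpleGraph.deleteEdges_adj]
    refine ⟨h1, fun hc => hne' ?_⟩
    simp only [Set.mem_singleton_iff] at hc ⊢
    rw [Sym2.eq_iff] at hc
    rw [Sym2.eq_iff]
    rcases hc with ⟨rfl, rfl⟩ | ⟨rfl, rfl⟩
    · exact Or.inl ⟨rfl, rfl⟩
    · exact Or.inr ⟨rfl, rfl⟩
  · obtain ⟨rfl, hor⟩ := (attach_adj_inl_inr).1 hadj
    rcases hor with rfl | rfl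
    · refine SimpleGraph.Adj.reachable ?_
      rw [SimpleGraph.deleteEdges_adj]
      exact ⟨hmt, by simp only [Set.mem_singleton_iff]; exact fun hc => hne hc.symm⟩
    · exact SimpleGraph.Reachable.refl _
  · obtain ⟨rfl, hor⟩ := (attach_adj_inr_inl).1 hadj
    rcases hor with rfl | rfl
    · refine SimpleGraph.Reachable.symm (SimpleGraph.Adj.reachable ?_)
      rw [SimpleGraph.deleteEdges_adj]
      exact ⟨hmt, by simp only [Set.mem_singleton_iff]; exact fun hc => hne hc.symm⟩
    · exact SimpleGraph.Reachable.refl _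
  · exact SimpleGraph.Reachable.refl _

lemma attach_isTree (hT : T.IsTree) (hNm : T.neighborSet m = {t}) (hmt : T.Adj m t) :
    (attachGraph T m t).IsTree := by
  constructor
  · exact attach_connected hT.isConnected hmt
  · rw [SimpleGraph.isAcyclic_iff_forall_adj_isBridge]
    intro v w hadj
    rw [SimpleGraph.isBridge_iff]
    refine fun hr => ?_
    have hr' : ((attachGraph T m t).deleteEdges {s(v, w)}).Reachable v w := hr
    rcases v with x | c <;> rcases w with y | d
    · obtain ⟨h1, h2⟩ := (attach_adj_inl_inl).1 hadj
      exact attach_bridge_old hT hmt h1 h2 hr'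
    · obtain ⟨rfl, hor⟩ := (attach_adj_inl_inr).1 hadj
      rcases hor with rfl | rfl
      · exact attach_bridge_mi hNm hr'
      · exact attach_bridge_ti hT hmt hr'
    · obtain ⟨rfl, hor⟩ := (attach_adj_inr_inl).1 hadj
      rcases hor with rfl | rfl
      · exact attach_bridge_mi hNm (by rw [Sym2.eq_swap] at hr'; exact hr'.symm)
      · exact attach_bridge_ti hT hmt (by rw [Sym2.eq_swap] at hr'; exact hr'.symm)
    · have hcd := (attach_adj_inr_inr).1 hadj
      cases c <;> cases d
      · exact hcd rfl
      · exact attach_bridge_in hr'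
      · exact attach_bridge_in (by rw [Sym2.eq_swap] at hr'; exact hr'.symm)
      · exact hcd rfl
end AttachTree
section Existence

lemma predecomp_one (a : ℕ) :
    ∃ (W : Type) (_ : Fintype W) (T : SimpleGraph W) (φ : W → ℕ),
      IsCubicTree T ∧ Set.BijOn φ {l | IsTreeLeaf T l} ↑({a} : Finset ℕ) := by
  have hbotleaf : ∀ v : PUnit, IsTreeLeaf (⊥ : SimpleGraph PUnit) v := by
    intro v
    unfold IsTreeLeaf
    have : (⊥ : SimpleGraph PUnit).neighborSet v = ∅ := by ext w; simp
    rw [this]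
    simp
  refine ⟨PUnit, inferInstance, ⊥, fun _ => a, ⟨⟨?_, SimpleGraph.isAcyclic_bot⟩, ?_⟩, ?_⟩
  · constructor
    intro u v
    rw [Subsingleton.elim u v]
  · intro v hv
    exact absurd (hbotleaf v) hv
  · constructor
    · intro x _
      simp
    refine ⟨fun x _ y _ _ => Subsingleton.elim x y, fun s hs => ?_⟩
    simp only [Finset.coe_singleton, Set.mem_singleton_iff] at hs
    exact ⟨PUnit.unit, hbotleaf _, hs.symm⟩

lemma predecomp_two {p q : ℕ} (hpq : p ≠ q) :
    ∃ (W : Type) (_ : Fintype W) (T : SimpleGraph W) (φ : W → ℕ),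
      IsCubicTree T ∧ Set.BijOn φ {l | IsTreeLeaf T l} ↑({p, q} : Finset ℕ) := by
  have hnbr : ∀ v : Bool, (⊤ : SimpleGraph Bool).neighborSet v = {!v} := by
    intro v
    ext w
    cases v <;> cases w <;> simp [SimpleGraph.mem_neighborSet]
  have hleaf : ∀ v : Bool, IsTreeLeaf (⊤ : SimpleGraph Bool) v := by
    intro v
    unfold IsTreeLeaf
    rw [hnbr v, Set.ncard_singleton]
  refine ⟨Bool, inferInstance, ⊤, fun b => bif b then p else q,
    ⟨⟨?_, ?_⟩, fun v hv => absurd (hleaf v) hv⟩, ?_, ?_, ?_⟩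
  · constructor
    intro u v
    by_cases h : u = v
    · rw [h]
    · exact SimpleGraph.Adj.reachable h
  · intro v c hc
    have h3 := hc.three_le_length
    have hnd := hc.support_nodup
    have hlen : c.support.tail.length = c.length := by
      rw [List.length_tail, c.length_support]
      omega
    have := hnd.length_le_card
    rw [hlen] at this
    simp only [Fintype.card_bool] at this
    omega
  · intro x _
    cases x <;> simp
  · intro x _ y _ hxy
    cases x <;> cases y <;> simp_all [hpq, hpq.symm]
  · intro s hs
    simp only [Finset.coe_insert, Finset.coe_singleton, Set.mem_insert_iff,
      Set.mem_singleton_iff] at hs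
    rcases hs with rfl | rfl
    · exact ⟨true, hleaf true, rfl⟩
    · exact ⟨false, hleaf false, rfl⟩

lemma exists_predecomp (S : Finset ℕ) (hS : S.Nonempty) :
    ∃ (W : Type) (_ : Fintype W) (T : SimpleGraph W) (φ : W → ℕ),
      IsCubicTree T ∧ Set.BijOn φ {l | IsTreeLeaf T l} ↑S := by
  induction S using Finset.strongInduction with
  | _ S ih =>
  by_cases h1 : S.card = 1
  · obtain ⟨a, rfl⟩ := Finset.card_eq_one.1 h1
    exact predecomp_one a
  by_cases h2 : S.card = 2
  · obtain ⟨p, q, hpq, rfl⟩ := Finset.card_eq_two.1 h2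
    exact predecomp_two hpq
  have h3 : 3 ≤ S.card := by
    have := hS.card_pos
    omega
  obtain ⟨u, hu⟩ := hS
  set S₀ := S.erase u with hS₀
  have hcard : S₀.card = S.card - 1 := Finset.card_erase_of_mem hu
  have hS₀card : 2 ≤ S₀.card := by omega
  have hS₀ne : S₀.Nonempty := Finset.card_pos.1 (by omega)
  obtain ⟨W, fin, T, φ, hcubic, hbij⟩ := ih S₀ (Finset.erase_ssubset hu) hS₀ne
  obtain ⟨p, hp, q, hq, hpq⟩ := Finset.one_lt_card.1 hS₀card
  obtain ⟨m, hmleaf, hmp⟩ := hbij.surjOn (by simpa using hp)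
  obtain ⟨m', hm'leaf, hm'q⟩ := hbij.surjOn (by simpa using hq)
  have hmm' : m ≠ m' := by
    rintro rfl
    exact hpq (hmp.symm.trans hm'q)
  have hconn : T.Connected := hcubic.1.isConnected
  obtain ⟨t, hmt⟩ := exists_nbr hconn hmm'
  have hNm : T.neighborSet m = {t} := leaf_nbr_set hmleaf hmt
  have htree' := attach_isTree hcubic.1 hNm hmt
  have hncard3 : ((attachGraph T m t).neighborSet (.inr false)).ncard = 3 := by
    rw [attach_nbr_inr_false]
    rw [Set.ncard_eq_three]
    exact ⟨_, _, _, by simp [hmt.ne], by simp, by simp, rfl⟩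
  have hleaftrue : IsTreeLeaf (attachGraph T m t) (.inr true) := by
    unfold IsTreeLeaf
    rw [attach_nbr_inr_true, Set.ncard_singleton]
  refine ⟨W ⊕ Bool, inferInstance, attachGraph T m t, Sum.elim φ fun _ => u,
    ⟨htree', ?_⟩, ?_⟩
  · rintro (x | c) hv
    · rw [attach_ncard_nbr_inl hNm hmt]
      refine hcubic.2 x fun hx => hv ?_
      rw [attach_leaf_inl hNm hmt]
      exact hx
    · cases c
      · exact hncard3
      · exact absurd hleaftrue hv
  · have hL : {l | IsTreeLeaf (attachGraph T m t) l} =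
        Sum.inl '' {l | IsTreeLeaf T l} ∪ {Sum.inr true} := by
      ext x
      rcases x with x | c
      · simp only [Set.mem_setOf_eq, Set.mem_union, Set.mem_image, Set.mem_singleton_iff]
        rw [attach_leaf_inl hNm hmt]
        constructor
        · intro hx; exact Or.inl ⟨x, hx, rfl⟩
        · rintro (⟨y, hy, hyx⟩ | hc)
          · cases hyx; exact hy
          · cases hc
      · cases c
        · simp only [Set.mem_setOf_eq, Set.mem_union, Set.mem_image, Set.mem_singleton_iff]
          constructor
          · intro hx
            exfalso
            unfold IsTreeLeaf at hx
            rw [hncard3] at hx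
            omega
          · rintro (⟨y, _, hc⟩ | hc) <;> cases hc
        · simp only [Set.mem_setOf_eq, Set.mem_union, Set.mem_image, Set.mem_singleton_iff]
          simp [hleaftrue]
    have hSins : S = insert u S₀ := (Finset.insert_erase hu).symm
    rw [hL, hSins, Finset.coe_insert]
    have huS₀ : u ∉ (S₀ : Set ℕ) := by simp [hS₀]
    constructor
    · rintro x (⟨y, hy, rfl⟩ | rfl)
      · exact Set.mem_insert_iff.2 (Or.inr (hbij.mapsTo hy))
      · exact Set.mem_insert _ _
    constructor
    · rintro x (⟨y, hy, rfl⟩ | rfl) z (⟨w, hw, rfl⟩ | rfl) hEq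
      · rw [hbij.injOn hy hw hEq]
      · exact absurd (hbij.mapsTo hy) (by rw [show φ y = u from hEq]; exact huS₀)
      · exact absurd (hbij.mapsTo hw) (by rw [show φ w = u from hEq.symm]; exact huS₀)
      · rfl
    · intro s hs
      rcases Set.mem_insert_iff.1 hs with rfl | hs
      · exact ⟨Sum.inr true, Or.inr rfl, rfl⟩
      · obtain ⟨x, hx, rfl⟩ := hbij.surjOn hs
        exact ⟨Sum.inl x, Or.inl ⟨x, hx, rfl⟩, rfl⟩

lemma exists_decomp (D : Dgraph) (h : D.verts.Nonempty) : Nonempty (CycleDecomp D) := by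
  obtain ⟨W, fin, T, φ, h1, h2⟩ := exists_predecomp D.verts h
  exact ⟨⟨W, fin, T, h1, φ, h2⟩⟩

end Existence
section ChordDef

variable {W : Type}

/-- The graph obtained from `T` by deleting vertices `l, t` and adding the chord `a b`. -/
def chordGraph (T : SimpleGraph W) (l t a b : W) (hab : a ≠ b) :
    SimpleGraph {x : W // x ≠ l ∧ x ≠ t} where
  Adj x y := T.Adj ↑x ↑y ∨ (↑x = a ∧ ↑y = b) ∨ (↑x = b ∧ ↑y = a)
  symm := by
    constructor
    rintro x y (h | ⟨h1, h2⟩ | ⟨h1, h2⟩)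
    · exact Or.inl h.symm
    · exact Or.inr (Or.inr ⟨h2, h1⟩)
    · exact Or.inr (Or.inl ⟨h2, h1⟩)
  loopless := by
    constructor
    rintro x (h | ⟨h1, h2⟩ | ⟨h1, h2⟩)
    · exact T.irrefl h
    · exact hab (h1.symm.trans h2)
    · exact hab (h2.symm.trans h1)

lemma chord_adj {T : SimpleGraph W} {l t a b : W} {hab : a ≠ b}
    {x y : {x : W // x ≠ l ∧ x ≠ t}} :
    (chordGraph T l t a b hab).Adj x y ↔
      T.Adj ↑x ↑y ∨ (↑x = a ∧ ↑y = b) ∨ (↑x = b ∧ ↑y = a) := Iff.rfl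

lemma sym2_val_eq {l t : W} {x y x' y' : {x : W // x ≠ l ∧ x ≠ t}}
    (h : s(x, y) = s(x', y')) : s((x : W), (y : W)) = s((x' : W), (y' : W)) := by
  rw [Sym2.eq_iff] at h ⊢
  rcases h with ⟨rfl, rfl⟩ | ⟨rfl, rfl⟩
  · exact Or.inl ⟨rfl, rfl⟩
  · exact Or.inr ⟨rfl, rfl⟩

lemma sym2_val_eq' {l t : W} {x y x' y' : {x : W // x ≠ l ∧ x ≠ t}}
    (h : s((x : W), (y : W)) = s((x' : W), (y' : W))) : s(x, y) = s(x', y') := by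
  rw [Sym2.eq_iff] at h ⊢
  rcases h with ⟨h1, h2⟩ | ⟨h1, h2⟩
  · exact Or.inl ⟨Subtype.ext h1, Subtype.ext h2⟩
  · exact Or.inr ⟨Subtype.ext h1, Subtype.ext h2⟩

end ChordDef

section ChordLemmas

variable {W : Type} [Fintype W] {T : SimpleGraph W} {l t a b : W}

section Basic

lemma chord_hlt (hNl : T.neighborSet l = {t}) : T.Adj l t := by
  have : t ∈ T.neighborSet l := by rw [hNl]; rfl
  exact this

lemma chord_hta (hNt : T.neighborSet t = {l, a, b}) : T.Adj t a := by
  have : a ∈ T.neighborSet t := by rw [hNt]; simp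
  exact this

lemma chord_htb (hNt : T.neighborSet t = {l, a, b}) : T.Adj t b := by
  have : b ∈ T.neighborSet t := by rw [hNt]; simp
  exact this

lemma chord_nbr_l (hNl : T.neighborSet l = {t}) {x : W} (h : T.Adj x l) : x = t := by
  have : x ∈ T.neighborSet l := h.symm
  rwa [hNl, Set.mem_singleton_iff] at this

lemma chord_nbr_t (hNt : T.neighborSet t = {l, a, b}) {x : W} (h : T.Adj x t) : x = l ∨ x = a ∨ x = b := by
  have : x ∈ T.neighborSet t := h.symm
  rwa [hNt] at this

lemma chord_hnab (hT : T.IsTree) (hNt : T.neighborSet t = {l, a, b}) : ¬ T.Adj a b := by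
  intro hadj
  have hta := chord_hta hNt
  have htb := chord_htb hNt
  have hbr := (SimpleGraph.isAcyclic_iff_forall_adj_isBridge.1 hT.IsAcyclic) hta
  rw [SimpleGraph.isBridge_iff] at hbr
  apply hbr
  have hat : a ≠ t := fun h => T.irrefl (h ▸ hta)
  have hbt : b ≠ t := fun h => T.irrefl (h ▸ htb)
  have hba : b ≠ a := fun h => T.irrefl (h ▸ hadj)
  have e1 : (T.deleteEdges {s(t, a)}).Adj t b := by
    rw [SimpleGraph.deleteEdges_adj]
    refine ⟨htb, ?_⟩
    simp only [Set.mem_singleton_iff, Sym2.eq_iff]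
    push_neg
    exact ⟨fun _ => hba, fun h => absurd h.symm hat⟩
  have e2 : (T.deleteEdges {s(t, a)}).Adj b a := by
    rw [SimpleGraph.deleteEdges_adj]
    refine ⟨hadj.symm, ?_⟩
    simp only [Set.mem_singleton_iff, Sym2.eq_iff]
    push_neg
    exact ⟨fun h => absurd h hbt, fun _ => hat⟩
  exact e1.reachable.trans e2.reachable

end Basic

end ChordLemmas
section ChordTransfer

variable {W : Type} [Fintype W] {T : SimpleGraph W} {l t a b : W}

/-- Hypothesis bundle for the leaf-suppression surgery. -/
structure ChordSetup (T : SimpleGraph W) (l t a b : W) : Prop where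
  tree : T.IsTree
  hNl : T.neighborSet l = {t}
  hNt : T.neighborSet t = {l, a, b}
  hla : l ≠ a
  hlb : l ≠ b
  hab : a ≠ b

namespace ChordSetup

lemma hlt (h : ChordSetup T l t a b) : T.Adj l t := chord_hlt h.hNl
lemma hta (h : ChordSetup T l t a b) : T.Adj t a := chord_hta h.hNt
lemma htb (h : ChordSetup T l t a b) : T.Adj t b := chord_htb h.hNt
lemma hat (h : ChordSetup T l t a b) : a ≠ t := fun hc => T.irrefl (hc ▸ h.hta)
lemma hbt (h : ChordSetup T l t a b) : b ≠ t := fun hc => T.irrefl (hc ▸ h.htb)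
lemma hnab (h : ChordSetup T l t a b) : ¬ T.Adj a b := chord_hnab h.tree h.hNt

/-- `a` as a vertex of the suppressed graph. -/
def A (h : ChordSetup T l t a b) : {x : W // x ≠ l ∧ x ≠ t} := ⟨a, h.hla.symm, h.hat⟩
/-- `b` as a vertex of the suppressed graph. -/
def B (h : ChordSetup T l t a b) : {x : W // x ≠ l ∧ x ≠ t} := ⟨b, h.hlb.symm, h.hbt⟩

/-- Generic downward reachability transfer. -/
lemma down (h : ChordSetup T l t a b) (E : Set (Sym2 W)) (E'' : Set (Sym2 {x : W // x ≠ l ∧ x ≠ t}))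
    (d : {x : W // x ≠ l ∧ x ≠ t}) (hd : (d : W) = a ∨ (d : W) = b)
    (Hold : ∀ x y : {x : W // x ≠ l ∧ x ≠ t}, T.Adj ↑x ↑y → s((x : W), (y : W)) ∉ E →
      s(x, y) ∉ E'')
    (Hdet : ∀ y : {x : W // x ≠ l ∧ x ≠ t}, ((y : W) = a ∨ (y : W) = b) → (y : W) ≠ (d : W) →
      s(t, (y : W)) ∉ E → s(d, y) ∉ E'')
    {x y : {x : W // x ≠ l ∧ x ≠ t}}
    (hr : (T.deleteEdges E).Reachable ↑x ↑y) :
    ((chordGraph T l t a b h.hab).deleteEdges E'').Reachable x y := by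
  classical
  set f : W → {x : W // x ≠ l ∧ x ≠ t} :=
    fun z => if hz : z ≠ l ∧ z ≠ t then ⟨z, hz⟩ else d with hf
  have hfx : ∀ x : {x : W // x ≠ l ∧ x ≠ t}, f ↑x = x := by
    intro x
    rw [hf]
    simp only
    rw [dif_pos x.2]
  have step : ∀ p q : W, T.Adj p q → s(p, q) ∉ E → (p ≠ l ∧ p ≠ t) → ¬(q ≠ l ∧ q ≠ t) →
      ((chordGraph T l t a b h.hab).deleteEdges E'').Reachable (f p) (f q) := by
    intro p q hadj hne hp hq
    push_neg at hq
    have hfp : f p = ⟨p, hp⟩ := by rw [hf]; simp only; rw [dif_pos hp]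
    by_cases hql : q = l
    · exact absurd (chord_nbr_l h.hNl (hql ▸ hadj)) hp.2
    · have hqt : q = t := hq hql
      have hfq : f q = d := by rw [hf]; simp only; rw [hqt, dif_neg (by simp)]
      have hne' : s(t, p) ∉ E := by
        rw [hqt] at hne
        rw [Sym2.eq_swap]
        exact hne
      have hadj' : T.Adj p t := hqt ▸ hadj
      rcases chord_nbr_t h.hNt hadj' with hc | hc | hc
      · exact absurd hc hp.1
      all_goals {
        by_cases hpd : p = (d : W)
        · have hsub : (⟨p, hp⟩ : {x : W // x ≠ l ∧ x ≠ t}) = d := Subtype.ext hpd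
          rw [hfp, hfq, hsub]
        · rw [hfp, hfq]
          refine SimpleGraph.Reachable.symm (SimpleGraph.Adj.reachable ?_)
          rw [SimpleGraph.deleteEdges_adj]
          constructor
          · rw [chord_adj]
            rcases hd with hda | hdb
            · rcases (by tauto : p = a ∨ p = b) with rfl | rfl
              · exact absurd hda.symm hpd
              · exact Or.inr (Or.inl ⟨hda, rfl⟩)
            · rcases (by tauto : p = a ∨ p = b) with rfl | rfl
              · exact Or.inr (Or.inr ⟨hdb, rfl⟩)
              · exact absurd hdb.symm hpd
          · exact Hdet ⟨p, hp⟩ (by tauto) hpd hne'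
      }
  have hper : ∀ p q : W, (T.deleteEdges E).Adj p q →
      ((chordGraph T l t a b h.hab).deleteEdges E'').Reachable (f p) (f q) := by
    intro p q hpq
    rw [SimpleGraph.deleteEdges_adj] at hpq
    obtain ⟨hadj, hne⟩ := hpq
    by_cases hp : p ≠ l ∧ p ≠ t <;> by_cases hq : q ≠ l ∧ q ≠ t
    · have hfp : f p = ⟨p, hp⟩ := by rw [hf]; simp only; rw [dif_pos hp]
      have hfq : f q = ⟨q, hq⟩ := by rw [hf]; simp only; rw [dif_pos hq]
      rw [hfp, hfq]
      refine SimpleGraph.Adj.reachable ?_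
      rw [SimpleGraph.deleteEdges_adj]
      exact ⟨Or.inl hadj, Hold ⟨p, hp⟩ ⟨q, hq⟩ hadj hne⟩
    · exact step p q hadj hne hp hq
    · exact (step q p hadj.symm (by rw [Sym2.eq_swap]; exact hne) hq hp).symm
    · push_neg at hp hq
      have hfp : f p = d := by
        rw [hf]; simp only; rw [dif_neg]; push_neg; exact hp
      have hfq : f q = d := by
        rw [hf]; simp only; rw [dif_neg]; push_neg; exact hq
      rw [hfp, hfq]
  have key := reach_map f hper hr
  rw [hfx, hfx] at key
  exact key

/-- Generic upward reachability transfer. -/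
lemma up (h : ChordSetup T l t a b) (E : Set (Sym2 W)) (E'' : Set (Sym2 {x : W // x ≠ l ∧ x ≠ t}))
    (Gold : ∀ x y : {x : W // x ≠ l ∧ x ≠ t}, T.Adj ↑x ↑y → s(x, y) ∉ E'' →
      s((x : W), (y : W)) ∉ E)
    (Gdet : ∀ x y : {x : W // x ≠ l ∧ x ≠ t},
      (((x : W) = a ∧ (y : W) = b) ∨ ((x : W) = b ∧ (y : W) = a)) → s(x, y) ∉ E'' →
      s((x : W), t) ∉ E ∧ s(t, (y : W)) ∉ E)
    {x y : {x : W // x ≠ l ∧ x ≠ t}}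
    (hr : ((chordGraph T l t a b h.hab).deleteEdges E'').Reachable x y) :
    (T.deleteEdges E).Reachable ↑x ↑y := by
  refine reach_map Subtype.val (fun p q hpq => ?_) hr
  rw [SimpleGraph.deleteEdges_adj] at hpq
  obtain ⟨hadj, hne⟩ := hpq
  rw [chord_adj] at hadj
  rcases hadj with hadj | hc | hc
  · refine SimpleGraph.Adj.reachable ?_
    rw [SimpleGraph.deleteEdges_adj]
    exact ⟨hadj, Gold p q hadj hne⟩
  · obtain ⟨h1, h2⟩ := Gdet p q (Or.inl hc) hne
    have e1 : (T.deleteEdges E).Adj ↑p t := by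
      rw [SimpleGraph.deleteEdges_adj]
      exact ⟨hc.1 ▸ h.hta.symm, h1⟩
    have e2 : (T.deleteEdges E).Adj t ↑q := by
      rw [SimpleGraph.deleteEdges_adj]
      exact ⟨hc.2 ▸ h.htb, h2⟩
    exact e1.reachable.trans e2.reachable
  · obtain ⟨h1, h2⟩ := Gdet p q (Or.inr hc) hne
    have e1 : (T.deleteEdges E).Adj ↑p t := by
      rw [SimpleGraph.deleteEdges_adj]
      exact ⟨hc.1 ▸ h.htb.symm, h1⟩
    have e2 : (T.deleteEdges E).Adj t ↑q := by
      rw [SimpleGraph.deleteEdges_adj]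
      exact ⟨hc.2 ▸ h.hta, h2⟩
    exact e1.reachable.trans e2.reachable

end ChordSetup

end ChordTransfer
section ChordMain

variable {W : Type} [Fintype W] {T : SimpleGraph W} {l t a b : W}

namespace ChordSetup

@[simp] lemma A_val (h : ChordSetup T l t a b) : ((h.A : {x : W // x ≠ l ∧ x ≠ t}) : W) = a := rfl
@[simp] lemma B_val (h : ChordSetup T l t a b) : ((h.B : {x : W // x ≠ l ∧ x ≠ t}) : W) = b := rfl

lemma conn_down (h : ChordSetup T l t a b) (x y : {x : W // x ≠ l ∧ x ≠ t}) :
    (chordGraph T l t a b h.hab).Reachable x y := by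
  have hr0 : (T.deleteEdges (∅ : Set (Sym2 W))).Reachable ↑x ↑y := by
    rw [SimpleGraph.deleteEdges_empty]
    exact h.tree.isConnected.preconnected ↑x ↑y
  have key := h.down ∅ ∅ h.A (Or.inl rfl)
    (fun _ _ _ _ => Set.notMem_empty _) (fun _ _ _ _ => Set.notMem_empty _) hr0
  rwa [SimpleGraph.deleteEdges_empty] at key

lemma chord_connected (h : ChordSetup T l t a b) :
    (chordGraph T l t a b h.hab).Connected := by
  have : Nonempty {x : W // x ≠ l ∧ x ≠ t} := ⟨h.A⟩
  exact SimpleGraph.Connected.mk h.conn_down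

lemma down_old (h : ChordSetup T l t a b) (x₀ y₀ : {x : W // x ≠ l ∧ x ≠ t})
    (hadj : T.Adj ↑x₀ ↑y₀) {x y : {x : W // x ≠ l ∧ x ≠ t}}
    (hr : (T.deleteEdges {s((x₀ : W), (y₀ : W))}).Reachable ↑x ↑y) :
    ((chordGraph T l t a b h.hab).deleteEdges {s(x₀, y₀)}).Reachable x y := by
  refine h.down _ _ h.A (Or.inl rfl) ?_ ?_ hr
  · intro x y hxy hne hmem
    rw [Set.mem_singleton_iff] at hmem
    exact hne (Set.mem_singleton_iff.2 (sym2_val_eq hmem))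
  · intro y hy hyd hnet hmem
    rw [Set.mem_singleton_iff] at hmem
    have hv := sym2_val_eq hmem
    rw [A_val] at hv
    have hyb : (y : W) = b := by
      rcases hy with hya | hyb
      · exact absurd hya (by simpa using hyd)
      · exact hyb
    rw [hyb] at hv
    rw [Sym2.eq_iff] at hv
    rcases hv with ⟨h1, h2⟩ | ⟨h1, h2⟩
    · exact h.hnab (h1 ▸ h2 ▸ hadj)
    · exact h.hnab (h1 ▸ h2 ▸ hadj.symm)

lemma up_old (h : ChordSetup T l t a b) (x₀ y₀ : {x : W // x ≠ l ∧ x ≠ t})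
    {x y : {x : W // x ≠ l ∧ x ≠ t}}
    (hr : ((chordGraph T l t a b h.hab).deleteEdges {s(x₀, y₀)}).Reachable x y) :
    (T.deleteEdges {s((x₀ : W), (y₀ : W))}).Reachable ↑x ↑y := by
  refine h.up _ _ ?_ ?_ hr
  · intro x y hxy hne hmem
    rw [Set.mem_singleton_iff] at hmem
    exact hne (Set.mem_singleton_iff.2 (sym2_val_eq' hmem))
  · intro x y hxy hne
    constructor
    · intro hmem
      rw [Set.mem_singleton_iff, Sym2.eq_iff] at hmem
      rcases hmem with ⟨h1, h2⟩ | ⟨h1, h2⟩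
      · exact y₀.2.2 h2.symm
      · exact x₀.2.2 h2.symm
    · intro hmem
      rw [Set.mem_singleton_iff, Sym2.eq_iff] at hmem
      rcases hmem with ⟨h1, h2⟩ | ⟨h1, h2⟩
      · exact x₀.2.2 h1.symm
      · exact y₀.2.2 h1.symm

lemma down_chord (h : ChordSetup T l t a b) {x y : {x : W // x ≠ l ∧ x ≠ t}}
    (hr : (T.deleteEdges {s(t, a)}).Reachable ↑x ↑y) :
    ((chordGraph T l t a b h.hab).deleteEdges {s(h.A, h.B)}).Reachable x y := by
  refine h.down _ _ h.B (Or.inr rfl) ?_ ?_ hr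
  · intro x y hxy hne hmem
    rw [Set.mem_singleton_iff] at hmem
    have hv := sym2_val_eq hmem
    rw [A_val, B_val, Sym2.eq_iff] at hv
    rcases hv with ⟨h1, h2⟩ | ⟨h1, h2⟩
    · exact h.hnab (h1 ▸ h2 ▸ hxy)
    · exact h.hnab (h1 ▸ h2 ▸ hxy.symm)
  · intro y hy hyd hnet
    exfalso
    apply hnet
    rw [Set.mem_singleton_iff]
    have hya : (y : W) = a := by
      rcases hy with hya | hyb
      · exact hya
      · exact absurd hyb (by simpa using hyd)
    rw [hya]

lemma up_chord (h : ChordSetup T l t a b) {x y : {x : W // x ≠ l ∧ x ≠ t}}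
    (hr : ((chordGraph T l t a b h.hab).deleteEdges {s(h.A, h.B)}).Reachable x y) :
    (T.deleteEdges {s(t, a)}).Reachable ↑x ↑y := by
  refine h.up _ _ ?_ ?_ hr
  · intro x y hxy hne hmem
    rw [Set.mem_singleton_iff, Sym2.eq_iff] at hmem
    rcases hmem with ⟨h1, h2⟩ | ⟨h1, h2⟩
    · exact x.2.2 h1
    · exact y.2.2 h2
  · intro x y hxy hne
    exfalso
    apply hne
    rw [Set.mem_singleton_iff]
    rcases hxy with ⟨h1, h2⟩ | ⟨h1, h2⟩
    · rw [show x = h.A from Subtype.ext h1, show y = h.B from Subtype.ext h2]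
    · rw [show x = h.B from Subtype.ext h1, show y = h.A from Subtype.ext h2, Sym2.eq_swap]

lemma adj_tb_del (h : ChordSetup T l t a b) : (T.deleteEdges {s(t, a)}).Adj t b := by
  rw [SimpleGraph.deleteEdges_adj]
  refine ⟨h.htb, ?_⟩
  rw [Set.mem_singleton_iff, Sym2.eq_iff]
  push_neg
  exact ⟨fun _ => fun hc => h.hab (hc.symm ▸ rfl), fun hc => absurd hc.symm h.hat⟩

lemma chord_acyclic (h : ChordSetup T l t a b) :
    (chordGraph T l t a b h.hab).IsAcyclic := by
  rw [SimpleGraph.isAcyclic_iff_forall_adj_isBridge]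
  intro x y hadj
  rw [SimpleGraph.isBridge_iff]
  refine fun hr => ?_
  have hr' : ((chordGraph T l t a b h.hab).deleteEdges {s(x, y)}).Reachable x y := hr
  rcases (chord_adj.1 hadj) with hxy | ⟨h1, h2⟩ | ⟨h1, h2⟩
  · have hbr := (SimpleGraph.isAcyclic_iff_forall_adj_isBridge.1 h.tree.IsAcyclic) hxy
    rw [SimpleGraph.isBridge_iff] at hbr
    exact hbr (h.up_old x y hr')
  · have hx : x = h.A := Subtype.ext h1
    have hy : y = h.B := Subtype.ext h2
    rw [hx, hy] at hr'
    have hre := h.up_chord hr'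
    have hbr := (SimpleGraph.isAcyclic_iff_forall_adj_isBridge.1 h.tree.IsAcyclic) h.hta
    rw [SimpleGraph.isBridge_iff] at hbr
    exact hbr (h.adj_tb_del.reachable.trans (by simpa using hre.symm))
  · have hx : x = h.B := Subtype.ext h1
    have hy : y = h.A := Subtype.ext h2
    rw [hx, hy] at hr'
    rw [show s(h.B, h.A) = s(h.A, h.B) from Sym2.eq_swap] at hr'
    have hre := h.up_chord hr'.symm
    have hbr := (SimpleGraph.isAcyclic_iff_forall_adj_isBridge.1 h.tree.IsAcyclic) h.hta
    rw [SimpleGraph.isBridge_iff] at hbr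
    exact hbr (h.adj_tb_del.reachable.trans (by simpa using hre.symm))

lemma chord_isTree (h : ChordSetup T l t a b) :
    (chordGraph T l t a b h.hab).IsTree := ⟨h.chord_connected, h.chord_acyclic⟩

end ChordSetup

end ChordMain
section ChordDegrees

variable {W : Type} [Fintype W] {T : SimpleGraph W} {l t a b : W}

namespace ChordSetup

lemma nbr_val_of_ne (h : ChordSetup T l t a b) (x : {x : W // x ≠ l ∧ x ≠ t})
    (hxa : (x : W) ≠ a) (hxb : (x : W) ≠ b) :
    Subtype.val '' ((chordGraph T l t a b h.hab).neighborSet x) = T.neighborSet ↑x := by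
  ext y
  constructor
  · rintro ⟨p, hp, rfl⟩
    rcases (chord_adj (hab := h.hab)).1 hp with hadj | ⟨h1, _⟩ | ⟨h1, _⟩
    · exact hadj
    · exact absurd h1 hxa
    · exact absurd h1 hxb
  · intro hy
    have hyl : y ≠ l := fun hc => x.2.2 (chord_nbr_l h.hNl (hc ▸ hy))
    have hyt : y ≠ t := by
      intro hc
      rcases chord_nbr_t h.hNt (hc ▸ hy) with h1 | h1 | h1
      · exact x.2.1 h1
      · exact hxa h1
      · exact hxb h1
    exact ⟨⟨y, hyl, hyt⟩, Or.inl hy, rfl⟩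

lemma nbr_val_a (h : ChordSetup T l t a b) (x : {x : W // x ≠ l ∧ x ≠ t})
    (hxa : (x : W) = a) :
    Subtype.val '' ((chordGraph T l t a b h.hab).neighborSet x) =
      insert b (T.neighborSet a \ {t}) := by
  ext y
  constructor
  · rintro ⟨p, hp, rfl⟩
    rcases (chord_adj (hab := h.hab)).1 hp with hadj | ⟨_, h2⟩ | ⟨h1, _⟩
    · exact Set.mem_insert_iff.2 (Or.inr ⟨hxa ▸ hadj, p.2.2⟩)
    · exact Set.mem_insert_iff.2 (Or.inl h2)
    · exact absurd (hxa ▸ h1 : a = b).symm h.hab.symm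
  · intro hy
    rcases Set.mem_insert_iff.1 hy with rfl | ⟨hyNa, hyt⟩
    · exact ⟨h.B, (chord_adj (hab := h.hab)).2 (Or.inr (Or.inl ⟨hxa, rfl⟩)), rfl⟩
    · have hyl : y ≠ l := fun hc => h.hat (chord_nbr_l h.hNl (hc ▸ hyNa))
      exact ⟨⟨y, hyl, hyt⟩, Or.inl (by rw [hxa]; exact hyNa), rfl⟩

lemma nbr_val_b (h : ChordSetup T l t a b) (x : {x : W // x ≠ l ∧ x ≠ t})
    (hxb : (x : W) = b) :
    Subtype.val '' ((chordGraph T l t a b h.hab).neighborSet x) =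
      insert a (T.neighborSet b \ {t}) := by
  ext y
  constructor
  · rintro ⟨p, hp, rfl⟩
    rcases (chord_adj (hab := h.hab)).1 hp with hadj | ⟨h1, _⟩ | ⟨_, h2⟩
    · exact Set.mem_insert_iff.2 (Or.inr ⟨hxb ▸ hadj, p.2.2⟩)
    · exact absurd (hxb ▸ h1 : b = a).symm h.hab
    · exact Set.mem_insert_iff.2 (Or.inl h2)
  · intro hy
    rcases Set.mem_insert_iff.1 hy with rfl | ⟨hyNb, hyt⟩
    · exact ⟨h.A, (chord_adj (hab := h.hab)).2 (Or.inr (Or.inr ⟨hxb, rfl⟩)), rfl⟩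
    · have hyl : y ≠ l := fun hc => h.hbt (chord_nbr_l h.hNl (hc ▸ hyNb))
      exact ⟨⟨y, hyl, hyt⟩, Or.inl (by rw [hxb]; exact hyNb), rfl⟩

lemma ncard_nbr (h : ChordSetup T l t a b) (x : {x : W // x ≠ l ∧ x ≠ t}) :
    ((chordGraph T l t a b h.hab).neighborSet x).ncard = (T.neighborSet (x : W)).ncard := by
  rw [← Set.ncard_image_of_injective _ Subtype.val_injective]
  by_cases hxa : (x : W) = a
  · rw [nbr_val_a h x hxa, hxa]
    have hbmem : b ∉ T.neighborSet a \ {t} := by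
      rintro ⟨hc, _⟩
      exact h.hnab hc
    have hmem : t ∈ T.neighborSet a := by
      rw [SimpleGraph.mem_neighborSet]
      exact h.hta.symm
    rw [Set.ncard_insert_of_notMem hbmem (Set.toFinite _),
      Set.ncard_diff_singleton_add_one hmem (Set.toFinite _)]
  by_cases hxb : (x : W) = b
  · rw [nbr_val_b h x hxb, hxb]
    have hamem : a ∉ T.neighborSet b \ {t} := by
      rintro ⟨hc, _⟩
      exact h.hnab hc.symm
    have hmem : t ∈ T.neighborSet b := by
      rw [SimpleGraph.mem_neighborSet]
      exact h.htb.symm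
    rw [Set.ncard_insert_of_notMem hamem (Set.toFinite _),
      Set.ncard_diff_singleton_add_one hmem (Set.toFinite _)]
  · rw [nbr_val_of_ne h x hxa hxb]

lemma leaf_iff (h : ChordSetup T l t a b) (x : {x : W // x ≠ l ∧ x ≠ t}) :
    IsTreeLeaf (chordGraph T l t a b h.hab) x ↔ IsTreeLeaf T (x : W) := by
  unfold IsTreeLeaf
  rw [ncard_nbr h x]

lemma t_not_leaf (h : ChordSetup T l t a b) : ¬ IsTreeLeaf T t := by
  unfold IsTreeLeaf
  rw [h.hNt, Set.ncard_eq_three.2 ⟨l, a, b, h.hla, h.hlb, h.hab, rfl⟩]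
  omega

lemma chord_cubic (h : ChordSetup T l t a b) (hcubic : IsCubicTree T) :
    IsCubicTree (chordGraph T l t a b h.hab) := by
  refine ⟨h.chord_isTree, fun x hx => ?_⟩
  rw [ncard_nbr h x]
  refine hcubic.2 (x : W) fun hc => hx ?_
  rw [leaf_iff h x]
  exact hc

end ChordSetup

end ChordDegrees
section Surgery

/-- Delete a vertex (and all incident arcs) from a digraph. -/
noncomputable def Dgraph.eraseVert (D : Dgraph) (v : ℕ) : Dgraph where
  verts := D.verts.erase v
  arcs := D.arcs.filter fun a => a.1 ≠ v ∧ a.2 ≠ v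
  arcs_mem := by
    intro a ha
    rw [Finset.mem_filter] at ha
    obtain ⟨h1, h2, h3⟩ := ha
    exact ⟨Finset.mem_erase.2 ⟨h2, (D.arcs_mem a h1).1⟩,
      Finset.mem_erase.2 ⟨h3, (D.arcs_mem a h1).2⟩⟩
  no_loops := fun a ha => D.no_loops a (Finset.mem_filter.1 ha).1

lemma Dgraph.eraseVert_isSubgraph (D : Dgraph) (v : ℕ) : (D.eraseVert v).IsSubgraph D :=
  ⟨Finset.erase_subset _ _, Finset.filter_subset _ _⟩

lemma surgery (D : Dgraph) (c : CycleDecomp D) (v : ℕ) (hv : v ∈ D.verts)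
    (hcard : 3 ≤ D.verts.card) :
    ∃ c'' : CycleDecomp (D.eraseVert v), c''.width ≤ c.width := by
  classical
  letI := c.fin
  obtain ⟨l, hlleaf, hlv⟩ := c.bij.surjOn (show v ∈ (D.verts : Set ℕ) from hv)
  have hcard2 : 2 ≤ (D.verts.erase v).card := by
    rw [Finset.card_erase_of_mem hv]
    omega
  obtain ⟨p, hp, q, hq, hpq⟩ := Finset.one_lt_card.1 hcard2
  obtain ⟨mp, hmpleaf, hmpv⟩ := c.bij.surjOn
    (show p ∈ (D.verts : Set ℕ) from Finset.mem_of_mem_erase hp)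
  obtain ⟨mq, hmqleaf, hmqv⟩ := c.bij.surjOn
    (show q ∈ (D.verts : Set ℕ) from Finset.mem_of_mem_erase hq)
  have hpv : p ≠ v := (Finset.mem_erase.1 hp).1
  have hqv : q ≠ v := (Finset.mem_erase.1 hq).1
  have hlmp : l ≠ mp := by
    rintro rfl
    exact hpv (hmpv.symm.trans hlv)
  have hmpmq : mp ≠ mq := by
    rintro rfl
    exact hpq (hmpv.symm.trans hmqv)
  obtain ⟨t, hlt⟩ := exists_nbr c.cubic.1.isConnected hlmp
  have hNl : c.T.neighborSet l = {t} := leaf_nbr_set hlleaf hlt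
  have htnotleaf : ¬ IsTreeLeaf c.T t := by
    intro hleaf
    have hNt1 : c.T.neighborSet t = {l} := leaf_nbr_set hleaf hlt.symm
    have hex : ∃ m, m ≠ l ∧ m ≠ t := by
      by_cases hmp : mp = t
      · refine ⟨mq, ?_, ?_⟩
        · rintro rfl
          exact hqv (hmqv.symm.trans hlv)
        · rw [← hmp]
          exact fun hc => hmpmq hc.symm
      · exact ⟨mp, hlmp.symm, hmp⟩
    obtain ⟨m, hml, hmt⟩ := hex
    have hclosed : ∀ x ∈ ({l, t} : Set c.W), ∀ y, c.T.Adj x y → y ∈ ({l, t} : Set c.W) := by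
      rintro x (rfl | hx) y hxy
      · have : y ∈ c.T.neighborSet x := hxy
        rw [hNl, Set.mem_singleton_iff] at this
        exact Or.inr this
      · rw [Set.mem_singleton_iff] at hx
        subst hx
        have : y ∈ c.T.neighborSet x := hxy
        rw [hNt1, Set.mem_singleton_iff] at this
        exact Or.inl this
    have := reach_closed hclosed (Or.inl rfl) (c.cubic.1.isConnected.preconnected l m)
    rcases this with hc | hc
    · exact hml hc
    · exact hmt (Set.mem_singleton_iff.1 hc)
  have h3 : (c.T.neighborSet t).ncard = 3 := c.cubic.2 t htnotleaf
  obtain ⟨x, y, z, hxy, hxz, hyz, hset⟩ := Set.ncard_eq_three.1 h3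
  have hlmem : l ∈ c.T.neighborSet t := hlt.symm
  obtain ⟨a, b, ha, hb, hab, hNt⟩ :
      ∃ a b, l ≠ a ∧ l ≠ b ∧ a ≠ b ∧ c.T.neighborSet t = {l, a, b} := by
    rw [hset] at hlmem
    rcases hlmem with rfl | hl2
    · exact ⟨y, z, hxy, hxz, hyz, hset⟩
    rcases hl2 with rfl | hl3
    · refine ⟨x, z, hxy.symm, hyz, hxz, ?_⟩
      rw [hset]
      ext w
      simp only [Set.mem_insert_iff, Set.mem_singleton_iff]
      tauto
    · rw [Set.mem_singleton_iff] at hl3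
      subst hl3
      refine ⟨x, y, hxz.symm, hyz.symm, hxy, ?_⟩
      rw [hset]
      ext w
      simp only [Set.mem_insert_iff, Set.mem_singleton_iff]
      tauto
  have setup : ChordSetup c.T l t a b := ⟨c.cubic.1, hNl, hNt, ha, hb, hab⟩
  set W'' := {x : c.W // x ≠ l ∧ x ≠ t} with hW''
  set T'' := chordGraph c.T l t a b setup.hab with hT''
  set φ'' : W'' → ℕ := fun x => c.φ ↑x with hφ''
  have hml_of : ∀ m : c.W, IsTreeLeaf c.T m → c.φ m ≠ v → m ≠ l := by
    intro m _ hmv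
    rintro rfl
    exact hmv hlv
  have bij'' : Set.BijOn φ'' {x : W'' | IsTreeLeaf T'' x} ((D.eraseVert v).verts : Set ℕ) := by
    have hco : ((D.eraseVert v).verts : Set ℕ) = (D.verts : Set ℕ) \ {v} := by
      show ((D.verts.erase v : Finset ℕ) : Set ℕ) = _
      rw [Finset.coe_erase]
    rw [hco]
    refine ⟨?_, ?_, ?_⟩
    · intro m hm
      rw [Set.mem_setOf_eq, setup.leaf_iff] at hm
      refine ⟨c.bij.mapsTo hm, ?_⟩
      rw [Set.mem_singleton_iff]
      intro hc
      exact m.2.1 (c.bij.injOn hm hlleaf (hc.trans hlv.symm))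
    · intro m hm m' hm' hEq
      rw [Set.mem_setOf_eq, setup.leaf_iff] at hm hm'
      exact Subtype.ext (c.bij.injOn hm hm' hEq)
    · rintro s ⟨hs, hsv⟩
      rw [Set.mem_singleton_iff] at hsv
      obtain ⟨m, hmleaf, rfl⟩ := c.bij.surjOn hs
      have hml : m ≠ l := hml_of m hmleaf hsv
      have hmt : m ≠ t := fun hc => htnotleaf (hc ▸ hmleaf)
      exact ⟨⟨m, hml, hmt⟩, by rw [Set.mem_setOf_eq, setup.leaf_iff]; exact hmleaf, rfl⟩
  refine ⟨⟨W'', inferInstance, T'', setup.chord_cubic c.cubic, φ'', bij''⟩, ?_⟩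
  -- width bound
  have shore_eq : ∀ (x y : W'') (x' y' : c.W),
      (∀ m : W'', ((T''.deleteEdges {s(x, y)}).Reachable x m ↔
        (c.T.deleteEdges {s(x', y')}).Reachable x' ↑m)) →
      treeShore T'' φ'' x y = treeShore c.T c.φ x' y' \ {v} := by
    intro x y x' y' hiff
    unfold treeShore
    ext s
    constructor
    · rintro ⟨m, ⟨hmleaf, hmreach⟩, rfl⟩
      refine ⟨⟨↑m, ⟨(setup.leaf_iff m).1 hmleaf, (hiff m).1 hmreach⟩, rfl⟩, ?_⟩
      rw [Set.mem_singleton_iff]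
      intro hc
      exact m.2.1 (c.bij.injOn ((setup.leaf_iff m).1 hmleaf) hlleaf (hc.trans hlv.symm))
    · rintro ⟨⟨m, ⟨hmleaf, hmreach⟩, rfl⟩, hnv⟩
      rw [Set.mem_singleton_iff] at hnv
      have hml : m ≠ l := hml_of m hmleaf hnv
      have hmt : m ≠ t := fun hc => htnotleaf (hc ▸ hmleaf)
      exact ⟨⟨m, hml, hmt⟩, ⟨(setup.leaf_iff ⟨m, hml, hmt⟩).2 hmleaf,
        (hiff ⟨m, hml, hmt⟩).2 hmreach⟩, rfl⟩
  have wbound : ∀ (x' y' : c.W), c.T.Adj x' y' →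
      D.cycPorosity (treeShore c.T c.φ x' y') ≤ c.width := by
    intro x' y' hadj
    have hwidth : c.width = Finset.univ.sup (fun p : c.W × c.W =>
        if c.T.Adj p.1 p.2 then D.cycPorosity (treeShore c.T c.φ p.1 p.2) else 0) := rfl
    rw [hwidth]
    simpa only [if_pos hadj] using Finset.le_sup (f := fun p : c.W × c.W =>
      if c.T.Adj p.1 p.2 then D.cycPorosity (treeShore c.T c.φ p.1 p.2) else 0)
      (Finset.mem_univ (x', y'))
  have hporo : ∀ (x y : W'') (x' y' : c.W), c.T.Adj x' y' →
      treeShore T'' φ'' x y = treeShore c.T c.φ x' y' \ {v} →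
      (D.eraseVert v).cycPorosity (treeShore T'' φ'' x y) ≤ c.width := by
    intro x y x' y' hadj hsh
    rw [hsh]
    have hcg := (D.eraseVert v).cycPorosity_congr
      (X := treeShore c.T c.φ x' y' \ {v}) (Y := treeShore c.T c.φ x' y')
      (by
        intro u hu
        have huv : u ≠ v := (Finset.mem_erase.1 hu).1
        simp [huv])
    rw [hcg]
    exact le_trans (Dgraph.cycPorosity_mono (D.eraseVert_isSubgraph v) _) (wbound x' y' hadj)
  unfold CycleDecomp.width
  apply Finset.sup_le
  intro pr _
  by_cases hadj : T''.Adj pr.1 pr.2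
  · rw [if_pos hadj]
    set x := pr.1
    set y := pr.2
    rcases (chord_adj (hab := setup.hab)).1 hadj with hxy | ⟨h1, h2⟩ | ⟨h1, h2⟩
    · refine hporo x y ↑x ↑y hxy (shore_eq x y ↑x ↑y fun m => ?_)
      exact ⟨fun hr => setup.up_old x y hr, fun hr => setup.down_old x y hxy hr⟩
    · have hx : x = setup.A := Subtype.ext h1
      have hy : y = setup.B := Subtype.ext h2
      have hswap : s(a, t) = s(t, a) := Sym2.eq_swap
      refine hporo x y a t setup.hta.symm (shore_eq x y a t fun m => ?_)
      rw [hx, hy, hswap]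
      constructor
      · intro hr
        have := setup.up_chord hr
        simpa using this
      · intro hr
        exact setup.down_chord (by simpa using hr)
    · have hx : x = setup.B := Subtype.ext h1
      have hy : y = setup.A := Subtype.ext h2
      refine hporo x y t a setup.hta (shore_eq x y t a fun m => ?_)
      rw [hx, hy, show s(setup.B, setup.A) = s(setup.A, setup.B) from Sym2.eq_swap]
      constructor
      · intro hr
        have hba := setup.up_chord hr
        exact setup.adj_tb_del.reachable.trans (by simpa using hba)
      · intro hr
        have hbm : (c.T.deleteEdges {s(t, a)}).Reachable b ↑m :=
          (setup.adj_tb_del.reachable.symm).trans hr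
        exact setup.down_chord (by simpa using hbm)
  · rw [if_neg hadj]
    exact Nat.zero_le _

end Surgery
section Assembly

lemma exists_decomp_width_zero (D : Dgraph) {w : ℕ} (hw : D.verts = {w}) :
    ∃ c : CycleDecomp D, c.width = 0 := by
  have hbotleaf : ∀ v : PUnit, IsTreeLeaf (⊥ : SimpleGraph PUnit) v := by
    intro v
    unfold IsTreeLeaf
    have : (⊥ : SimpleGraph PUnit).neighborSet v = ∅ := by ext u; simp
    rw [this]
    simp
  have hcubic : IsCubicTree (⊥ : SimpleGraph PUnit) := by
    refine ⟨⟨?_, SimpleGraph.isAcyclic_bot⟩, fun v hv => absurd (hbotleaf v) hv⟩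
    constructor
    intro u v
    rw [Subsingleton.elim u v]
  have hbij : Set.BijOn (fun _ : PUnit => w) {l | IsTreeLeaf (⊥ : SimpleGraph PUnit) l}
      (D.verts : Set ℕ) := by
    rw [hw]
    refine ⟨fun x _ => by simp, fun x _ y _ _ => Subsingleton.elim x y, fun s hs => ?_⟩
    simp only [Finset.coe_singleton, Set.mem_singleton_iff] at hs
    exact ⟨PUnit.unit, hbotleaf _, hs.symm⟩
  refine ⟨⟨PUnit, inferInstance, ⊥, hcubic, fun _ => w, hbij⟩, ?_⟩
  refine Nat.le_zero.1 (Finset.sup_le fun p _ => ?_)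
  rw [if_neg (by simp)]

lemma key_step : ∀ (n : ℕ) (D D' : Dgraph), D'.IsSubgraph D →
    (D.verts \ D'.verts).card = n → D'.verts.Nonempty →
    ∀ c : CycleDecomp D, ∃ c' : CycleDecomp D', c'.width ≤ c.width := by
  intro n
  induction n with
  | zero =>
    intro D D' h hcount _ c
    have hsub : D.verts ⊆ D'.verts := by
      rw [← Finset.sdiff_eq_empty_iff_subset]
      exact Finset.card_eq_zero.1 hcount
    have hEq : D'.verts = D.verts := Finset.Subset.antisymm h.1 hsub
    letI := c.fin
    have hbij' : Set.BijOn c.φ {l | IsTreeLeaf c.T l} (D'.verts : Set ℕ) := by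
      rw [hEq]
      exact c.bij
    refine ⟨⟨c.W, c.fin, c.T, c.cubic, c.φ, hbij'⟩, ?_⟩
    unfold CycleDecomp.width
    apply Finset.sup_le
    intro p _
    by_cases hadj : c.T.Adj p.1 p.2
    · rw [if_pos hadj]
      have hle := Dgraph.cycPorosity_mono h (treeShore c.T c.φ p.1 p.2)
      refine le_trans hle ?_
      simpa only [if_pos hadj] using Finset.le_sup (f := fun p : c.W × c.W =>
        if c.T.Adj p.1 p.2 then D.cycPorosity (treeShore c.T c.φ p.1 p.2) else 0)
        (Finset.mem_univ p)
    · rw [if_neg hadj]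
      exact Nat.zero_le _
  | succ n ih =>
    intro D D' h hcount hne c
    have hex : (D.verts \ D'.verts).Nonempty := Finset.card_pos.1 (by omega)
    obtain ⟨v, hv⟩ := hex
    have hvD : v ∈ D.verts := (Finset.mem_sdiff.1 hv).1
    have hvD' : v ∉ D'.verts := (Finset.mem_sdiff.1 hv).2
    have hsub1 : D'.IsSubgraph (D.eraseVert v) := by
      constructor
      · intro s hs
        exact Finset.mem_erase.2 ⟨fun hc => hvD' (hc ▸ hs), h.1 hs⟩
      · intro arc harc
        refine Finset.mem_filter.2 ⟨h.2 harc, ?_, ?_⟩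
        · exact fun hc => hvD' (hc ▸ (D'.arcs_mem arc harc).1)
        · exact fun hc => hvD' (hc ▸ (D'.arcs_mem arc harc).2)
    have hcount1 : ((D.eraseVert v).verts \ D'.verts).card = n := by
      have hsets : (D.eraseVert v).verts \ D'.verts = (D.verts \ D'.verts).erase v := by
        show D.verts.erase v \ D'.verts = _
        ext u
        simp only [Finset.mem_sdiff, Finset.mem_erase]
        tauto
      rw [hsets, Finset.card_erase_of_mem hv, hcount]
      omega
    by_cases hbig : 3 ≤ D.verts.card
    · obtain ⟨c₁, hc₁⟩ := surgery D c v hvD hbig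
      obtain ⟨c', hc'⟩ := ih (D.eraseVert v) D' hsub1 hcount1 hne c₁
      exact ⟨c', le_trans hc' hc₁⟩
    · have hcard1 : D'.verts.card = 1 := by
        have h1 : D'.verts ⊆ D.verts.erase v := hsub1.1
        have h2 := Finset.card_le_card h1
        rw [Finset.card_erase_of_mem hvD] at h2
        have := hne.card_pos
        omega
      obtain ⟨w, hw⟩ := Finset.card_eq_one.1 hcard1
      obtain ⟨c₀, hc₀⟩ := exists_decomp_width_zero D' hw
      exact ⟨c₀, by rw [hc₀]; exact Nat.zero_le _⟩

end Assembly

/-- Cyclewidth is monotone under subgraphs. -/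
theorem cycleWidth_le_of_isSubgraph (D D' : Dgraph) (h : D'.IsSubgraph D) :
    cycleWidth D' ≤ cycleWidth D := by
  classical
  by_cases hD' : D'.verts.Nonempty
  · obtain ⟨u, hu⟩ := hD'
    have hDne : D.verts.Nonempty := ⟨u, h.1 hu⟩
    obtain ⟨c⟩ := exists_decomp D hDne
    have hset : {k | ∃ c : CycleDecomp D, c.width = k}.Nonempty := ⟨c.width, c, rfl⟩
    have hmem := Nat.sInf_mem hset
    obtain ⟨c₀, hc₀⟩ := hmem
    obtain ⟨c', hc'⟩ := key_step _ D D' h rfl ⟨u, hu⟩ c₀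
    calc cycleWidth D' ≤ c'.width := Nat.sInf_le ⟨c', rfl⟩
      _ ≤ c₀.width := hc'
      _ = cycleWidth D := hc₀
  · rw [Finset.not_nonempty_iff_eq_empty] at hD'
    have hempty : {k | ∃ c : CycleDecomp D', c.width = k} = ∅ := by
      ext k
      simp only [Set.mem_setOf_eq, Set.mem_empty_iff_false, iff_false]
      rintro ⟨c', _⟩
      exact no_decomp_of_empty hD' c'
    unfold cycleWidth
    rw [hempty, Nat.sInf_empty]
    exact Nat.zero_le _
end Porosity
end

section
/- Cyclewidth is monotone under butterfly minors: if D is a digraph and D' is a butterfly minor of D, then cw(D') ≤ cw(D). -/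
open scoped Classical

/-- The result of butterfly contracting the arc `(u, v)`, the contraction vertex being
named `x`; arcs formerly incident with `u` or `v` are inherited by `x`, without
creating loops. -/
noncomputable def butterflyContract (D : Dgraph) (u v x : ℕ) : Dgraph where
  verts := (D.verts.erase u).erase v ∪ {x}
  arcs := ((D.arcs.erase (u, v)).image fun p =>
      (if p.1 = u ∨ p.1 = v then x else p.1, if p.2 = u ∨ p.2 = v then x else p.2)).filter
      fun p => p.1 ≠ p.2
  arcs_mem := by
    intro a ha
    simp only [Finset.mem_filter, Finset.mem_image] at ha
    obtain ⟨⟨p, hp, rfl⟩, -⟩ := ha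
    have h1 := D.arcs_mem p (Finset.mem_of_mem_erase hp)
    constructor
    · by_cases h : p.1 = u ∨ p.1 = v
      · simp [h]
      · push_neg at h
        simp only [h.1, h.2, or_self, if_false, Finset.mem_union, Finset.mem_erase]
        exact Or.inl ⟨h.2, h.1, h1.1⟩
    · by_cases h : p.2 = u ∨ p.2 = v
      · simp [h]
      · push_neg at h
        simp only [h.1, h.2, or_self, if_false, Finset.mem_union, Finset.mem_erase]
        exact Or.inl ⟨h.2, h.1, h1.2⟩
  no_loops := fun a ha => (Finset.mem_filter.mp ha).2

/-- The arc `(u, v)` is butterfly-contractible: it is the only arc leaving `u` or the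
only arc entering `v`. -/
def Dgraph.ButterflyContractible (D : Dgraph) (u v : ℕ) : Prop :=
  (u, v) ∈ D.arcs ∧
  ((∀ w, (u, w) ∈ D.arcs → w = v) ∨ (∀ w, (w, v) ∈ D.arcs → w = u))

/-- One butterfly contraction step. -/
def ButterflyStep (D D' : Dgraph) : Prop :=
  ∃ u v x, D.ButterflyContractible u v ∧ x ∉ (D.verts.erase u).erase v ∧
    D' = butterflyContract D u v x

/-- `H` is a butterfly minor of `D`: it can be obtained from a subgraph of `D` by a
sequence of butterfly contractions. -/
def IsButterflyMinor (H D : Dgraph) : Prop :=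
  ∃ S : Dgraph, S.IsSubgraph D ∧ Relation.ReflTransGen ButterflyStep S H


namespace CwAux

variable {W W2 : Type}

lemma reach_map (G : SimpleGraph W) (G' : SimpleGraph W2) (f : W → W2)
    (h : ∀ a b, G.Adj a b → G'.Reachable (f a) (f b)) {a b : W}
    (hr : G.Reachable a b) : G'.Reachable (f a) (f b) := by
  obtain ⟨p⟩ := hr
  induction p with
  | nil => exact SimpleGraph.Reachable.refl _
  | cons hadj p ih => exact (h _ _ hadj).trans ih

lemma unreachable_of_isolated (G : SimpleGraph W) {a b : W}
    (h : G.neighborSet a = ∅) (hab : a ≠ b) : ¬ G.Reachable a b := by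
  rintro ⟨p⟩
  cases p with
  | nil => exact hab rfl
  | cons hadj q => exact absurd (Set.eq_empty_iff_forall_notMem.mp h _ hadj) not_false

lemma neighborSet_nonempty_of_connected (G : SimpleGraph W) {a b : W}
    (hr : G.Reachable a b) (hab : a ≠ b) : (G.neighborSet a).Nonempty := by
  obtain ⟨p⟩ := hr
  cases p with
  | nil => exact absurd rfl hab
  | cons hadj q => exact ⟨_, hadj⟩

/-- Key transfer lemma: reachability in `G` among vertices other than `l, n`
(where `l` is a pendant vertex attached to `n` and `n` has neighbours among
`{l, t1, t2}`) transfers to any relation `P` that is reflexive/symmetric/transitive,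
contains all `G`-edges avoiding `l, n`, and relates `t1` to `t2`. -/
lemma reach_transfer (G : SimpleGraph W) (l n t1 t2 : W) (P : W → W → Prop)
    (hnl : G.neighborSet l ⊆ {n}) (hnn : G.neighborSet n ⊆ {l, t1, t2})
    (ht1l : t1 ≠ l) (ht1n : t1 ≠ n) (ht2l : t2 ≠ l) (ht2n : t2 ≠ n)
    (Prefl : ∀ a, a ≠ l → a ≠ n → P a a)
    (Psymm : ∀ a b, P a b → P b a)
    (Ptrans : ∀ a b c, P a b → P b c → P a c)
    (Padj : ∀ a b, a ≠ l → a ≠ n → b ≠ l → b ≠ n → G.Adj a b → P a b)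
    (hT : P t1 t2) :
    ∀ a b, a ≠ l → a ≠ n → b ≠ l → b ≠ n → G.Reachable a b → P a b := by
  suffices H : ∀ k (b : W), b ≠ l → b ≠ n →
      ((∀ a, a ≠ l → a ≠ n → ∀ p : G.Walk a b, p.length ≤ k → P a b) ∧
       (∀ p : G.Walk n b, p.length ≤ k → ∃ z, (z = t1 ∨ z = t2) ∧ P z b)) by
    intro a b hal han hbl hbn hr
    obtain ⟨p⟩ := hr
    exact (H p.length b hbl hbn).1 a hal han p le_rfl
  intro k
  induction k using Nat.strong_induction_on with
  | _ k IH =>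
  intro b hbl hbn
  constructor
  · intro a hal han p hlen
    cases p with
    | nil => exact Prefl _ hal han
    | @cons _ y _ hadj q =>
      have hlq : q.length + 1 ≤ k := by simpa using hlen
      by_cases hyl : y = l
      · subst hyl
        exact absurd (hnl hadj.symm) han
      by_cases hyn : y = n
      · subst hyn
        have ha' : a = t1 ∨ a = t2 := by
          have := hnn hadj.symm
          simp only [Set.mem_insert_iff, Set.mem_singleton_iff] at this
          tauto
        obtain ⟨z, hz, hPzb⟩ := (IH (k-1) (by omega) b hbl hbn).2 q (by omega)
        have haz : P a z := by
          rcases ha' with rfl | rfl <;> rcases hz with rfl | rfl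
          · exact Prefl _ ht1l ht1n
          · exact hT
          · exact Psymm _ _ hT
          · exact Prefl _ ht2l ht2n
        exact Ptrans _ _ _ haz hPzb
      · exact Ptrans _ _ _ (Padj a y hal han hyl hyn hadj)
          ((IH (k-1) (by omega) b hbl hbn).1 y hyl hyn q (by omega))
  · intro p hlen
    cases p with
    | nil => exact absurd rfl hbn
    | @cons _ y _ hadj q =>
      have hlq : q.length + 1 ≤ k := by simpa using hlen
      have hy := hnn hadj
      simp only [Set.mem_insert_iff, Set.mem_singleton_iff] at hy
      rcases hy with rfl | rfl | rfl
      · cases q with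
        | nil => exact absurd rfl hbl
        | @cons _ z _ hadj2 q2 =>
          have hz : z = n := hnl hadj2
          subst hz
          have hlq2 : q2.length + 2 ≤ k := by simp at hlq ⊢; omega
          exact (IH (k-1) (by omega) b hbl hbn).2 q2 (by omega)
      · exact ⟨y, Or.inl rfl, (IH (k-1) (by omega) b hbl hbn).1 y ht1l ht1n q (by omega)⟩
      · exact ⟨y, Or.inr rfl, (IH (k-1) (by omega) b hbl hbn).1 y ht2l ht2n q (by omega)⟩

/-- Transfer lemma for removing a single pendant vertex `p0` attached to `l`. -/
lemma reach_transfer_leaf (G : SimpleGraph W) (p0 l : W) (P : W → W → Prop)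
    (hn : G.neighborSet p0 ⊆ {l})
    (Prefl : ∀ a, a ≠ p0 → P a a)
    (Ptrans : ∀ a b c, P a b → P b c → P a c)
    (Padj : ∀ a b, a ≠ p0 → b ≠ p0 → G.Adj a b → P a b) :
    ∀ a b, a ≠ p0 → b ≠ p0 → G.Reachable a b → P a b := by
  suffices H : ∀ k (b : W), b ≠ p0 →
      (∀ a, a ≠ p0 → ∀ p : G.Walk a b, p.length ≤ k → P a b) by
    intro a b ha hb hr
    obtain ⟨p⟩ := hr
    exact H p.length b hb a ha p le_rfl
  intro k
  induction k using Nat.strong_induction_on with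
  | _ k IH =>
  intro b hb a ha p hlen
  cases p with
  | nil => exact Prefl _ ha
  | @cons _ y _ hadj q =>
    have hlq : q.length + 1 ≤ k := by simpa using hlen
    by_cases hy : y = p0
    · subst hy
      have hal : a = l := hn hadj.symm
      cases q with
      | nil => exact absurd rfl hb
      | @cons _ z _ hadj2 q2 =>
        have hz : z = l := hn hadj2
        have hlq2 : q2.length + 2 ≤ k := by simp at hlq ⊢; omega
        have hza : z = a := hz.trans hal.symm
        subst hza
        exact IH (k-1) (by omega) b hb z ha q2 (by omega)
    · exact Ptrans _ _ _ (Padj a y ha hy hadj) (IH (k-1) (by omega) b hb y hy q (by omega))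

end CwAux

namespace CwAux

lemma mem_cutArcs {D : Dgraph} {X : Set ℕ} {p : ℕ × ℕ} :
    p ∈ D.cutArcs X ↔ p ∈ D.arcs ∧ ((p.1 ∈ X ∧ p.2 ∉ X) ∨ (p.1 ∉ X ∧ p.2 ∈ X)) := by
  simp [Dgraph.cutArcs]

lemma le_cycPorosity (D : Dgraph) (X : Set ℕ) (F : Finset (ℕ × ℕ))
    (hsub : F ⊆ D.arcs) (hfam : D.IsCycleFamily F) :
    (D.cutArcs X ∩ F).card ≤ D.cycPorosity X := by
  have hm : F ∈ D.arcs.powerset.filter (fun F => D.IsCycleFamily F) := by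
    simp [Finset.mem_filter, Finset.mem_powerset, hsub, hfam]
  unfold Dgraph.cycPorosity
  exact Finset.le_sup (f := fun F => (D.cutArcs X ∩ F).card) hm

lemma cycPorosity_le (D : Dgraph) (X : Set ℕ) (m : ℕ)
    (h : ∀ F, F ⊆ D.arcs → D.IsCycleFamily F → (D.cutArcs X ∩ F).card ≤ m) :
    D.cycPorosity X ≤ m := by
  unfold Dgraph.cycPorosity
  apply Finset.sup_le
  intro F hF
  simp only [Finset.mem_filter, Finset.mem_powerset] at hF
  exact h F hF.1 hF.2

lemma cycPorosity_le_of_arcs_subset {H D : Dgraph} (h : H.arcs ⊆ D.arcs) (X : Set ℕ) :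
    H.cycPorosity X ≤ D.cycPorosity X := by
  apply cycPorosity_le
  intro F hsub hfam
  have hfamD : D.IsCycleFamily F := ⟨hsub.trans h, hfam.2⟩
  refine le_trans (Finset.card_le_card ?_) (le_cycPorosity D X F (hsub.trans h) hfamD)
  intro p hp
  simp only [Finset.mem_inter, mem_cutArcs] at hp ⊢
  exact ⟨⟨h hp.1.1, hp.1.2⟩, hp.2⟩

lemma cutArcs_congr {D : Dgraph} {X Y : Set ℕ}
    (h : ∀ p ∈ D.arcs, (p.1 ∈ X ↔ p.1 ∈ Y) ∧ (p.2 ∈ X ↔ p.2 ∈ Y)) :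
    D.cutArcs X = D.cutArcs Y := by
  unfold Dgraph.cutArcs
  apply Finset.filter_congr
  intro p hp
  have := h p hp
  tauto

lemma cycPorosity_congr {D : Dgraph} {X Y : Set ℕ}
    (h : ∀ p ∈ D.arcs, (p.1 ∈ X ↔ p.1 ∈ Y) ∧ (p.2 ∈ X ↔ p.2 ∈ Y)) :
    D.cycPorosity X = D.cycPorosity Y := by
  unfold Dgraph.cycPorosity
  rw [cutArcs_congr h]

/-- Porosity only depends on arcs. -/
lemma cycPorosity_eq_of_arcs_eq {H D : Dgraph} (h : H.arcs = D.arcs) (X : Set ℕ) :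
    H.cycPorosity X = D.cycPorosity X := by
  unfold Dgraph.cycPorosity Dgraph.cutArcs Dgraph.IsCycleFamily
  rw [h]

lemma filter_pair_card {α : Type} [DecidableEq α] (P : α → Prop) [DecidablePred P] (p q : α)
    (h : p ≠ q) :
    (({p, q} : Finset α).filter P).card = (if P p then 1 else 0) + (if P q then 1 else 0) := by
  rw [Finset.filter_insert, Finset.filter_singleton]
  split_ifs <;> simp_all

lemma filter_triple_card {α : Type} [DecidableEq α] (P : α → Prop) [DecidablePred P] (p q r : α)
    (hpq : p ≠ q) (hpr : p ≠ r) (hqr : q ≠ r) :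
    (({p, q, r} : Finset α).filter P).card =
      (if P p then 1 else 0) + (if P q then 1 else 0) + (if P r then 1 else 0) := by
  rw [show ({p, q, r} : Finset α) = insert p {q, r} by rfl, Finset.filter_insert]
  by_cases h1 : P p
  · rw [if_pos h1, Finset.card_insert_of_notMem
      (by simp [Finset.mem_filter, hpq, hpr]), filter_pair_card P q r hqr, if_pos h1]
    omega
  · rw [if_neg h1, filter_pair_card P q r hqr, if_neg h1]
    omega

end CwAux

namespace CwAux

lemma mem_contract_arcs {D : Dgraph} {u v x : ℕ} {p : ℕ × ℕ} :
    p ∈ (butterflyContract D u v x).arcs ↔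
      p.1 ≠ p.2 ∧ ∃ q ∈ D.arcs.erase (u, v),
        (if q.1 = u ∨ q.1 = v then x else q.1, if q.2 = u ∨ q.2 = v then x else q.2) = p := by
  simp only [butterflyContract, Finset.mem_filter, Finset.mem_image]
  tauto

lemma x_cases {D : Dgraph} {u v x : ℕ} (hx : x ∉ (D.verts.erase u).erase v)
    (hxv : x ∈ D.verts) : x = u ∨ x = v := by
  simp only [Finset.mem_erase] at hx
  tauto

lemma contract_arc_not_x {D : Dgraph} {u v x : ℕ} {p : ℕ × ℕ}
    (hp : p ∈ (butterflyContract D u v x).arcs)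
    (h1 : p.1 ≠ x) (h2 : p.2 ≠ x) :
    p ∈ D.arcs ∧ p.1 ≠ u ∧ p.1 ≠ v ∧ p.2 ≠ u ∧ p.2 ≠ v := by
  rw [mem_contract_arcs] at hp
  obtain ⟨-, q, hq, hmap⟩ := hp
  have hq1 : ¬ (q.1 = u ∨ q.1 = v) := by
    intro h
    apply h1
    rw [← hmap]
    simp [h]
  have hq2 : ¬ (q.2 = u ∨ q.2 = v) := by
    intro h
    apply h2
    rw [← hmap]
    simp [h]
  have hp1 : p.1 = q.1 := by rw [← hmap]; simp [hq1]
  have hp2 : p.2 = q.2 := by rw [← hmap]; simp [hq2]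
  have hpq : p = q := Prod.ext hp1 hp2
  subst hpq
  push_neg at hq1 hq2
  exact ⟨Finset.mem_of_mem_erase hq, hq1.1, hq1.2, hq2.1, hq2.2⟩

lemma contract_arc_out_x {D : Dgraph} {u v x : ℕ} (hx : x ∉ (D.verts.erase u).erase v)
    {B : ℕ} (hp : (x, B) ∈ (butterflyContract D u v x).arcs) (hBx : B ≠ x) :
    B ≠ u ∧ B ≠ v ∧ ((u, B) ∈ D.arcs.erase (u, v) ∨ (v, B) ∈ D.arcs.erase (u, v)) := by
  rw [mem_contract_arcs] at hp
  obtain ⟨-, q, hq, hmap⟩ := hp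
  have hq2 : ¬ (q.2 = u ∨ q.2 = v) := by
    intro h
    apply hBx
    have : (if q.2 = u ∨ q.2 = v then x else q.2) = B := congrArg Prod.snd hmap
    rw [if_pos h] at this
    exact this.symm
  have hqB : q.2 = B := by
    have : (if q.2 = u ∨ q.2 = v then x else q.2) = B := congrArg Prod.snd hmap
    rwa [if_neg hq2] at this
  push_neg at hq2
  refine ⟨hqB ▸ hq2.1, hqB ▸ hq2.2, ?_⟩
  have h1 : (if q.1 = u ∨ q.1 = v then x else q.1) = x := congrArg Prod.fst hmap
  by_cases hc : q.1 = u ∨ q.1 = v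
  · rcases hc with hc | hc
    · left; rw [show (u, B) = q by rw [← hc, ← hqB]]; exact hq
    · right; rw [show (v, B) = q by rw [← hc, ← hqB]]; exact hq
  · exfalso
    rw [if_neg hc] at h1
    have hxverts : x ∈ D.verts := by
      rw [← h1]
      exact (D.arcs_mem q (Finset.mem_of_mem_erase hq)).1
    rcases x_cases hx hxverts with h | h <;> rw [← h1] at h <;> tauto

lemma contract_arc_in_x {D : Dgraph} {u v x : ℕ} (hx : x ∉ (D.verts.erase u).erase v)
    {A : ℕ} (hp : (A, x) ∈ (butterflyContract D u v x).arcs) (hAx : A ≠ x) :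
    A ≠ u ∧ A ≠ v ∧ ((A, u) ∈ D.arcs.erase (u, v) ∨ (A, v) ∈ D.arcs.erase (u, v)) := by
  rw [mem_contract_arcs] at hp
  obtain ⟨-, q, hq, hmap⟩ := hp
  have hq1 : ¬ (q.1 = u ∨ q.1 = v) := by
    intro h
    apply hAx
    have : (if q.1 = u ∨ q.1 = v then x else q.1) = A := congrArg Prod.fst hmap
    rw [if_pos h] at this
    exact this.symm
  have hqA : q.1 = A := by
    have : (if q.1 = u ∨ q.1 = v then x else q.1) = A := congrArg Prod.fst hmap
    rwa [if_neg hq1] at this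
  push_neg at hq1
  refine ⟨hqA ▸ hq1.1, hqA ▸ hq1.2, ?_⟩
  have h2 : (if q.2 = u ∨ q.2 = v then x else q.2) = x := congrArg Prod.snd hmap
  by_cases hc : q.2 = u ∨ q.2 = v
  · rcases hc with hc | hc
    · left; rw [show (A, u) = q by rw [← hc, ← hqA]]; exact hq
    · right; rw [show (A, v) = q by rw [← hc, ← hqA]]; exact hq
  · exfalso
    rw [if_neg hc] at h2
    have hxverts : x ∈ D.verts := by
      rw [← h2]
      exact (D.arcs_mem q (Finset.mem_of_mem_erase hq)).2
    rcases x_cases hx hxverts with h | h <;> rw [← h2] at h <;> tauto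

lemma inter_pair_card (s : Finset (ℕ × ℕ)) (p q : ℕ × ℕ) (h : p ≠ q) :
    (s ∩ {p, q}).card = (if p ∈ s then 1 else 0) + (if q ∈ s then 1 else 0) := by
  rw [Finset.inter_comm, ← Finset.filter_mem_eq_inter, filter_pair_card _ p q h]

lemma inter_triple_card (s : Finset (ℕ × ℕ)) (p q r : ℕ × ℕ)
    (hpq : p ≠ q) (hpr : p ≠ r) (hqr : q ≠ r) :
    (s ∩ {p, q, r}).card = (if p ∈ s then 1 else 0) + (if q ∈ s then 1 else 0)
      + (if r ∈ s then 1 else 0) := by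
  rw [Finset.inter_comm, ← Finset.filter_mem_eq_inter, filter_triple_card _ p q r hpq hpr hqr]

end CwAux

namespace CwAux

lemma contract_family_bound (D : Dgraph) (u v x A B : ℕ)
    (X' X₀ : Set ℕ)
    (hrest : ∀ w, w ≠ u → w ≠ v → w ≠ x → (w ∈ X' ↔ w ∈ X₀))
    (F' F₀ P : Finset (ℕ × ℕ))
    (hsub : F' ⊆ (butterflyContract D u v x).arcs)
    (hfam : (butterflyContract D u v x).IsCycleFamily F')
    (hF'eq : F' = F₀ ∪ {(A, x), (x, B)})
    (hAx : A ≠ x) (hBx : B ≠ x)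
    (hAu : A ≠ u) (hAv : A ≠ v) (hBu : B ≠ u) (hBv : B ≠ v)
    (hF₀ : ∀ p ∈ F₀, p.1 ≠ x ∧ p.2 ≠ x ∧ p ∈ D.arcs ∧ p.1 ≠ u ∧ p.1 ≠ v ∧ p.2 ≠ u ∧ p.2 ≠ v)
    (hPsub : ∀ p ∈ P, p ∈ D.arcs)
    (hPends : ∀ p ∈ P, p.1 = u ∨ p.1 = v ∨ p.2 = u ∨ p.2 = v)
    (hPout : ∀ w, w ≠ u → w ≠ v → (P.filter fun p => p.1 = w).card = if A = w then 1 else 0)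
    (hPin : ∀ w, w ≠ u → w ≠ v → (P.filter fun p => p.2 = w).card = if B = w then 1 else 0)
    (hPu : (P.filter fun p => p.1 = u).card ≤ 1 ∧
      (P.filter fun p => p.1 = u).card = (P.filter fun p => p.2 = u).card)
    (hPv : (P.filter fun p => p.1 = v).card ≤ 1 ∧
      (P.filter fun p => p.1 = v).card = (P.filter fun p => p.2 = v).card)
    (hcount : ((butterflyContract D u v x).cutArcs X' ∩ {(A, x), (x, B)}).card ≤
      (D.cutArcs X₀ ∩ P).card) :
    ((butterflyContract D u v x).cutArcs X' ∩ F').card ≤ D.cycPorosity X₀ := by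
  set D' := butterflyContract D u v x with hD'
  have hqr : ((A, x) : ℕ × ℕ) ≠ (x, B) := by
    intro h
    exact hAx (congrArg Prod.fst h)
  have hpairdisj : Disjoint F₀ ({(A, x), (x, B)} : Finset (ℕ × ℕ)) := by
    rw [Finset.disjoint_left]
    intro p hp hmem
    have h := hF₀ p hp
    simp only [Finset.mem_insert, Finset.mem_singleton] at hmem
    rcases hmem with rfl | rfl
    · exact h.2.1 rfl
    · exact h.1 rfl
  have hdisj : Disjoint F₀ P := by
    rw [Finset.disjoint_left]
    intro p hp hpP
    have h1 := hF₀ p hp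
    have h2 := hPends p hpP
    tauto
  -- the lifted family
  have hfamF : D.IsCycleFamily (F₀ ∪ P) := by
    constructor
    · intro p hp
      rcases Finset.mem_union.mp hp with hp | hp
      · exact (hF₀ p hp).2.2.1
      · exact hPsub p hp
    · intro w
      have key := hfam.2 w
      rw [hF'eq] at key
      simp only [Finset.filter_union] at key ⊢
      rw [Finset.card_union_of_disjoint (Finset.disjoint_filter_filter hpairdisj),
        Finset.card_union_of_disjoint (Finset.disjoint_filter_filter hpairdisj)] at key
      rw [Finset.card_union_of_disjoint (Finset.disjoint_filter_filter hdisj),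
        Finset.card_union_of_disjoint (Finset.disjoint_filter_filter hdisj)]
      by_cases hwu : w = u
      · subst hwu
        have e1 : F₀.filter (fun p => p.1 = w) = ∅ :=
          Finset.filter_eq_empty_iff.mpr (fun _ hp => (hF₀ _ hp).2.2.2.1)
        have e2 : F₀.filter (fun p => p.2 = w) = ∅ :=
          Finset.filter_eq_empty_iff.mpr (fun _ hp => (hF₀ _ hp).2.2.2.2.2.1)
        rw [e1, e2]
        simpa using hPu
      by_cases hwv : w = v
      · subst hwv
        have e1 : F₀.filter (fun p => p.1 = w) = ∅ :=
          Finset.filter_eq_empty_iff.mpr (fun _ hp => (hF₀ _ hp).2.2.2.2.1)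
        have e2 : F₀.filter (fun p => p.2 = w) = ∅ :=
          Finset.filter_eq_empty_iff.mpr (fun _ hp => (hF₀ _ hp).2.2.2.2.2.2)
        rw [e1, e2]
        simpa using hPv
      · rw [hPout w hwu hwv, hPin w hwu hwv]
        have epair1 : (({(A, x), (x, B)} : Finset (ℕ × ℕ)).filter fun p => p.1 = w).card
            = (if A = w then 1 else 0) + (if x = w then 1 else 0) := by
          rw [filter_pair_card _ _ _ hqr]
        have epair2 : (({(A, x), (x, B)} : Finset (ℕ × ℕ)).filter fun p => p.2 = w).card
            = (if x = w then 1 else 0) + (if B = w then 1 else 0) := by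
          rw [filter_pair_card _ _ _ hqr]
        rw [epair1, epair2] at key
        refine ⟨?_, ?_⟩ <;> split_ifs at key ⊢ <;> omega
  -- counting
  have hFsub : F₀ ∪ P ⊆ D.arcs := hfamF.1
  have ceq : D'.cutArcs X' ∩ F₀ = D.cutArcs X₀ ∩ F₀ := by
    ext p
    simp only [Finset.mem_inter, mem_cutArcs]
    constructor
    · rintro ⟨⟨hD'mem, hc⟩, hp⟩
      have h := hF₀ p hp
      have e1 := hrest p.1 h.2.2.2.1 h.2.2.2.2.1 h.1
      have e2 := hrest p.2 h.2.2.2.2.2.1 h.2.2.2.2.2.2 h.2.1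
      exact ⟨⟨h.2.2.1, by tauto⟩, hp⟩
    · rintro ⟨⟨hDmem, hc⟩, hp⟩
      have h := hF₀ p hp
      have e1 := hrest p.1 h.2.2.2.1 h.2.2.2.2.1 h.1
      have e2 := hrest p.2 h.2.2.2.2.2.1 h.2.2.2.2.2.2 h.2.1
      refine ⟨⟨hsub ?_, by tauto⟩, hp⟩
      rw [hF'eq]
      exact Finset.mem_union_left _ hp
  have hcard1 : (D'.cutArcs X' ∩ F').card =
      (D'.cutArcs X' ∩ F₀).card + (D'.cutArcs X' ∩ ({(A, x), (x, B)} : Finset (ℕ × ℕ))).card := by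
    rw [hF'eq, Finset.inter_union_distrib_left]
    exact Finset.card_union_of_disjoint
      (hpairdisj.mono (Finset.inter_subset_right) (Finset.inter_subset_right))
  have hcard2 : (D.cutArcs X₀ ∩ (F₀ ∪ P)).card =
      (D.cutArcs X₀ ∩ F₀).card + (D.cutArcs X₀ ∩ P).card := by
    rw [Finset.inter_union_distrib_left]
    exact Finset.card_union_of_disjoint
      (hdisj.mono (Finset.inter_subset_right) (Finset.inter_subset_right))
  calc (D'.cutArcs X' ∩ F').card
      = (D.cutArcs X₀ ∩ F₀).card + (D'.cutArcs X' ∩ ({(A, x), (x, B)} : Finset (ℕ × ℕ))).card := by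
        rw [hcard1, ceq]
    _ ≤ (D.cutArcs X₀ ∩ F₀).card + (D.cutArcs X₀ ∩ P).card := by omega
    _ = (D.cutArcs X₀ ∩ (F₀ ∪ P)).card := hcard2.symm
    _ ≤ D.cycPorosity X₀ := le_cycPorosity D X₀ _ hFsub hfamF

end CwAux

namespace CwAux

lemma mem_cut_pair {D : Dgraph} {X : Set ℕ} {a b : ℕ} (h : (a, b) ∈ D.arcs) :
    ((a, b) ∈ D.cutArcs X) ↔ ((a ∈ X ∧ b ∉ X) ∨ (a ∉ X ∧ b ∈ X)) := by
  simp [mem_cutArcs, h]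

lemma cycPorosity_contract (D : Dgraph) (u v x z : ℕ)
    (huv : (u, v) ∈ D.arcs)
    (hcase : (z = v ∧ ∀ w, (u, w) ∈ D.arcs → w = v) ∨ (z = u ∧ ∀ w, (w, v) ∈ D.arcs → w = u))
    (hx : x ∉ (D.verts.erase u).erase v)
    (X' X₀ : Set ℕ)
    (hside : x ∈ X' ↔ z ∈ X₀)
    (hrest : ∀ w, w ≠ u → w ≠ v → w ≠ x → (w ∈ X' ↔ w ∈ X₀)) :
    (butterflyContract D u v x).cycPorosity X' ≤ D.cycPorosity X₀ := by
  set D' := butterflyContract D u v x with hD'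
  have huvne : u ≠ v := D.no_loops _ huv
  apply cycPorosity_le
  intro F' hsub hfam
  by_cases h0 : (F'.filter fun p => p.1 = x).card = 0
  · -- no arcs of the family go through x
    have h0' : (F'.filter fun p => p.2 = x).card = 0 := by rw [← (hfam.2 x).2]; exact h0
    have hnx : ∀ p ∈ F', p.1 ≠ x ∧ p.2 ≠ x := by
      intro p hp
      constructor
      · intro h
        have hm : p ∈ F'.filter fun p => p.1 = x := Finset.mem_filter.mpr ⟨hp, h⟩
        rw [Finset.card_eq_zero.mp h0] at hm
        exact absurd hm (Finset.notMem_empty p)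
      · intro h
        have hm : p ∈ F'.filter fun p => p.2 = x := Finset.mem_filter.mpr ⟨hp, h⟩
        rw [Finset.card_eq_zero.mp h0'] at hm
        exact absurd hm (Finset.notMem_empty p)
    have hstruct : ∀ p ∈ F', p ∈ D.arcs ∧ p.1 ≠ u ∧ p.1 ≠ v ∧ p.2 ≠ u ∧ p.2 ≠ v :=
      fun p hp => contract_arc_not_x (hsub hp) (hnx p hp).1 (hnx p hp).2
    have hfamD : D.IsCycleFamily F' := ⟨fun p hp => (hstruct p hp).1, hfam.2⟩
    have hceq : D'.cutArcs X' ∩ F' = D.cutArcs X₀ ∩ F' := by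
      ext p
      simp only [Finset.mem_inter, mem_cutArcs]
      constructor
      · rintro ⟨⟨hmem, hc⟩, hp⟩
        have h := hstruct p hp
        have e1 := hrest p.1 h.2.1 h.2.2.1 (hnx p hp).1
        have e2 := hrest p.2 h.2.2.2.1 h.2.2.2.2 (hnx p hp).2
        exact ⟨⟨h.1, by tauto⟩, hp⟩
      · rintro ⟨⟨hmem, hc⟩, hp⟩
        have h := hstruct p hp
        have e1 := hrest p.1 h.2.1 h.2.2.1 (hnx p hp).1
        have e2 := hrest p.2 h.2.2.2.1 h.2.2.2.2 (hnx p hp).2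
        exact ⟨⟨hsub hp, by tauto⟩, hp⟩
    rw [hceq]
    exact le_cycPorosity D X₀ F' (fun p hp => (hstruct p hp).1) hfamD
  · -- the family has one arc into x and one out of x
    have hc1 : (F'.filter fun p => p.1 = x).card = 1 := by
      have := (hfam.2 x).1; omega
    have hc2 : (F'.filter fun p => p.2 = x).card = 1 := by rw [← (hfam.2 x).2]; exact hc1
    obtain ⟨q, hq⟩ := Finset.card_eq_one.mp hc1
    obtain ⟨r, hr⟩ := Finset.card_eq_one.mp hc2
    obtain ⟨qx, B⟩ := q
    obtain ⟨A, rx⟩ := r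
    have hqm : (qx, B) ∈ F' ∧ qx = x := by
      have hm : (qx, B) ∈ F'.filter fun p => p.1 = x := by
        rw [hq]; exact Finset.mem_singleton_self _
      simpa using hm
    have hrm : (A, rx) ∈ F' ∧ rx = x := by
      have hm : (A, rx) ∈ F'.filter fun p => p.2 = x := by
        rw [hr]; exact Finset.mem_singleton_self _
      simpa using hm
    obtain ⟨hqmem, hh1⟩ := hqm
    obtain ⟨hrmem, hh2⟩ := hrm
    subst qx
    subst rx
    have hqa : (x, B) ∈ D'.arcs := hsub hqmem
    have hra : (A, x) ∈ D'.arcs := hsub hrmem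
    have hBx : B ≠ x := fun h => D'.no_loops _ hqa (by simp [h])
    have hAx : A ≠ x := fun h => D'.no_loops _ hra (by simp [h])
    obtain ⟨hBu, hBv, houtarc⟩ := contract_arc_out_x hx hqa hBx
    obtain ⟨hAu, hAv, hinarc⟩ := contract_arc_in_x hx hra hAx
    have hqrne : ((A, x) : ℕ × ℕ) ≠ (x, B) := fun h => hAx (congrArg Prod.fst h)
    have honly1 : ∀ p ∈ F', p.1 = x → p = (x, B) := by
      intro p hp h
      have hm : p ∈ F'.filter fun p => p.1 = x := Finset.mem_filter.mpr ⟨hp, h⟩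
      rw [hq] at hm
      exact Finset.mem_singleton.mp hm
    have honly2 : ∀ p ∈ F', p.2 = x → p = (A, x) := by
      intro p hp h
      have hm : p ∈ F'.filter fun p => p.2 = x := Finset.mem_filter.mpr ⟨hp, h⟩
      rw [hr] at hm
      exact Finset.mem_singleton.mp hm
    set F₀ := (F'.erase (A, x)).erase (x, B) with hF₀def
    have hF'eq : F' = F₀ ∪ {(A, x), (x, B)} := by
      ext p
      simp only [hF₀def, Finset.mem_union, Finset.mem_erase, Finset.mem_insert,
        Finset.mem_singleton]
      constructor
      · intro hp
        by_cases h1 : p = (A, x)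
        · exact Or.inr (Or.inl h1)
        by_cases h2 : p = (x, B)
        · exact Or.inr (Or.inr h2)
        · exact Or.inl ⟨h2, h1, hp⟩
      · rintro (⟨-, -, hp⟩ | rfl | rfl)
        · exact hp
        · exact hrmem
        · exact hqmem
    have hF₀ : ∀ p ∈ F₀, p.1 ≠ x ∧ p.2 ≠ x ∧ p ∈ D.arcs ∧ p.1 ≠ u ∧ p.1 ≠ v ∧
        p.2 ≠ u ∧ p.2 ≠ v := by
      intro p hp
      simp only [hF₀def, Finset.mem_erase] at hp
      obtain ⟨hp1, hp2, hpF⟩ := hp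
      have h1 : p.1 ≠ x := fun h => hp1 (by rw [honly1 p hpF h])
      have h2 : p.2 ≠ x := fun h => hp2 (by rw [honly2 p hpF h])
      obtain h := contract_arc_not_x (hsub hpF) h1 h2
      exact ⟨h1, h2, h.1, h.2.1, h.2.2.1, h.2.2.2.1, h.2.2.2.2⟩
    have hAX : A ∈ X' ↔ A ∈ X₀ := hrest A hAu hAv hAx
    have hBX : B ∈ X' ↔ B ∈ X₀ := hrest B hBu hBv hBx
    have hiffA : ((A ∈ X' ∧ x ∉ X') ∨ (A ∉ X' ∧ x ∈ X')) ↔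
        ((A ∈ X₀ ∧ z ∉ X₀) ∨ (A ∉ X₀ ∧ z ∈ X₀)) := by rw [hAX, hside]
    have hiffB : ((x ∈ X' ∧ B ∉ X') ∨ (x ∉ X' ∧ B ∈ X')) ↔
        ((z ∈ X₀ ∧ B ∉ X₀) ∨ (z ∉ X₀ ∧ B ∈ X₀)) := by rw [hBX, hside]
    have hcutA : ((A, x) ∈ D'.cutArcs X') ↔ ((A ∈ X₀ ∧ z ∉ X₀) ∨ (A ∉ X₀ ∧ z ∈ X₀)) :=
      (mem_cut_pair hra).trans hiffA
    have hcutB : ((x, B) ∈ D'.cutArcs X') ↔ ((z ∈ X₀ ∧ B ∉ X₀) ∨ (z ∉ X₀ ∧ B ∈ X₀)) :=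
      (mem_cut_pair hqa).trans hiffB
    rcases hcase with ⟨hz, hout⟩ | ⟨hz, hin⟩
    · -- only arc leaving u is (u,v); z = v
      subst z
      have hvB : (v, B) ∈ D.arcs := by
        rcases houtarc with h | h
        · exact absurd (hout B (Finset.mem_of_mem_erase h)) hBv
        · exact Finset.mem_of_mem_erase h
      by_cases hAvarc : (A, v) ∈ D.arcs
      · -- P = {(A,v),(v,B)}
        have hne : ((A, v) : ℕ × ℕ) ≠ (v, B) := fun h => hAv (congrArg Prod.fst h)
        apply contract_family_bound D u v x A B X' X₀ hrest F' F₀ {(A, v), (v, B)} hsub hfam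
          hF'eq hAx hBx hAu hAv hBu hBv hF₀
        · intro p hp
          simp only [Finset.mem_insert, Finset.mem_singleton] at hp
          rcases hp with rfl | rfl
          · exact hAvarc
          · exact hvB
        · intro p hp
          simp only [Finset.mem_insert, Finset.mem_singleton] at hp
          rcases hp with rfl | rfl <;> simp
        · intro w hwu hwv
          rw [filter_pair_card _ _ _ hne]
          simp [Ne.symm hwv]
        · intro w hwu hwv
          rw [filter_pair_card _ _ _ hne]
          simp [Ne.symm hwv]
        · refine ⟨?_, ?_⟩
          · rw [filter_pair_card _ _ _ hne]
            simp [hAu, Ne.symm huvne]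
          · rw [filter_pair_card _ _ _ hne, filter_pair_card _ _ _ hne]
            simp [hAu, hBu, Ne.symm huvne]
        · refine ⟨?_, ?_⟩
          · rw [filter_pair_card _ _ _ hne]
            simp [hAv]
          · rw [filter_pair_card _ _ _ hne, filter_pair_card _ _ _ hne]
            simp [hAv, hBv]
        · rw [inter_pair_card _ _ _ hqrne, inter_pair_card _ _ _ hne]
          rw [if_congr hcutA rfl rfl, if_congr hcutB rfl rfl,
            if_congr (mem_cut_pair hAvarc) rfl rfl, if_congr (mem_cut_pair hvB) rfl rfl]
      · -- P = {(A,u),(u,v),(v,B)}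
        have hAuarc : (A, u) ∈ D.arcs := by
          rcases hinarc with h | h
          · exact Finset.mem_of_mem_erase h
          · exact absurd (Finset.mem_of_mem_erase h) hAvarc
        have hne1 : ((A, u) : ℕ × ℕ) ≠ (u, v) := fun h => hAu (congrArg Prod.fst h)
        have hne2 : ((A, u) : ℕ × ℕ) ≠ (v, B) := fun h => hAv (congrArg Prod.fst h)
        have hne3 : ((u, v) : ℕ × ℕ) ≠ (v, B) := fun h => huvne (congrArg Prod.fst h)
        apply contract_family_bound D u v x A B X' X₀ hrest F' F₀ {(A, u), (u, v), (v, B)}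
          hsub hfam hF'eq hAx hBx hAu hAv hBu hBv hF₀
        · intro p hp
          simp only [Finset.mem_insert, Finset.mem_singleton] at hp
          rcases hp with rfl | rfl | rfl
          · exact hAuarc
          · exact huv
          · exact hvB
        · intro p hp
          simp only [Finset.mem_insert, Finset.mem_singleton] at hp
          rcases hp with rfl | rfl | rfl <;> simp
        · intro w hwu hwv
          rw [filter_triple_card _ _ _ _ hne1 hne2 hne3]
          simp [Ne.symm hwu, Ne.symm hwv]
        · intro w hwu hwv
          rw [filter_triple_card _ _ _ _ hne1 hne2 hne3]
          simp [Ne.symm hwu, Ne.symm hwv]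
        · refine ⟨?_, ?_⟩
          · rw [filter_triple_card _ _ _ _ hne1 hne2 hne3]
            simp [hAu, Ne.symm huvne]
          · rw [filter_triple_card _ _ _ _ hne1 hne2 hne3,
              filter_triple_card _ _ _ _ hne1 hne2 hne3]
            simp [hAu, hBu, huvne, Ne.symm huvne]
        · refine ⟨?_, ?_⟩
          · rw [filter_triple_card _ _ _ _ hne1 hne2 hne3]
            simp [hAv, huvne]
          · rw [filter_triple_card _ _ _ _ hne1 hne2 hne3,
              filter_triple_card _ _ _ _ hne1 hne2 hne3]
            simp [hAv, hBv, huvne, Ne.symm huvne]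
        · rw [inter_pair_card _ _ _ hqrne, inter_triple_card _ _ _ _ hne1 hne2 hne3]
          rw [if_congr hcutA rfl rfl, if_congr hcutB rfl rfl,
            if_congr (mem_cut_pair hAuarc) rfl rfl, if_congr (mem_cut_pair huv) rfl rfl,
            if_congr (mem_cut_pair hvB) rfl rfl]
          by_cases h1 : A ∈ X₀ <;> by_cases h2 : B ∈ X₀ <;> by_cases h3 : u ∈ X₀ <;>
            by_cases h4 : v ∈ X₀ <;> simp [h1, h2, h3, h4]
    · -- only arc entering v is (u,v); z = u
      subst z
      have hAuarc : (A, u) ∈ D.arcs := by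
        rcases hinarc with h | h
        · exact Finset.mem_of_mem_erase h
        · exact absurd (hin A (Finset.mem_of_mem_erase h)) hAu
      by_cases huBarc : (u, B) ∈ D.arcs
      · -- P = {(A,u),(u,B)}
        have hne : ((A, u) : ℕ × ℕ) ≠ (u, B) := fun h => hAu (congrArg Prod.fst h)
        apply contract_family_bound D u v x A B X' X₀ hrest F' F₀ {(A, u), (u, B)} hsub hfam
          hF'eq hAx hBx hAu hAv hBu hBv hF₀
        · intro p hp
          simp only [Finset.mem_insert, Finset.mem_singleton] at hp
          rcases hp with rfl | rfl
          · exact hAuarc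
          · exact huBarc
        · intro p hp
          simp only [Finset.mem_insert, Finset.mem_singleton] at hp
          rcases hp with rfl | rfl <;> simp
        · intro w hwu hwv
          rw [filter_pair_card _ _ _ hne]
          simp [Ne.symm hwu]
        · intro w hwu hwv
          rw [filter_pair_card _ _ _ hne]
          simp [Ne.symm hwu]
        · refine ⟨?_, ?_⟩
          · rw [filter_pair_card _ _ _ hne]
            simp [hAu]
          · rw [filter_pair_card _ _ _ hne, filter_pair_card _ _ _ hne]
            simp [hAu, hBu]
        · refine ⟨?_, ?_⟩
          · rw [filter_pair_card _ _ _ hne]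
            simp [hAv, huvne]
          · rw [filter_pair_card _ _ _ hne, filter_pair_card _ _ _ hne]
            simp [hAv, hBv, huvne]
        · rw [inter_pair_card _ _ _ hqrne, inter_pair_card _ _ _ hne]
          rw [if_congr hcutA rfl rfl, if_congr hcutB rfl rfl,
            if_congr (mem_cut_pair hAuarc) rfl rfl, if_congr (mem_cut_pair huBarc) rfl rfl]
      · -- P = {(A,u),(u,v),(v,B)}
        have hvB : (v, B) ∈ D.arcs := by
          rcases houtarc with h | h
          · exact absurd (Finset.mem_of_mem_erase h) huBarc
          · exact Finset.mem_of_mem_erase h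
        have hne1 : ((A, u) : ℕ × ℕ) ≠ (u, v) := fun h => hAu (congrArg Prod.fst h)
        have hne2 : ((A, u) : ℕ × ℕ) ≠ (v, B) := fun h => hAv (congrArg Prod.fst h)
        have hne3 : ((u, v) : ℕ × ℕ) ≠ (v, B) := fun h => huvne (congrArg Prod.fst h)
        apply contract_family_bound D u v x A B X' X₀ hrest F' F₀ {(A, u), (u, v), (v, B)}
          hsub hfam hF'eq hAx hBx hAu hAv hBu hBv hF₀
        · intro p hp
          simp only [Finset.mem_insert, Finset.mem_singleton] at hp
          rcases hp with rfl | rfl | rfl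
          · exact hAuarc
          · exact huv
          · exact hvB
        · intro p hp
          simp only [Finset.mem_insert, Finset.mem_singleton] at hp
          rcases hp with rfl | rfl | rfl <;> simp
        · intro w hwu hwv
          rw [filter_triple_card _ _ _ _ hne1 hne2 hne3]
          simp [Ne.symm hwu, Ne.symm hwv]
        · intro w hwu hwv
          rw [filter_triple_card _ _ _ _ hne1 hne2 hne3]
          simp [Ne.symm hwu, Ne.symm hwv]
        · refine ⟨?_, ?_⟩
          · rw [filter_triple_card _ _ _ _ hne1 hne2 hne3]
            simp [hAu, Ne.symm huvne]
          · rw [filter_triple_card _ _ _ _ hne1 hne2 hne3,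
              filter_triple_card _ _ _ _ hne1 hne2 hne3]
            simp [hAu, hBu, huvne, Ne.symm huvne]
        · refine ⟨?_, ?_⟩
          · rw [filter_triple_card _ _ _ _ hne1 hne2 hne3]
            simp [hAv, huvne]
          · rw [filter_triple_card _ _ _ _ hne1 hne2 hne3,
              filter_triple_card _ _ _ _ hne1 hne2 hne3]
            simp [hAv, hBv, huvne, Ne.symm huvne]
        · rw [inter_pair_card _ _ _ hqrne, inter_triple_card _ _ _ _ hne1 hne2 hne3]
          rw [if_congr hcutA rfl rfl, if_congr hcutB rfl rfl,
            if_congr (mem_cut_pair hAuarc) rfl rfl, if_congr (mem_cut_pair huv) rfl rfl,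
            if_congr (mem_cut_pair hvB) rfl rfl]
          by_cases h1 : A ∈ X₀ <;> by_cases h2 : B ∈ X₀ <;> by_cases h3 : u ∈ X₀ <;>
            by_cases h4 : v ∈ X₀ <;> simp [h1, h2, h3, h4]

end CwAux

namespace CwAux

open SimpleGraph

lemma sym2_val_eq {W : Type} {P : W → Prop} (a b c d : Subtype P) :
    s(a.1, b.1) = s(c.1, d.1) ↔ s(a, b) = s(c, d) := by
  constructor
  · intro h
    apply Sym2.map.injective (Subtype.val_injective)
    simpa using h
  · intro h
    have := congrArg (Sym2.map Subtype.val) h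
    simpa using this

lemma singleton_nbhd {W : Type} [Fintype W] {T : SimpleGraph W} {l n : W}
    (hl : IsTreeLeaf T l) (h : T.Adj l n) : T.neighborSet l = {n} := by
  have h1 : (T.neighborSet l).Nonempty := ⟨n, h⟩
  have h2 : (T.neighborSet l).ncard = 1 := by
    have := hl
    unfold IsTreeLeaf at this
    have hpos : 0 < (T.neighborSet l).ncard := by
      rw [Set.ncard_pos (Set.toFinite _)]
      exact h1
    omega
  obtain ⟨c, hc⟩ := Set.ncard_eq_one.mp h2
  rw [hc]
  have : n ∈ T.neighborSet l := h
  rw [hc] at this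
  simp at this
  rw [this]

/-- Structure around a leaf of a cubic tree with at least three leaves. -/
lemma leaf_structure {W : Type} [Fintype W] {T : SimpleGraph W} (hcub : IsCubicTree T)
    {l m1 m2 : W} (hl : IsTreeLeaf T l) (hm1 : IsTreeLeaf T m1) (hm2 : IsTreeLeaf T m2)
    (h12 : m1 ≠ m2) (h1l : m1 ≠ l) (h2l : m2 ≠ l) :
    ∃ n t1 t2 : W, T.neighborSet l = {n} ∧ T.neighborSet n = {l, t1, t2} ∧
      t1 ≠ t2 ∧ t1 ≠ l ∧ t1 ≠ n ∧ t2 ≠ l ∧ t2 ≠ n ∧ l ≠ n ∧ ¬ T.Adj t1 t2 ∧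
      ¬ IsTreeLeaf T n := by
  have hconn := hcub.1.isConnected
  have hacy := hcub.1.IsAcyclic
  -- the unique neighbour of l
  obtain ⟨n, hn⟩ := neighborSet_nonempty_of_connected T (hconn.preconnected l m1) h1l.symm
  have hnl : T.neighborSet l = {n} := singleton_nbhd hl hn
  have hln : l ≠ n := (T.ne_of_adj hn)
  -- n is not a leaf
  have hnleaf : ¬ IsTreeLeaf T n := by
    intro hlf
    have hnn : T.neighborSet n = {l} := singleton_nbhd hlf hn.symm
    -- pick a third leaf m distinct from l and n
    obtain ⟨m, hm, hml, hmn⟩ : ∃ m, IsTreeLeaf T m ∧ m ≠ l ∧ m ≠ n := by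
      by_cases h : m1 = n
      · exact ⟨m2, hm2, h2l, fun hh => h12 (h.trans hh.symm)⟩
      · exact ⟨m1, hm1, h1l, h⟩
    obtain ⟨p0⟩ := hconn.preconnected l m
    obtain ⟨p, hp⟩ := p0.toPath
    cases p with
    | nil => exact hml rfl
    | @cons _ y _ hadj q =>
      have hy : y = n := by
        have : y ∈ T.neighborSet l := hadj
        rw [hnl] at this
        simpa using this
      rw [eq_comm] at hy
      subst hy
      rw [SimpleGraph.Walk.cons_isPath_iff] at hp
      cases q with
      | nil => exact hmn rfl
      | @cons _ z _ hadj2 q2 =>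
        have hz : z = l := by
          have : z ∈ T.neighborSet n := hadj2
          rw [hnn] at this
          simpa using this
        apply hp.2
        rw [SimpleGraph.Walk.support_cons]
        apply List.mem_cons_of_mem
        rw [← hz]
        exact SimpleGraph.Walk.start_mem_support q2
  -- n has exactly 3 neighbours
  have hdeg : (T.neighborSet n).ncard = 3 := hcub.2 n hnleaf
  have hlin : l ∈ T.neighborSet n := hn.symm
  have hdiff : ((T.neighborSet n) \ {l}).ncard = 2 := by
    rw [Set.ncard_diff_singleton_of_mem hlin, hdeg]
  obtain ⟨t1, t2, ht12, hset⟩ := Set.ncard_eq_two.mp hdiff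
  have ht1 : t1 ∈ T.neighborSet n ∧ t1 ≠ l := by
    have : t1 ∈ (T.neighborSet n) \ {l} := by rw [hset]; simp
    simpa using this
  have ht2 : t2 ∈ T.neighborSet n ∧ t2 ≠ l := by
    have : t2 ∈ (T.neighborSet n) \ {l} := by rw [hset]; simp
    simpa using this
  have hnbhd : T.neighborSet n = {l, t1, t2} := by
    ext w
    constructor
    · intro hw
      by_cases hwl : w = l
      · simp [hwl]
      · have : w ∈ (T.neighborSet n) \ {l} := ⟨hw, hwl⟩
        rw [hset] at this
        simpa using Or.inr this
    · intro hw
      simp only [Set.mem_insert_iff, Set.mem_singleton_iff] at hw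
      rcases hw with rfl | rfl | rfl
      · exact hlin
      · exact ht1.1
      · exact ht2.1
  have ht1n : t1 ≠ n := fun h => T.irrefl (h ▸ ht1.1)
  have ht2n : t2 ≠ n := fun h => T.irrefl (h ▸ ht2.1)
  -- t1 and t2 are not adjacent (otherwise a triangle)
  have hnadj : ¬ T.Adj t1 t2 := by
    intro hadj
    have hP1 : (SimpleGraph.Walk.cons ((ht1.1 : T.Adj n t1).symm)
        (SimpleGraph.Walk.cons (ht2.1 : T.Adj n t2)
          SimpleGraph.Walk.nil)).IsPath := by
      rw [SimpleGraph.Walk.isPath_def]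
      show [t1, n, t2].Nodup
      simp [ht1n, ht12, ht2n.symm]
    have := hacy.path_unique ⟨_, hP1⟩ (SimpleGraph.Path.singleton hadj)
    have hlen := congrArg (fun p => p.1.length) this
    simp [SimpleGraph.Path.singleton] at hlen
    exact SimpleGraph.Walk.not_nil_cons hlen
  exact ⟨n, t1, t2, hnl, hnbhd, ht12, ht1.2, ht1n, ht2.2, ht2n, hln, hnadj, hnleaf⟩

/-- The graph obtained by removing the leaf `l` and its cubic neighbour `n`,
joining the other two neighbours `t1, t2` of `n` by an edge. -/
def pruneGraph {W : Type} (T : SimpleGraph W) (l n t1 t2 : W) (h12 : t1 ≠ t2) :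
    SimpleGraph {w : W // w ≠ l ∧ w ≠ n} where
  Adj a b := T.Adj a.1 b.1 ∨ s(a.1, b.1) = s(t1, t2)
  symm := by
    constructor
    intro a b h
    rcases h with h | h
    · exact Or.inl h.symm
    · right
      rw [Sym2.eq_swap]
      exact h
  loopless := by
    constructor
    intro a h
    rcases h with h | h
    · exact T.irrefl h
    · rw [Sym2.eq_iff] at h
      rcases h with ⟨h1, h2⟩ | ⟨h1, h2⟩
      · exact h12 (h1.symm.trans h2)
      · exact h12 (h2.symm.trans h1)

lemma mem_val_image_nbhd {W : Type} {T : SimpleGraph W} {l n t1 t2 : W} {h12 : t1 ≠ t2}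
    {w : {w : W // w ≠ l ∧ w ≠ n}} {y : W} :
    y ∈ Subtype.val '' ((pruneGraph T l n t1 t2 h12).neighborSet w) ↔
      (y ≠ l ∧ y ≠ n ∧ (T.Adj w.1 y ∨ s(w.1, y) = s(t1, t2))) := by
  constructor
  · rintro ⟨x, hx, rfl⟩
    exact ⟨x.2.1, x.2.2, hx⟩
  · rintro ⟨h1, h2, h3⟩
    exact ⟨⟨y, h1, h2⟩, h3, rfl⟩

lemma prune_nbhd_ncard {W : Type} [Fintype W] {T : SimpleGraph W} {l n t1 t2 : W}
    (h12 : t1 ≠ t2)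
    (hnl : T.neighborSet l = {n}) (hnn : T.neighborSet n = {l, t1, t2})
    (ht1l : t1 ≠ l) (ht1n : t1 ≠ n) (ht2l : t2 ≠ l) (ht2n : t2 ≠ n) (hln : l ≠ n)
    (hnadj : ¬ T.Adj t1 t2)
    (w : {w : W // w ≠ l ∧ w ≠ n}) :
    ((pruneGraph T l n t1 t2 h12).neighborSet w).ncard = (T.neighborSet w.1).ncard := by
  have hval : ((pruneGraph T l n t1 t2 h12).neighborSet w).ncard
      = (Subtype.val '' ((pruneGraph T l n t1 t2 h12).neighborSet w)).ncard :=
    (Set.ncard_image_of_injective _ Subtype.val_injective).symm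
  have hlnb : ∀ y, T.Adj w.1 y → y ≠ l := by
    intro y h hy
    have hmem : w.1 ∈ T.neighborSet l := by
      have := h.symm
      rw [hy] at this
      exact this
    rw [hnl] at hmem
    exact w.2.2 (by simpa using hmem)
  by_cases hw1 : w.1 = t1
  · have himg : Subtype.val '' ((pruneGraph T l n t1 t2 h12).neighborSet w)
        = insert t2 (T.neighborSet t1 \ {n}) := by
      ext y
      rw [mem_val_image_nbhd]
      constructor
      · rintro ⟨h1, h2, h3 | h3⟩
        · right
          rw [← hw1]
          exact ⟨h3, h2⟩
        · left
          rw [hw1, Sym2.eq_iff] at h3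
          rcases h3 with ⟨-, h⟩ | ⟨h, -⟩
          · exact h
          · exact absurd h h12
      · intro hy
        rcases Set.mem_insert_iff.mp hy with rfl | ⟨hadj, hyn⟩
        · exact ⟨ht2l, ht2n, Or.inr (by rw [hw1])⟩
        · rw [← hw1] at hadj
          exact ⟨hlnb y hadj, hyn, Or.inl hadj⟩
    rw [hval, himg]
    have ht2mem : t2 ∉ T.neighborSet t1 \ {n} := by
      intro h
      exact hnadj h.1
    have hnmem : n ∈ T.neighborSet t1 := by
      have : t1 ∈ T.neighborSet n := by rw [hnn]; simp
      exact this.symm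
    rw [Set.ncard_insert_of_notMem ht2mem (Set.toFinite _),
      Set.ncard_diff_singleton_of_mem hnmem, hw1]
    have hpos : 0 < (T.neighborSet t1).ncard := by
      rw [Set.ncard_pos (Set.toFinite _)]
      exact ⟨n, hnmem⟩
    omega
  by_cases hw2 : w.1 = t2
  · have himg : Subtype.val '' ((pruneGraph T l n t1 t2 h12).neighborSet w)
        = insert t1 (T.neighborSet t2 \ {n}) := by
      ext y
      rw [mem_val_image_nbhd]
      constructor
      · rintro ⟨h1, h2, h3 | h3⟩
        · right
          rw [← hw2]
          exact ⟨h3, h2⟩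
        · left
          rw [hw2, Sym2.eq_iff] at h3
          rcases h3 with ⟨h, -⟩ | ⟨-, h⟩
          · exact absurd h.symm h12
          · exact h
      · intro hy
        rcases Set.mem_insert_iff.mp hy with rfl | ⟨hadj, hyn⟩
        · refine ⟨ht1l, ht1n, Or.inr ?_⟩
          rw [hw2, Sym2.eq_swap]
        · rw [← hw2] at hadj
          exact ⟨hlnb y hadj, hyn, Or.inl hadj⟩
    rw [hval, himg]
    have ht1mem : t1 ∉ T.neighborSet t2 \ {n} := by
      intro h
      exact hnadj h.1.symm
    have hnmem : n ∈ T.neighborSet t2 := by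
      have : t2 ∈ T.neighborSet n := by rw [hnn]; simp
      exact this.symm
    rw [Set.ncard_insert_of_notMem ht1mem (Set.toFinite _),
      Set.ncard_diff_singleton_of_mem hnmem, hw2]
    have hpos : 0 < (T.neighborSet t2).ncard := by
      rw [Set.ncard_pos (Set.toFinite _)]
      exact ⟨n, hnmem⟩
    omega
  · have himg : Subtype.val '' ((pruneGraph T l n t1 t2 h12).neighborSet w)
        = T.neighborSet w.1 := by
      ext y
      rw [mem_val_image_nbhd]
      constructor
      · rintro ⟨h1, h2, h3 | h3⟩
        · exact h3
        · rw [Sym2.eq_iff] at h3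
          rcases h3 with ⟨h, -⟩ | ⟨h, -⟩
          · exact absurd h hw1
          · exact absurd h hw2
      · intro hadj
        refine ⟨hlnb y hadj, ?_, Or.inl hadj⟩
        intro hyn
        have hmem : w.1 ∈ T.neighborSet n := by
          have := hadj.symm
          rw [hyn] at this
          exact this
        rw [hnn] at hmem
        simp only [Set.mem_insert_iff, Set.mem_singleton_iff] at hmem
        rcases hmem with h | h | h
        · exact w.2.1 h
        · exact hw1 h
        · exact hw2 h
    rw [hval, himg]

end CwAux

namespace CwAux

open SimpleGraph

lemma mem_treeShore {W : Type} {T : SimpleGraph W} {φ : W → ℕ} {x y : W} {b : ℕ} :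
    b ∈ treeShore T φ x y ↔
      ∃ w, (IsTreeLeaf T w ∧ (T.deleteEdges {s(x, y)}).Reachable x w) ∧ φ w = b :=
  Set.mem_image _ _ _

lemma adj_of_sym2_eq {W : Type} (T : SimpleGraph W) {x y p q : W}
    (h : s(x, y) = s(p, q)) (hadj : T.Adj x y) : T.Adj p q := by
  rw [Sym2.eq_iff] at h
  rcases h with ⟨h1, h2⟩ | ⟨h1, h2⟩
  · rwa [h1, h2] at hadj
  · rw [h1, h2] at hadj
    exact hadj.symm

lemma prune {W : Type} [Fintype W] (T : SimpleGraph W) (hcub : IsCubicTree T)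
    (φ : W → ℕ) (V : Finset ℕ) (hbij : Set.BijOn φ {x | IsTreeLeaf T x} ↑V)
    (hV : 3 ≤ V.card) (a : ℕ) (ha : a ∈ V) :
    ∃ (W' : Type) (_ : Fintype W') (T' : SimpleGraph W') (φ' : W' → ℕ),
      IsCubicTree T' ∧ Set.BijOn φ' {x | IsTreeLeaf T' x} ↑(V.erase a) ∧
      ∀ s t : W', T'.Adj s t → ∃ s₀ t₀ : W, T.Adj s₀ t₀ ∧
        treeShore T' φ' s t = treeShore T φ s₀ t₀ \ {a} := by
  classical
  -- find the leaf assigned to a and two other leaves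
  obtain ⟨l, hlleaf, hφl⟩ := hbij.2.2 (Finset.mem_coe.mpr ha)
  obtain ⟨b, hb⟩ := Finset.card_pos.mp (by
    rw [Finset.card_erase_of_mem ha]; omega : 0 < (V.erase a).card)
  obtain ⟨c, hc⟩ := Finset.card_pos.mp (by
    rw [Finset.card_erase_of_mem hb, Finset.card_erase_of_mem ha]; omega :
    0 < ((V.erase a).erase b).card)
  obtain ⟨hba, hbV⟩ := Finset.mem_erase.mp hb
  obtain ⟨hcb, hc'⟩ := Finset.mem_erase.mp hc
  obtain ⟨hca, hcV⟩ := Finset.mem_erase.mp hc'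
  obtain ⟨m1, hm1leaf, hφm1⟩ := hbij.2.2 (Finset.mem_coe.mpr hbV)
  obtain ⟨m2, hm2leaf, hφm2⟩ := hbij.2.2 (Finset.mem_coe.mpr hcV)
  have hm12 : m1 ≠ m2 := fun h => hcb (by rw [← hφm1, ← hφm2, h])
  have hm1l : m1 ≠ l := fun h => hba (by rw [← hφm1, ← hφl, h])
  have hm2l : m2 ≠ l := fun h => hca (by rw [← hφm2, ← hφl, h])
  obtain ⟨n, t1, t2, hnl, hnn, ht12, ht1l, ht1n, ht2l, ht2n, hln, hnadj, hnleaf⟩ :=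
    leaf_structure hcub hlleaf hm1leaf hm2leaf hm12 hm1l hm2l
  -- the pruned tree
  set W' := {w : W // w ≠ l ∧ w ≠ n} with hW'
  haveI : Fintype W' := Fintype.ofFinite _
  set T' := pruneGraph T l n t1 t2 ht12 with hT'
  have hncard := prune_nbhd_ncard ht12 hnl hnn ht1l ht1n ht2l ht2n hln hnadj
  have hleaf_iff : ∀ w : W', IsTreeLeaf T' w ↔ IsTreeLeaf T w.1 := by
    intro w
    unfold IsTreeLeaf
    rw [hncard w]
  -- the general backward transfer
  have htrans : ∀ (G : SimpleGraph W) (G' : SimpleGraph W') (u1 u2 : W)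
      (hu1l : u1 ≠ l) (hu1n : u1 ≠ n) (hu2l : u2 ≠ l) (hu2n : u2 ≠ n),
      G.neighborSet l ⊆ {n} →
      G.neighborSet n ⊆ {l, u1, u2} →
      (∀ (x y : W) (hx : x ≠ l ∧ x ≠ n) (hy : y ≠ l ∧ y ≠ n), G.Adj x y →
        G'.Reachable ⟨x, hx⟩ ⟨y, hy⟩) →
      G'.Reachable ⟨u1, hu1l, hu1n⟩ ⟨u2, hu2l, hu2n⟩ →
      ∀ (x y : W) (hx : x ≠ l ∧ x ≠ n) (hy : y ≠ l ∧ y ≠ n), G.Reachable x y →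
        G'.Reachable ⟨x, hx⟩ ⟨y, hy⟩ := by
    intro G G' u1 u2 hu1l hu1n hu2l hu2n hGnl hGnn hPadj hPt x y hx hy hr
    set f : W → W' := fun w => if h : w ≠ l ∧ w ≠ n then ⟨w, h⟩ else ⟨u1, hu1l, hu1n⟩
      with hfdef
    have hfeq : ∀ (w : W) (hw : w ≠ l ∧ w ≠ n), f w = ⟨w, hw⟩ := fun w hw => dif_pos hw
    have hmain := reach_transfer G l n u1 u2 (fun p q => G'.Reachable (f p) (f q))
      hGnl hGnn hu1l hu1n hu2l hu2n
      (fun p _ _ => SimpleGraph.Reachable.refl _)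
      (fun p q h => h.symm)
      (fun p q r h1 h2 => h1.trans h2)
      (fun p q hpl hpn hql hqn hadj => by
        show G'.Reachable (f p) (f q)
        rw [hfeq p ⟨hpl, hpn⟩, hfeq q ⟨hql, hqn⟩]
        exact hPadj p q _ _ hadj)
      (by
        show G'.Reachable (f u1) (f u2)
        rw [hfeq u1 ⟨hu1l, hu1n⟩, hfeq u2 ⟨hu2l, hu2n⟩]
        exact hPt)
      x y hx.1 hx.2 hy.1 hy.2 hr
    have hmain' : G'.Reachable (f x) (f y) := hmain
    rwa [hfeq x hx, hfeq y hy] at hmain'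
  -- bridges of T
  have hbridge : ∀ x y : W, T.Adj x y → ¬ (T.deleteEdges {s(x, y)}).Reachable x y := by
    intro x y hxy
    have hb := (SimpleGraph.isAcyclic_iff_forall_adj_isBridge.mp hcub.1.IsAcyclic) hxy
    rw [SimpleGraph.isBridge_iff] at hb
    exact hb
  have hadjt1n : T.Adj n t1 := by
    have : t1 ∈ T.neighborSet n := by rw [hnn]; simp
    exact this
  have hadjt2n : T.Adj n t2 := by
    have : t2 ∈ T.neighborSet n := by rw [hnn]; simp
    exact this
  -- forward transfer for an old edge
  have fmap_old : ∀ (s t : W'), ∀ p q : W', (T'.deleteEdges {s(s, t)}).Adj p q →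
      (T.deleteEdges {s(s.1, t.1)}).Reachable p.1 q.1 := by
    intro s t p q hpq
    rw [SimpleGraph.deleteEdges_adj] at hpq
    obtain ⟨hpq1, hpq2⟩ := hpq
    simp only [Set.mem_singleton_iff] at hpq2
    rcases hpq1 with h | h
    · apply SimpleGraph.Adj.reachable
      rw [SimpleGraph.deleteEdges_adj]
      refine ⟨h, ?_⟩
      simp only [Set.mem_singleton_iff]
      intro he
      exact hpq2 ((sym2_val_eq p q s t).mp he)
    · -- extra edge: route via n
      have hedge : ∀ z : W', s(z.1, n) ∉ ({s(s.1, t.1)} : Set (Sym2 W)) := by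
        intro z he
        simp only [Set.mem_singleton_iff, Sym2.eq_iff] at he
        rcases he with ⟨-, h2⟩ | ⟨-, h2⟩
        · exact t.2.2 h2.symm
        · exact s.2.2 h2.symm
      have hp1 : T.Adj p.1 n := by
        rw [Sym2.eq_iff] at h
        rcases h with ⟨h1, -⟩ | ⟨h1, -⟩
        · rw [h1]; exact hadjt1n.symm
        · rw [h1]; exact hadjt2n.symm
      have hq1 : T.Adj n q.1 := by
        rw [Sym2.eq_iff] at h
        rcases h with ⟨-, h2⟩ | ⟨-, h2⟩
        · rw [h2]; exact hadjt2n
        · rw [h2]; exact hadjt1n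
      have ha1 : (T.deleteEdges {s(s.1, t.1)}).Adj p.1 n := by
        rw [SimpleGraph.deleteEdges_adj]
        exact ⟨hp1, hedge p⟩
      have ha2 : (T.deleteEdges {s(s.1, t.1)}).Adj n q.1 := by
        rw [SimpleGraph.deleteEdges_adj]
        refine ⟨hq1, ?_⟩
        intro he
        apply hedge q
        simp only [Set.mem_singleton_iff] at he ⊢
        rw [← he, Sym2.eq_swap]
      exact ha1.reachable.trans ha2.reachable
  -- forward transfer for the new edge
  have fmap_new : ∀ (s t : W') (u1 u2 : W), s.1 = u1 → t.1 = u2 →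
      s(u1, u2) = s(t1, t2) →
      ∀ p q : W', (T'.deleteEdges {s(s, t)}).Adj p q →
      (T.deleteEdges {s(u1, n)}).Reachable p.1 q.1 := by
    intro s t u1 u2 hs ht hsw p q hpq
    rw [SimpleGraph.deleteEdges_adj] at hpq
    obtain ⟨hpq1, hpq2⟩ := hpq
    simp only [Set.mem_singleton_iff] at hpq2
    rcases hpq1 with h | h
    · apply SimpleGraph.Adj.reachable
      rw [SimpleGraph.deleteEdges_adj]
      refine ⟨h, ?_⟩
      simp only [Set.mem_singleton_iff, Sym2.eq_iff]
      rintro (⟨-, h2⟩ | ⟨h1, -⟩)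
      · exact q.2.2 h2
      · exact p.2.2 h1
    · exfalso
      apply hpq2
      apply (sym2_val_eq p q s t).mp
      rw [hs, ht, hsw]
      exact h
  -- the pruned tree is a tree
  have hconn' : T'.Connected := by
    rw [SimpleGraph.connected_iff]
    refine ⟨?_, ⟨⟨t1, ht1l, ht1n⟩⟩⟩
    intro sa sb
    exact htrans T T' t1 t2 ht1l ht1n ht2l ht2n (by rw [hnl]) (by rw [hnn])
      (fun x y hx hy hadj => (SimpleGraph.Adj.reachable (Or.inl hadj)))
      (SimpleGraph.Adj.reachable (Or.inr rfl))
      sa.1 sb.1 sa.2 sb.2 (hcub.1.isConnected.preconnected sa.1 sb.1)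
  have hacyc' : T'.IsAcyclic := by
    rw [SimpleGraph.isAcyclic_iff_forall_adj_isBridge]
    intro s t hadj
    rw [SimpleGraph.isBridge_iff]
    intro hre
    have hre' : (T'.deleteEdges {s(s, t)}).Reachable s t := hre
    rcases hadj with hT | hextra
    · exact hbridge s.1 t.1 hT (reach_map _ _ Subtype.val (fmap_old s t) hre')
    · rw [Sym2.eq_iff] at hextra
      rcases hextra with ⟨h1, h2⟩ | ⟨h1, h2⟩
      · have hmap := reach_map _ _ Subtype.val
          (fmap_new s t t1 t2 h1 h2 (by rfl)) hre'
        rw [h1, h2] at hmap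
        have ha2 : (T.deleteEdges {s(t1, n)}).Adj t2 n := by
          rw [SimpleGraph.deleteEdges_adj]
          refine ⟨hadjt2n.symm, ?_⟩
          simp only [Set.mem_singleton_iff, Sym2.eq_iff]
          rintro (⟨h3, -⟩ | ⟨h4, -⟩)
          · exact ht12 h3.symm
          · exact ht2n h4
        exact hbridge t1 n hadjt1n.symm (hmap.trans ha2.reachable)
      · have hmap := reach_map _ _ Subtype.val
          (fmap_new s t t2 t1 h1 h2 (Sym2.eq_swap)) hre'
        rw [h1, h2] at hmap
        have ha2 : (T.deleteEdges {s(t2, n)}).Adj t1 n := by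
          rw [SimpleGraph.deleteEdges_adj]
          refine ⟨hadjt1n.symm, ?_⟩
          simp only [Set.mem_singleton_iff, Sym2.eq_iff]
          rintro (⟨h3, -⟩ | ⟨h4, -⟩)
          · exact ht12 h3
          · exact ht1n h4
        exact hbridge t2 n hadjt2n.symm (hmap.trans ha2.reachable)
  have hcub' : IsCubicTree T' := by
    refine ⟨⟨hconn', hacyc'⟩, ?_⟩
    intro w hw
    rw [hncard w]
    exact hcub.2 w.1 (fun h => hw ((hleaf_iff w).mpr h))
  -- the bijection
  have hbij' : Set.BijOn (fun w : W' => φ w.1) {x | IsTreeLeaf T' x} ↑(V.erase a) := by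
    refine ⟨?_, ?_, ?_⟩
    · intro w hw
      have hwleaf : IsTreeLeaf T w.1 := (hleaf_iff w).mp hw
      have hmem : φ w.1 ∈ ↑V := hbij.1 hwleaf
      simp only [Finset.coe_erase, Set.mem_diff, Set.mem_singleton_iff]
      refine ⟨hmem, ?_⟩
      intro h
      exact w.2.1 (hbij.2.1 hwleaf hlleaf (h.trans hφl.symm))
    · intro w1 h1 w2 h2 heq
      exact Subtype.ext (hbij.2.1 ((hleaf_iff w1).mp h1) ((hleaf_iff w2).mp h2) heq)
    · intro y hy
      simp only [Finset.coe_erase, Set.mem_diff, Set.mem_singleton_iff] at hy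
      obtain ⟨hyV, hya⟩ := hy
      obtain ⟨w, hwleaf, hφw⟩ := hbij.2.2 hyV
      have hwl : w ≠ l := fun h => hya (by rw [← hφw, h, hφl])
      have hwn : w ≠ n := fun h => hnleaf (h ▸ hwleaf)
      exact ⟨⟨w, hwl, hwn⟩, (hleaf_iff _).mpr hwleaf, hφw⟩
  -- the shores
  have shore_old : ∀ s t : W', T.Adj s.1 t.1 →
      treeShore T' (fun w : W' => φ w.1) s t = treeShore T φ s.1 t.1 \ {a} := by
    intro s t hst
    ext y
    rw [mem_treeShore, Set.mem_diff, mem_treeShore, Set.mem_singleton_iff]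
    constructor
    · rintro ⟨w, ⟨hwleaf, hwreach⟩, rfl⟩
      refine ⟨⟨w.1, ⟨(hleaf_iff w).mp hwleaf, ?_⟩, rfl⟩, ?_⟩
      · exact reach_map _ _ Subtype.val (fmap_old s t) hwreach
      · intro he
        exact w.2.1 (hbij.2.1 ((hleaf_iff w).mp hwleaf) hlleaf (he.trans hφl.symm))
    · rintro ⟨⟨w, ⟨hwleaf, hwreach⟩, rfl⟩, hne⟩
      have hwl : w ≠ l := fun h => hne (by rw [h, hφl])
      have hwn : w ≠ n := fun h => hnleaf (h ▸ hwleaf)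
      refine ⟨⟨w, hwl, hwn⟩, ⟨(hleaf_iff _).mpr hwleaf, ?_⟩, rfl⟩
      have hPadj : ∀ (x y' : W) (hx : x ≠ l ∧ x ≠ n) (hy : y' ≠ l ∧ y' ≠ n),
          (T.deleteEdges {s(s.1, t.1)}).Adj x y' →
          (T'.deleteEdges {s(s, t)}).Reachable ⟨x, hx⟩ ⟨y', hy⟩ := by
        intro x y' hx hy hxy
        rw [SimpleGraph.deleteEdges_adj] at hxy
        apply SimpleGraph.Adj.reachable
        rw [SimpleGraph.deleteEdges_adj]
        refine ⟨Or.inl hxy.1, ?_⟩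
        simp only [Set.mem_singleton_iff]
        intro he
        apply hxy.2
        simp only [Set.mem_singleton_iff]
        exact (sym2_val_eq ⟨x, hx⟩ ⟨y', hy⟩ s t).mpr he
      have hPt : (T'.deleteEdges {s(s, t)}).Reachable ⟨t1, ht1l, ht1n⟩ ⟨t2, ht2l, ht2n⟩ := by
        apply SimpleGraph.Adj.reachable
        rw [SimpleGraph.deleteEdges_adj]
        refine ⟨Or.inr rfl, ?_⟩
        simp only [Set.mem_singleton_iff]
        intro he
        exact hnadj (adj_of_sym2_eq T ((sym2_val_eq _ _ s t).mpr he).symm hst)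
      exact htrans (T.deleteEdges {s(s.1, t.1)}) (T'.deleteEdges {s(s, t)}) t1 t2
        ht1l ht1n ht2l ht2n
        (fun z hz => hnl ▸ ((SimpleGraph.deleteEdges_adj.mp hz).1 :
          z ∈ T.neighborSet l))
        (fun z hz => hnn ▸ ((SimpleGraph.deleteEdges_adj.mp hz).1 :
          z ∈ T.neighborSet n))
        hPadj hPt s.1 w s.2 ⟨hwl, hwn⟩ hwreach
  have shore_new : ∀ (s t : W') (u1 u2 : W), s.1 = u1 → t.1 = u2 →
      T.Adj n u1 → T.Adj n u2 → u1 ≠ u2 → ¬ T.Adj u1 u2 →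
      s(u1, u2) = s(t1, t2) →
      treeShore T' (fun w : W' => φ w.1) s t = treeShore T φ u1 n \ {a} := by
    intro s t u1 u2 hs ht hnu1 hnu2 hu12 hnadj' hsw
    ext y
    rw [mem_treeShore, Set.mem_diff, mem_treeShore, Set.mem_singleton_iff]
    constructor
    · rintro ⟨w, ⟨hwleaf, hwreach⟩, rfl⟩
      refine ⟨⟨w.1, ⟨(hleaf_iff w).mp hwleaf, ?_⟩, rfl⟩, ?_⟩
      · have := reach_map _ _ Subtype.val (fmap_new s t u1 u2 hs ht hsw) hwreach
        rwa [hs] at this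
      · intro he
        exact w.2.1 (hbij.2.1 ((hleaf_iff w).mp hwleaf) hlleaf (he.trans hφl.symm))
    · rintro ⟨⟨w, ⟨hwleaf, hwreach⟩, rfl⟩, hne⟩
      have hwl : w ≠ l := fun h => hne (by rw [h, hφl])
      have hwn : w ≠ n := fun h => hnleaf (h ▸ hwleaf)
      have hu1l : u1 ≠ l := by rw [← hs]; exact s.2.1
      have hu1n : u1 ≠ n := by rw [← hs]; exact s.2.2
      have hu2l : u2 ≠ l := by rw [← ht]; exact t.2.1
      have hu2n : u2 ≠ n := by rw [← ht]; exact t.2.2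
      refine ⟨⟨w, hwl, hwn⟩, ⟨(hleaf_iff _).mpr hwleaf, ?_⟩, rfl⟩
      have hPadj : ∀ (x y' : W) (hx : x ≠ l ∧ x ≠ n) (hy : y' ≠ l ∧ y' ≠ n),
          (T.deleteEdges {s(u1, n)}).Adj x y' →
          (T'.deleteEdges {s(s, t)}).Reachable ⟨x, hx⟩ ⟨y', hy⟩ := by
        intro x y' hx hy hxy
        rw [SimpleGraph.deleteEdges_adj] at hxy
        apply SimpleGraph.Adj.reachable
        rw [SimpleGraph.deleteEdges_adj]
        refine ⟨Or.inl hxy.1, ?_⟩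
        simp only [Set.mem_singleton_iff]
        intro he
        have : s(x, y') = s(u1, u2) := by
          rw [← hs, ← ht]
          exact (sym2_val_eq ⟨x, hx⟩ ⟨y', hy⟩ s t).mpr he
        exact hnadj' (adj_of_sym2_eq T this hxy.1)
      have hPt : (T'.deleteEdges {s(s, t)}).Reachable ⟨u2, hu2l, hu2n⟩ ⟨u2, hu2l, hu2n⟩ :=
        SimpleGraph.Reachable.refl _
      have hGnn : (T.deleteEdges {s(u1, n)}).neighborSet n ⊆ {l, u2, u2} := by
        intro z hz
        rw [SimpleGraph.mem_neighborSet, SimpleGraph.deleteEdges_adj] at hz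
        have hz1 : z ∈ T.neighborSet n := hz.1
        rw [hnn] at hz1
        have hzu1 : z ≠ u1 := by
          intro h
          apply hz.2
          simp only [Set.mem_singleton_iff]
          rw [h, Sym2.eq_swap]
        simp only [Set.mem_insert_iff, Set.mem_singleton_iff] at hz1 ⊢
        rw [Sym2.eq_iff] at hsw
        rcases hsw with ⟨e1, e2⟩ | ⟨e1, e2⟩
        · rcases hz1 with h | h | h
          · exact Or.inl h
          · exact absurd (h.trans e1.symm) hzu1
          · exact Or.inr (Or.inl (h.trans e2.symm))
        · rcases hz1 with h | h | h
          · exact Or.inl h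
          · exact Or.inr (Or.inl (h.trans e2.symm))
          · exact absurd (h.trans e1.symm) hzu1
      have hres := htrans (T.deleteEdges {s(u1, n)}) (T'.deleteEdges {s(s, t)}) u2 u2
        hu2l hu2n hu2l hu2n
        (fun z hz => hnl ▸ ((SimpleGraph.deleteEdges_adj.mp hz).1 :
          z ∈ T.neighborSet l))
        hGnn hPadj hPt u1 w ⟨hu1l, hu1n⟩ ⟨hwl, hwn⟩ hwreach
      have hseq : s = (⟨u1, hu1l, hu1n⟩ : W') := Subtype.ext hs
      rw [hseq] at hres ⊢
      exact hres
  refine ⟨W', inferInstance, T', fun w : W' => φ w.1, hcub', hbij', ?_⟩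
  intro s t hadj
  rcases hadj with hT | hextra
  · exact ⟨s.1, t.1, hT, shore_old s t hT⟩
  · rw [Sym2.eq_iff] at hextra
    rcases hextra with ⟨h1, h2⟩ | ⟨h1, h2⟩
    · exact ⟨t1, n, hadjt1n.symm, shore_new s t t1 t2 h1 h2 hadjt1n hadjt2n ht12 hnadj rfl⟩
    · exact ⟨t2, n, hadjt2n.symm, shore_new s t t2 t1 h1 h2 hadjt2n hadjt1n (Ne.symm ht12)
        (fun h => hnadj h.symm) Sym2.eq_swap⟩

end CwAux

namespace CwAux

open SimpleGraph

lemma punit_isCubicTree : IsCubicTree (⊥ : SimpleGraph PUnit) := by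
  constructor
  · constructor
    · constructor
      · intro x y
        rw [Subsingleton.elim x y]
    · exact SimpleGraph.isAcyclic_bot
  · intro t ht
    exfalso
    apply ht
    unfold IsTreeLeaf
    have : (⊥ : SimpleGraph PUnit).neighborSet t = ∅ := by
      ext y
      simp [SimpleGraph.neighborSet]
    rw [this]
    simp

lemma punit_leaf (t : PUnit) : IsTreeLeaf (⊥ : SimpleGraph PUnit) t := by
  unfold IsTreeLeaf
  have : (⊥ : SimpleGraph PUnit).neighborSet t = ∅ := by
    ext y
    simp [SimpleGraph.neighborSet]
  rw [this]
  simp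

lemma bool_top_isCubicTree : IsCubicTree (⊤ : SimpleGraph Bool) := by
  constructor
  · constructor
    · constructor
      · intro x y
        by_cases h : x = y
        · rw [h]
        · exact ((SimpleGraph.top_adj x y).mpr h).reachable
    · intro v c hc
      have h3 := hc.three_le_length
      have hnd : c.support.tail.Nodup := hc.2
      have hlen : c.support.tail.length = c.length := by
        have := SimpleGraph.Walk.length_support c
        simp only [List.length_tail, this]
        omega
      have hle := List.Nodup.length_le_card hnd
      rw [hlen] at hle
      simp only [Fintype.card_bool] at hle
      omega
  · intro t ht
    exfalso
    apply ht
    unfold IsTreeLeaf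
    have : (⊤ : SimpleGraph Bool).neighborSet t = {!t} := by
      ext y
      cases t <;> cases y <;> simp [SimpleGraph.top_adj, SimpleGraph.neighborSet]
    rw [this]
    simp

lemma bool_top_leaf (t : Bool) : IsTreeLeaf (⊤ : SimpleGraph Bool) t := by
  unfold IsTreeLeaf
  have : (⊤ : SimpleGraph Bool).neighborSet t = {!t} := by
    ext y
    cases t <;> cases y <;> simp [SimpleGraph.top_adj, SimpleGraph.neighborSet]
  rw [this]
  simp

/-- The graph obtained by attaching two new pendant vertices to the leaf `l`. -/
def growGraph {W : Type} (T : SimpleGraph W) (l : W) : SimpleGraph (W ⊕ Bool) where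
  Adj x y :=
    (∃ w w', x = Sum.inl w ∧ y = Sum.inl w' ∧ T.Adj w w') ∨
    (x = Sum.inl l ∧ (∃ bb, y = Sum.inr bb)) ∨
    (y = Sum.inl l ∧ (∃ bb, x = Sum.inr bb))
  symm := by
    constructor
    intro x y h
    rcases h with ⟨w, w', rfl, rfl, h⟩ | ⟨h1, h2⟩ | ⟨h1, h2⟩
    · exact Or.inl ⟨w', w, rfl, rfl, h.symm⟩
    · exact Or.inr (Or.inr ⟨h1, h2⟩)
    · exact Or.inr (Or.inl ⟨h1, h2⟩)
  loopless := by
    constructor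
    intro x h
    rcases h with ⟨w, w', h1, h2, h⟩ | ⟨h1, bb, h2⟩ | ⟨h1, bb, h2⟩
    · rw [h1] at h2
      injection h2 with h2
      rw [h2] at h
      exact T.irrefl h
    · rw [h1] at h2
      exact absurd h2 (by simp)
    · rw [h1] at h2
      exact absurd h2 (by simp)

lemma growGraph_nbhd_inr {W : Type} (T : SimpleGraph W) (l : W) (bb : Bool) :
    (growGraph T l).neighborSet (Sum.inr bb) = {Sum.inl l} := by
  ext y
  simp only [SimpleGraph.mem_neighborSet, Set.mem_singleton_iff]
  constructor
  · intro h
    rcases h with ⟨w, w', h1, -, -⟩ | ⟨h1, -⟩ | ⟨h1, -⟩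
    · exact absurd h1 (by simp)
    · exact absurd h1 (by simp)
    · exact h1
  · intro h
    exact Or.inr (Or.inr ⟨h, bb, rfl⟩)

lemma growGraph_nbhd_inl {W : Type} (T : SimpleGraph W) (l : W) (w : W) (hw : w ≠ l) :
    (growGraph T l).neighborSet (Sum.inl w) = Sum.inl '' T.neighborSet w := by
  ext y
  simp only [SimpleGraph.mem_neighborSet, Set.mem_image]
  constructor
  · intro h
    rcases h with ⟨w0, w', h1, h2, h⟩ | ⟨h1, bb, h2⟩ | ⟨h1, bb, h2⟩
    · injection h1 with h1
      rw [← h1] at h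
      exact ⟨w', h, h2.symm⟩
    · injection h1 with h1
      exact absurd h1 hw
    · exact absurd h2 (by simp)
  · rintro ⟨w', h, rfl⟩
    exact Or.inl ⟨w, w', rfl, rfl, h⟩

lemma growGraph_nbhd_l {W : Type} (T : SimpleGraph W) (l : W) :
    (growGraph T l).neighborSet (Sum.inl l) =
      (Sum.inl '' T.neighborSet l) ∪ {Sum.inr false, Sum.inr true} := by
  ext y
  simp only [SimpleGraph.mem_neighborSet, Set.mem_union, Set.mem_image,
    Set.mem_insert_iff, Set.mem_singleton_iff]
  constructor
  · intro h
    rcases h with ⟨w0, w', h1, h2, h⟩ | ⟨-, bb, h2⟩ | ⟨h1, bb, h2⟩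
    · injection h1 with h1
      rw [← h1] at h
      exact Or.inl ⟨w', h, h2.symm⟩
    · cases bb
      · exact Or.inr (Or.inl h2)
      · exact Or.inr (Or.inr h2)
    · exact absurd h2 (by simp)
  · intro h
    rcases h with ⟨w', h, rfl⟩ | rfl | rfl
    · exact Or.inl ⟨l, w', rfl, rfl, h⟩
    · exact Or.inr (Or.inl ⟨rfl, false, rfl⟩)
    · exact Or.inr (Or.inl ⟨rfl, true, rfl⟩)

/-- Every nonempty finite set of naturals carries a cycle-decomposition tree. -/
lemma exists_decomp_data : ∀ (m : ℕ) (V : Finset ℕ), V.card = m → V.Nonempty →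
    ∃ (W : Type) (_ : Fintype W) (T : SimpleGraph W) (φ : W → ℕ),
      IsCubicTree T ∧ Set.BijOn φ {x | IsTreeLeaf T x} ↑V := by
  intro m
  induction m using Nat.strong_induction_on with
  | _ m IH =>
  intro V hVm hVne
  match m, hVm with
  | 0, hVm => exact absurd (Finset.card_eq_zero.mp hVm) (Finset.nonempty_iff_ne_empty.mp hVne)
  | 1, hVm =>
    obtain ⟨p, hp⟩ := Finset.card_eq_one.mp hVm
    refine ⟨PUnit, inferInstance, ⊥, fun _ => p, punit_isCubicTree, ?_⟩
    subst hp
    refine ⟨?_, ?_, ?_⟩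
    · intro w _
      simp
    · intro w _ w' _ _
      exact Subsingleton.elim w w'
    · intro y hy
      simp only [Finset.coe_singleton, Set.mem_singleton_iff] at hy
      exact ⟨PUnit.unit, punit_leaf _, hy.symm⟩
  | 2, hVm =>
    obtain ⟨p, q, hpq, hV⟩ := Finset.card_eq_two.mp hVm
    subst hV
    refine ⟨Bool, inferInstance, ⊤, fun b => if b then p else q, bool_top_isCubicTree, ?_⟩
    refine ⟨?_, ?_, ?_⟩
    · intro b _
      cases b <;> simp
    · intro b1 _ b2 _ heq
      cases b1 <;> cases b2
      · rfl
      · exfalso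
        simp only [if_true, if_false] at heq
        exact hpq heq.symm
      · exfalso
        simp only [if_true, if_false] at heq
        exact hpq heq
      · rfl
    · intro y hy
      simp only [Finset.coe_insert, Finset.coe_singleton, Set.mem_insert_iff,
        Set.mem_singleton_iff] at hy
      rcases hy with rfl | rfl
      · exact ⟨true, bool_top_leaf _, by simp⟩
      · exact ⟨false, bool_top_leaf _, by simp⟩
  | (k+3), hVm =>
    -- inductive step: remove one element, then grow
    obtain ⟨a, ha⟩ := hVne
    have hV'card : (V.erase a).card = k + 2 := by
      rw [Finset.card_erase_of_mem ha, hVm]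
      omega
    have hV'ne : (V.erase a).Nonempty := Finset.card_pos.mp (by omega)
    obtain ⟨W, fin, T, φ, hcub, hbij⟩ := IH (k+2) (by omega) (V.erase a) hV'card hV'ne
    -- pick a leaf and a second leaf
    obtain ⟨b, hb⟩ := hV'ne
    obtain ⟨l, hlleaf, hφl⟩ := hbij.2.2 (Finset.mem_coe.mpr hb)
    obtain ⟨c', hc'⟩ := Finset.card_pos.mp (by
      rw [Finset.card_erase_of_mem hb, hV'card]; omega : 0 < ((V.erase a).erase b).card)
    obtain ⟨hc'b, hc'V⟩ := Finset.mem_erase.mp hc'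
    obtain ⟨m2, hm2leaf, hφm2⟩ := hbij.2.2 (Finset.mem_coe.mpr hc'V)
    have hm2l : m2 ≠ l := fun h => hc'b (by rw [← hφm2, ← hφl, h])
    -- the unique neighbour of l
    obtain ⟨n0, hn0⟩ := neighborSet_nonempty_of_connected T
      (hcub.1.isConnected.preconnected l m2) (Ne.symm hm2l)
    have hnl : T.neighborSet l = {n0} := singleton_nbhd hlleaf hn0
    set W2 := W ⊕ Bool with hW2
    set T2 := growGraph T l with hT2
    have hanotin : a ∉ V.erase a := Finset.notMem_erase a V
    -- neighbour cardinalities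
    have hncard_inr : ∀ bb, (T2.neighborSet (Sum.inr bb)).ncard = 1 := by
      intro bb
      rw [growGraph_nbhd_inr]
      simp
    have hncard_inl : ∀ w : W, w ≠ l →
        (T2.neighborSet (Sum.inl w)).ncard = (T.neighborSet w).ncard := by
      intro w hw
      rw [growGraph_nbhd_inl T l w hw]
      exact Set.ncard_image_of_injective _ Sum.inl_injective
    have hncard_l : (T2.neighborSet (Sum.inl l)).ncard = 3 := by
      rw [growGraph_nbhd_l, hnl]
      rw [Set.image_singleton]
      rw [Set.ncard_union_eq (by
        simp [Set.disjoint_left]) (Set.toFinite _) (Set.toFinite _)]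
      rw [Set.ncard_singleton, Set.ncard_pair (by simp)]
  -- leaves of T2
    have hleaf2_inl : ∀ w : W, w ≠ l → (IsTreeLeaf T2 (Sum.inl w) ↔ IsTreeLeaf T w) := by
      intro w hw
      unfold IsTreeLeaf
      rw [hncard_inl w hw]
    have hleaf2_l : ¬ IsTreeLeaf T2 (Sum.inl l) := by
      unfold IsTreeLeaf
      rw [hncard_l]
      omega
    have hleaf2_inr : ∀ bb, IsTreeLeaf T2 (Sum.inr bb) := by
      intro bb
      unfold IsTreeLeaf
      rw [hncard_inr bb]
    -- connectivity
    have hmapadj : ∀ x y : W, T.Adj x y → T2.Reachable (Sum.inl x) (Sum.inl y) :=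
      fun x y h => SimpleGraph.Adj.reachable
        (show T2.Adj (Sum.inl x) (Sum.inl y) from Or.inl ⟨x, y, rfl, rfl, h⟩)
    have hreach_inl : ∀ x y : W, T.Reachable x y → T2.Reachable (Sum.inl x) (Sum.inl y) :=
      fun x y h => reach_map T T2 Sum.inl hmapadj h
    have hconn2 : T2.Connected := by
      rw [SimpleGraph.connected_iff]
      refine ⟨?_, ⟨Sum.inl l⟩⟩
      intro x y
      have hto : ∀ z : W2, T2.Reachable z (Sum.inl l) := by
        intro z
        cases z with
        | inl w => exact hreach_inl w l (hcub.1.isConnected.preconnected w l)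
        | inr bb =>
          exact SimpleGraph.Adj.reachable (show T2.Adj (Sum.inr bb) (Sum.inl l) from
            Or.inr (Or.inr ⟨rfl, bb, rfl⟩))
      exact (hto x).trans (hto y).symm
    -- acyclicity via bridges
    have hbridgeT : ∀ x y : W, T.Adj x y → ¬ (T.deleteEdges {s(x, y)}).Reachable x y := by
      intro x y hxy
      have hb := (SimpleGraph.isAcyclic_iff_forall_adj_isBridge.mp hcub.1.IsAcyclic) hxy
      rw [SimpleGraph.isBridge_iff] at hb
      exact hb
    have hacyc2 : T2.IsAcyclic := by
      rw [SimpleGraph.isAcyclic_iff_forall_adj_isBridge]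
      intro x y hadj
      rw [SimpleGraph.isBridge_iff]
      intro hre
      have hre' : (T2.deleteEdges {s(x, y)}).Reachable x y := hre
      rcases hadj with ⟨w, w', hx, hy, hww⟩ | ⟨hx, bb, hy⟩ | ⟨hy, bb, hx⟩
      · -- an original edge
        subst hx; subst hy
        set g : W2 → W := Sum.elim id (fun _ => l) with hg
        have hmap : ∀ p q : W2, (T2.deleteEdges {s(Sum.inl w, Sum.inl w')}).Adj p q →
            (T.deleteEdges {s(w, w')}).Reachable (g p) (g q) := by
          intro p q hpq
          rw [SimpleGraph.deleteEdges_adj] at hpq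
          obtain ⟨hpq1, hpq2⟩ := hpq
          simp only [Set.mem_singleton_iff] at hpq2
          rcases hpq1 with ⟨p0, q0, rfl, rfl, h⟩ | ⟨rfl, bb0, rfl⟩ | ⟨rfl, bb0, rfl⟩
          · apply SimpleGraph.Adj.reachable
            rw [SimpleGraph.deleteEdges_adj]
            refine ⟨h, ?_⟩
            simp only [Set.mem_singleton_iff]
            intro he
            apply hpq2
            have := congrArg (Sym2.map (Sum.inl : W → W2)) he
            simpa [hg] using this
          · exact SimpleGraph.Reachable.refl _
          · exact SimpleGraph.Reachable.refl _
        have := reach_map _ _ g hmap hre'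
        simp only [hg, Sum.elim_inl, id] at this
        exact hbridgeT w w' hww this
      · -- a pendant edge
        subst hx; subst hy
        have hiso : (T2.deleteEdges {s(Sum.inl l, Sum.inr bb)}).neighborSet (Sum.inr bb)
            = ∅ := by
          ext z
          simp only [SimpleGraph.mem_neighborSet, SimpleGraph.deleteEdges_adj,
            Set.mem_singleton_iff, Set.mem_empty_iff_false, iff_false, not_and]
          intro hz
          have hzl : z = Sum.inl l := by
            have : z ∈ T2.neighborSet (Sum.inr bb) := hz
            rw [growGraph_nbhd_inr] at this
            simpa using this
          rw [hzl, Sym2.eq_swap]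
          simp
        exact unreachable_of_isolated _ hiso (by simp) hre'.symm
      · -- a pendant edge, other orientation
        subst hy; subst hx
        have hiso : (T2.deleteEdges {s(Sum.inr bb, Sum.inl l)}).neighborSet (Sum.inr bb)
            = ∅ := by
          ext z
          simp only [SimpleGraph.mem_neighborSet, SimpleGraph.deleteEdges_adj,
            Set.mem_singleton_iff, Set.mem_empty_iff_false, iff_false, not_and]
          intro hz
          have hzl : z = Sum.inl l := by
            have : z ∈ T2.neighborSet (Sum.inr bb) := hz
            rw [growGraph_nbhd_inr] at this
            simpa using this
          rw [hzl]
          simp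
        exact unreachable_of_isolated _ hiso (by simp) hre'
    have hcub2 : IsCubicTree T2 := by
      refine ⟨⟨hconn2, hacyc2⟩, ?_⟩
      intro t ht
      cases t with
      | inl w =>
        by_cases hw : w = l
        · rw [hw]; exact hncard_l
        · rw [hncard_inl w hw]
          exact hcub.2 w (fun h => ht ((hleaf2_inl w hw).mpr h))
      | inr bb => exact absurd (hleaf2_inr bb) ht
    -- the new bijection
    refine ⟨W2, inferInstance, T2, Sum.elim φ (fun bb => if bb then a else φ l), hcub2, ?_, ?_, ?_⟩
    · -- maps to
      intro t ht
      simp only [Set.mem_setOf_eq] at ht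
      cases t with
      | inl w =>
        have hw : w ≠ l := fun h => hleaf2_l (h ▸ ht)
        have hwleaf : IsTreeLeaf T w := (hleaf2_inl w hw).mp ht
        have := hbij.1 hwleaf
        simp only [Finset.coe_erase, Set.mem_diff] at this
        simpa using this.1
      | inr bb =>
        cases bb
        · have := hbij.1 hlleaf
          simp only [Finset.coe_erase, Set.mem_diff] at this
          simpa using this.1
        · simpa using ha
    · -- injective
      intro t1 h1 t2 h2 heq
      simp only [Set.mem_setOf_eq] at h1 h2
      have hval : ∀ (t : W2), IsTreeLeaf T2 t →
          (∃ w, t = Sum.inl w ∧ w ≠ l ∧ IsTreeLeaf T w ∧ Sum.elim φ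
            (fun bb => if bb then a else φ l) t = φ w) ∨
          (t = Sum.inr false) ∨ (t = Sum.inr true) := by
        intro t ht
        cases t with
        | inl w =>
          have hw : w ≠ l := fun h => hleaf2_l (h ▸ ht)
          exact Or.inl ⟨w, rfl, hw, (hleaf2_inl w hw).mp ht, by simp⟩
        | inr bb => cases bb
                    · exact Or.inr (Or.inl rfl)
                    · exact Or.inr (Or.inr rfl)
      have hane : ∀ w : W, IsTreeLeaf T w → φ w ≠ a := by
        intro w hw h
        have := hbij.1 hw
        simp only [Finset.coe_erase, Set.mem_diff, Set.mem_singleton_iff] at this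
        exact this.2 h
      rcases hval t1 h1 with ⟨w1, rfl, hw1l, hw1leaf, he1⟩ | rfl | rfl <;>
        rcases hval t2 h2 with ⟨w2, rfl, hw2l, hw2leaf, he2⟩ | rfl | rfl <;>
          simp only [Sum.elim_inl, Sum.elim_inr, if_true, if_false] at heq
      · exact congrArg Sum.inl (hbij.2.1 hw1leaf hw2leaf heq)
      · exact absurd (hbij.2.1 hw1leaf hlleaf heq) hw1l
      · exact absurd heq (hane w1 hw1leaf)
      · exact absurd (hbij.2.1 hlleaf hw2leaf heq) (Ne.symm hw2l)
      · rfl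
      · exact absurd heq (hane l hlleaf)
      · exact absurd heq.symm (hane w2 hw2leaf)
      · exact absurd heq.symm (hane l hlleaf)
      · rfl
    · -- surjective
      intro y hy
      simp only [Finset.mem_coe] at hy
      by_cases hya : y = a
      · exact ⟨Sum.inr true, hleaf2_inr true, by simp [hya]⟩
      by_cases hyb : y = φ l
      · exact ⟨Sum.inr false, hleaf2_inr false, by simp [hyb]⟩
      · have hy' : y ∈ ↑(V.erase a) :=
          Finset.mem_coe.mpr (Finset.mem_erase.mpr ⟨hya, hy⟩)
        obtain ⟨w, hwleaf, hφw⟩ := hbij.2.2 hy'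
        have hwl : w ≠ l := fun h => hyb (by rw [← hφw, h])
        exact ⟨Sum.inl w, (hleaf2_inl w hwl).mpr hwleaf, by simpa using hφw⟩

end CwAux

namespace CwAux

lemma width_le_of_shores {D : Dgraph} (c : CycleDecomp D) (m : ℕ)
    (h : ∀ s t : c.W, c.T.Adj s t → D.cycPorosity (treeShore c.T c.φ s t) ≤ m) :
    c.width ≤ m := by
  unfold CycleDecomp.width
  apply Finset.sup_le
  intro p _
  by_cases hadj : c.T.Adj p.1 p.2
  · rw [if_pos hadj]
    exact h p.1 p.2 hadj
  · rw [if_neg hadj]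
    exact Nat.zero_le m

lemma porosity_le_width {D : Dgraph} (c : CycleDecomp D) {s t : c.W} (h : c.T.Adj s t) :
    D.cycPorosity (treeShore c.T c.φ s t) ≤ c.width := by
  letI := c.fin
  unfold CycleDecomp.width
  have hle := Finset.le_sup (f := fun p : c.W × c.W =>
    if c.T.Adj p.1 p.2 then D.cycPorosity (treeShore c.T c.φ p.1 p.2) else 0)
    (Finset.mem_univ (s, t))
  refine le_trans (le_of_eq ?_) hle
  simp [h]

lemma exists_decomp (D : Dgraph) (h : D.verts.Nonempty) : Nonempty (CycleDecomp D) := by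
  obtain ⟨W, fin, T, φ, hcub, hbij⟩ := exists_decomp_data D.verts.card D.verts rfl h
  exact ⟨⟨W, fin, T, hcub, φ, hbij⟩⟩

lemma cycPorosity_empty (D : Dgraph) : D.cycPorosity (∅ : Set ℕ) = 0 := by
  refine Nat.le_antisymm ?_ (Nat.zero_le _)
  apply cycPorosity_le
  intro F _ _
  have hcut : D.cutArcs (∅ : Set ℕ) = ∅ := by
    ext p
    simp [Dgraph.cutArcs]
  rw [hcut]
  simp

lemma treeShore_subset {D : Dgraph} (c : CycleDecomp D) (s t : c.W) :
    treeShore c.T c.φ s t ⊆ ↑D.verts := by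
  rintro b ⟨w, ⟨hleaf, -⟩, rfl⟩
  exact c.bij.1 hleaf

lemma width_eq_zero_of_verts_empty {D : Dgraph} (h : D.verts = ∅) (c : CycleDecomp D) :
    c.width = 0 := by
  apply Nat.le_zero.mp
  apply width_le_of_shores
  intro s t _
  have hsub := treeShore_subset c s t
  rw [h] at hsub
  simp only [Finset.coe_empty] at hsub
  rw [Set.subset_empty_iff.mp hsub, cycPorosity_empty]

lemma cycleWidth_eq_zero_of_empty {D : Dgraph} (h : D.verts = ∅) : cycleWidth D = 0 := by
  unfold cycleWidth
  by_cases hne : {k | ∃ c : CycleDecomp D, c.width = k}.Nonempty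
  · obtain ⟨k, c, hc⟩ := hne
    apply Nat.le_zero.mp
    apply Nat.sInf_le
    exact ⟨c, width_eq_zero_of_verts_empty h c⟩
  · rw [Set.not_nonempty_iff_eq_empty.mp hne]
    exact Nat.sInf_empty

lemma exists_decomp_width_zero {D : Dgraph} {p : ℕ} (h : D.verts = {p}) :
    ∃ c : CycleDecomp D, c.width = 0 := by
  refine ⟨⟨PUnit, inferInstance, ⊥, punit_isCubicTree, fun _ => p, ?_⟩, ?_⟩
  · rw [h]
    refine ⟨fun w _ => by simp, fun w _ w' _ _ => Subsingleton.elim w w', fun y hy => ?_⟩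
    refine ⟨PUnit.unit, punit_leaf _, ?_⟩
    simp only [Finset.coe_singleton, Set.mem_singleton_iff] at hy
    exact hy.symm
  · apply Nat.le_zero.mp
    apply width_le_of_shores
    intro s t hadj
    exact hadj.elim

lemma cycleWidth_le_glue {D E : Dgraph}
    (h₀ : D.verts = ∅ → E.verts = ∅)
    (hstep : E.verts.Nonempty → ∀ c : CycleDecomp D, ∃ c' : CycleDecomp E,
      c'.width ≤ c.width) :
    cycleWidth E ≤ cycleWidth D := by
  by_cases hE : E.verts = ∅
  · rw [cycleWidth_eq_zero_of_empty hE]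
    exact Nat.zero_le _
  · have hEne : E.verts.Nonempty := Finset.nonempty_iff_ne_empty.mpr hE
    have hD : D.verts.Nonempty := by
      rcases Finset.eq_empty_or_nonempty D.verts with h | h
      · exact absurd (h₀ h) hE
      · exact h
    have hne : {k | ∃ c : CycleDecomp D, c.width = k}.Nonempty := by
      obtain ⟨c⟩ := exists_decomp D hD
      exact ⟨c.width, c, rfl⟩
    obtain ⟨c, hc⟩ := Nat.sInf_mem hne
    obtain ⟨c', hc'⟩ := hstep hEne c
    calc cycleWidth E ≤ c'.width := Nat.sInf_le ⟨c', rfl⟩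
      _ ≤ c.width := hc'
      _ = cycleWidth D := hc

lemma step_arcs (D E : Dgraph) (hv : E.verts = D.verts) (ha : E.arcs ⊆ D.arcs)
    (c : CycleDecomp D) : ∃ c' : CycleDecomp E, c'.width ≤ c.width := by
  refine ⟨⟨c.W, c.fin, c.T, c.cubic, c.φ, by rw [hv]; exact c.bij⟩, ?_⟩
  apply width_le_of_shores
  intro s t hadj
  exact le_trans (cycPorosity_le_of_arcs_subset ha _) (porosity_le_width c hadj)

lemma step_erase (D E : Dgraph) (a : ℕ) (hv : E.verts = D.verts.erase a)
    (ha : E.arcs = D.arcs) (hisol : ∀ p ∈ D.arcs, p.1 ≠ a ∧ p.2 ≠ a)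
    (hne : E.verts.Nonempty) (c : CycleDecomp D) :
    ∃ c' : CycleDecomp E, c'.width ≤ c.width := by
  by_cases haD : a ∈ D.verts
  · by_cases hcard : 3 ≤ D.verts.card
    · letI := c.fin
      obtain ⟨W', fin', T', φ', hcub', hbij', hshore⟩ :=
        prune c.T c.cubic c.φ D.verts c.bij hcard a haD
      refine ⟨⟨W', fin', T', hcub', φ', by rw [hv]; exact hbij'⟩, ?_⟩
      apply width_le_of_shores
      intro s t hadj
      obtain ⟨s₀, t₀, hadj₀, hsh⟩ := hshore s t hadj
      have hgoal : E.cycPorosity (treeShore T' φ' s t) ≤ c.width := by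
        rw [hsh, cycPorosity_eq_of_arcs_eq ha]
        have hcongr : D.cycPorosity (treeShore c.T c.φ s₀ t₀ \ {a})
            = D.cycPorosity (treeShore c.T c.φ s₀ t₀) := by
          apply cycPorosity_congr
          intro p hp
          have h' := hisol p hp
          constructor
          · simp [Set.mem_diff, h'.1]
          · simp [Set.mem_diff, h'.2]
        rw [hcongr]
        exact porosity_le_width c hadj₀
      exact hgoal
    · have hcard1 : E.verts.card = 1 := by
        have h1 : 0 < E.verts.card := Finset.card_pos.mpr hne
        have h2 : E.verts.card = D.verts.card - 1 := by
          rw [hv, Finset.card_erase_of_mem haD]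
        omega
      obtain ⟨p, hp⟩ := Finset.card_eq_one.mp hcard1
      obtain ⟨c', hc'⟩ := exists_decomp_width_zero hp
      exact ⟨c', hc' ▸ Nat.zero_le _⟩
  · have hv' : E.verts = D.verts := by rw [hv, Finset.erase_eq_of_notMem haD]
    exact step_arcs D E hv' (by rw [ha]) c

lemma step_butterfly_core (D : Dgraph) (u v x z p₀ : ℕ)
    (huv : (u, v) ∈ D.arcs)
    (hcase : (z = v ∧ ∀ w, (u, w) ∈ D.arcs → w = v) ∨ (z = u ∧ ∀ w, (w, v) ∈ D.arcs → w = u))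
    (hx : x ∉ (D.verts.erase u).erase v)
    (hp₀ : p₀ = u ∨ p₀ = v) (hz : z = u ∨ z = v) (hzp : z ≠ p₀)
    (hcard : 3 ≤ D.verts.card)
    (c : CycleDecomp D) :
    ∃ c' : CycleDecomp (butterflyContract D u v x), c'.width ≤ c.width := by
  letI := c.fin
  have huvne : u ≠ v := D.no_loops _ huv
  have hu : u ∈ D.verts := (D.arcs_mem _ huv).1
  have hvm : v ∈ D.verts := (D.arcs_mem _ huv).2
  have hp₀mem : p₀ ∈ D.verts := by rcases hp₀ with rfl | rfl <;> assumption
  have hzmem : z ∈ D.verts := by rcases hz with rfl | rfl <;> assumption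
  have hcover : ∀ w : ℕ, (w = u ∨ w = v) ↔ (w = p₀ ∨ w = z) := by
    intro w
    rcases hp₀ with rfl | rfl <;> rcases hz with rfl | rfl <;>
      first
        | exact absurd rfl hzp
        | tauto
  obtain ⟨W', fin', T', φ', hcub', hbij', hshore⟩ :=
    prune c.T c.cubic c.φ D.verts c.bij hcard p₀ hp₀mem
  set g : ℕ → ℕ := fun w => if w = u ∨ w = v then x else w with hg
  have hgz : g z = x := by
    simp only [hg]
    rw [if_pos ((hcover z).mpr (Or.inr rfl))]
  have hgo : ∀ w, w ≠ u → w ≠ v → g w = w := by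
    intro w h1 h2
    simp only [hg]
    rw [if_neg (by tauto)]
  have hDverts : (butterflyContract D u v x).verts = (D.verts.erase u).erase v ∪ {x} := rfl
  have hgbij : Set.BijOn g ↑(D.verts.erase p₀) ↑((butterflyContract D u v x).verts) := by
    refine ⟨?_, ?_, ?_⟩
    · intro w hw
      simp only [Finset.coe_erase, Set.mem_diff, Set.mem_singleton_iff] at hw
      by_cases hwuv : w = u ∨ w = v
      · have hwz : w = z := by
          rcases (hcover w).mp hwuv with h | h
          · exact absurd h hw.2
          · exact h
        have : g w = x := by rw [hwz]; exact hgz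
        rw [this]
        simp [hDverts]
      · push_neg at hwuv
        rw [hgo w hwuv.1 hwuv.2]
        simp only [hDverts, Finset.coe_union, Set.mem_union, Finset.coe_erase,
          Set.mem_diff, Set.mem_singleton_iff]
        exact Or.inl ⟨⟨hw.1, hwuv.1⟩, hwuv.2⟩
    · intro w1 hw1 w2 hw2 heq
      simp only [Finset.coe_erase, Set.mem_diff, Set.mem_singleton_iff] at hw1 hw2
      have hxne : ∀ w, w ∈ D.verts → ¬ (w = u ∨ w = v) → w ≠ x := by
        intro w hwV hwuv hwx
        apply hwuv
        have : x ∈ D.verts := hwx ▸ hwV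
        rcases x_cases hx this with h | h
        · exact Or.inl (hwx.trans h)
        · exact Or.inr (hwx.trans h)
      by_cases h1 : w1 = u ∨ w1 = v <;> by_cases h2 : w2 = u ∨ w2 = v
      · have e1 : w1 = z := by
          rcases (hcover w1).mp h1 with h | h
          · exact absurd h hw1.2
          · exact h
        have e2 : w2 = z := by
          rcases (hcover w2).mp h2 with h | h
          · exact absurd h hw2.2
          · exact h
        rw [e1, e2]
      · exfalso
        push_neg at h2
        rw [hgo w2 h2.1 h2.2] at heq
        have : g w1 = x := by simp only [hg]; rw [if_pos h1]
        rw [this] at heq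
        exact hxne w2 hw2.1 (by tauto) heq.symm
      · exfalso
        push_neg at h1
        rw [hgo w1 h1.1 h1.2] at heq
        have : g w2 = x := by simp only [hg]; rw [if_pos h2]
        rw [this] at heq
        exact hxne w1 hw1.1 (by tauto) heq
      · push_neg at h1 h2
        rw [hgo w1 h1.1 h1.2, hgo w2 h2.1 h2.2] at heq
        exact heq
    · intro y hy
      simp only [Finset.mem_coe, hDverts, Finset.mem_union, Finset.mem_erase,
        Finset.mem_singleton] at hy
      rcases hy with ⟨hyv, hyu, hyV⟩ | rfl
      · refine ⟨y, ?_, hgo y hyu hyv⟩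
        simp only [Finset.coe_erase, Set.mem_diff, Set.mem_singleton_iff]
        refine ⟨hyV, ?_⟩
        intro h
        rcases hp₀ with rfl | rfl
        · exact hyu h
        · exact hyv h
      · refine ⟨z, ?_, hgz⟩
        simp only [Finset.coe_erase, Set.mem_diff, Set.mem_singleton_iff]
        exact ⟨hzmem, hzp⟩
  refine ⟨⟨W', fin', T', hcub', fun w => g (φ' w), ?_⟩, ?_⟩
  · exact hgbij.comp hbij'
  · apply width_le_of_shores
    intro s t hadj
    obtain ⟨s₀, t₀, hadj₀, hsh⟩ := hshore s t hadj
    have himg : treeShore T' (fun w => g (φ' w)) s t = g '' treeShore T' φ' s t := by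
      ext y
      constructor
      · rintro ⟨w, hw, rfl⟩
        exact ⟨φ' w, ⟨w, hw, rfl⟩, rfl⟩
      · rintro ⟨z', ⟨w, hw, rfl⟩, rfl⟩
        exact ⟨w, hw, rfl⟩
    have hgoal : (butterflyContract D u v x).cycPorosity
        (treeShore T' (fun w => g (φ' w)) s t) ≤ c.width := by
      rw [himg, hsh]
      have hS₀sub : treeShore c.T c.φ s₀ t₀ ⊆ ↑D.verts := treeShore_subset c s₀ t₀
      refine le_trans (cycPorosity_contract D u v x z huv hcase hx
        (g '' (treeShore c.T c.φ s₀ t₀ \ {p₀})) (treeShore c.T c.φ s₀ t₀) ?_ ?_)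
        (porosity_le_width c hadj₀)
      · constructor
        · rintro ⟨w, ⟨hwS, hwp⟩, hgw⟩
          simp only [Set.mem_singleton_iff] at hwp
          by_cases hwuv : w = u ∨ w = v
          · have hwz : w = z := by
              rcases (hcover w).mp hwuv with h | h
              · exact absurd h hwp
              · exact h
            rwa [← hwz]
          · exfalso
            push_neg at hwuv
            rw [hgo w hwuv.1 hwuv.2] at hgw
            have hxV : x ∈ D.verts := hgw ▸ (hS₀sub hwS)
            rcases x_cases hx hxV with h | h
            · exact hwuv.1 (hgw.trans h)
            · exact hwuv.2 (hgw.trans h)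
        · intro hzS
          exact ⟨z, ⟨hzS, by simpa using hzp⟩, hgz⟩
      · intro w hwu hwv hwx
        constructor
        · rintro ⟨w0, ⟨hw0S, hw0p⟩, hgw0⟩
          by_cases hw0uv : w0 = u ∨ w0 = v
          · exfalso
            have : g w0 = x := by simp only [hg]; rw [if_pos hw0uv]
            exact hwx (hgw0.symm.trans this)
          · push_neg at hw0uv
            rw [hgo w0 hw0uv.1 hw0uv.2] at hgw0
            rwa [← hgw0]
        · intro hwS
          refine ⟨w, ⟨hwS, ?_⟩, hgo w hwu hwv⟩
          simp only [Set.mem_singleton_iff]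
          intro h
          rcases hp₀ with rfl | rfl
          · exact hwu h
          · exact hwv h
    exact hgoal

lemma step_butterfly (D : Dgraph) (u v x : ℕ) (hbc : D.ButterflyContractible u v)
    (hx : x ∉ (D.verts.erase u).erase v) (c : CycleDecomp D) :
    ∃ c' : CycleDecomp (butterflyContract D u v x), c'.width ≤ c.width := by
  obtain ⟨huv, hcase0⟩ := hbc
  have huvne : u ≠ v := D.no_loops _ huv
  by_cases hcard : 3 ≤ D.verts.card
  · rcases hcase0 with hout | hin
    · exact step_butterfly_core D u v x v u huv (Or.inl ⟨rfl, hout⟩) hx (Or.inl rfl)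
        (Or.inr rfl) (Ne.symm huvne) hcard c
    · exact step_butterfly_core D u v x u v huv (Or.inr ⟨rfl, hin⟩) hx (Or.inr rfl)
        (Or.inl rfl) huvne hcard c
  · have hsub : ({u, v} : Finset ℕ) ⊆ D.verts := by
      intro w hw
      simp only [Finset.mem_insert, Finset.mem_singleton] at hw
      rcases hw with rfl | rfl
      · exact (D.arcs_mem _ huv).1
      · exact (D.arcs_mem _ huv).2
    have hc2 : ({u, v} : Finset ℕ).card = 2 := by
      rw [Finset.card_insert_of_notMem (by simp [huvne]), Finset.card_singleton]
    have hverts : D.verts = {u, v} := by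
      have := Finset.eq_of_subset_of_card_le hsub (by omega)
      exact this.symm
    have hE : (butterflyContract D u v x).verts = {x} := by
      show (D.verts.erase u).erase v ∪ {x} = {x}
      rw [hverts]
      have h1 : ({u, v} : Finset ℕ).erase u = {v} := by
        rw [show ({u, v} : Finset ℕ) = insert u {v} from rfl,
          Finset.erase_insert (by simp [huvne])]
      rw [h1, Finset.erase_singleton, Finset.empty_union]
    obtain ⟨c', hc'⟩ := exists_decomp_width_zero hE
    exact ⟨c', hc' ▸ Nat.zero_le _⟩

lemma cw_remove_verts : ∀ (k : ℕ) (D E : Dgraph), E.arcs = D.arcs → E.verts ⊆ D.verts →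
    (D.verts \ E.verts).card = k → cycleWidth E ≤ cycleWidth D := by
  intro k
  induction k with
  | zero =>
    intro D E ha hv hk
    have hvv : D.verts = E.verts := by
      have h1 : D.verts \ E.verts = ∅ := Finset.card_eq_zero.mp hk
      have h2 : D.verts ⊆ E.verts := by
        intro w hw
        by_contra hww
        have : w ∈ D.verts \ E.verts := Finset.mem_sdiff.mpr ⟨hw, hww⟩
        rw [h1] at this
        exact absurd this (Finset.notMem_empty w)
      exact Finset.Subset.antisymm h2 hv
    have hED : E = D := by
      obtain ⟨ev, ea, em, en⟩ := E
      obtain ⟨dv, da, dm, dn⟩ := D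
      simp only at ha hvv ⊢
      subst ha
      subst hvv
      rfl
    rw [hED]
  | succ k ih =>
    intro D E ha hv hk
    have hne : (D.verts \ E.verts).Nonempty := Finset.card_pos.mp (by omega)
    obtain ⟨a, haa⟩ := hne
    obtain ⟨haD, haE⟩ := Finset.mem_sdiff.mp haa
    have hisol : ∀ p ∈ D.arcs, p.1 ≠ a ∧ p.2 ≠ a := by
      intro p hp
      have hmem := E.arcs_mem p (ha ▸ hp)
      constructor
      · intro h
        exact haE (h ▸ hmem.1)
      · intro h
        exact haE (h ▸ hmem.2)
    set E₂ : Dgraph := ⟨D.verts.erase a, D.arcs,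
      fun p hp => ⟨Finset.mem_erase.mpr ⟨(hisol p hp).1, (D.arcs_mem p hp).1⟩,
        Finset.mem_erase.mpr ⟨(hisol p hp).2, (D.arcs_mem p hp).2⟩⟩,
      D.no_loops⟩ with hE₂
    have h1 : cycleWidth E ≤ cycleWidth E₂ := by
      apply ih E₂ E
      · rw [ha]
      · intro w hw
        exact Finset.mem_erase.mpr ⟨fun h => haE (h ▸ hw), hv hw⟩
      · have : E₂.verts \ E.verts = (D.verts \ E.verts).erase a := by
          ext w
          simp only [hE₂, Finset.mem_sdiff, Finset.mem_erase]
          tauto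
        rw [this, Finset.card_erase_of_mem haa, hk]
        omega
    have h2 : cycleWidth E₂ ≤ cycleWidth D := by
      apply cycleWidth_le_glue
      · intro h
        show D.verts.erase a = ∅
        rw [h]
        exact Finset.erase_empty a
      · intro hne2 c
        exact step_erase D E₂ a rfl rfl hisol hne2 c
    exact le_trans h1 h2

lemma cw_subgraph (S D : Dgraph) (h : S.IsSubgraph D) : cycleWidth S ≤ cycleWidth D := by
  set D₁ : Dgraph := ⟨D.verts, S.arcs,
    fun p hp => ⟨h.1 (S.arcs_mem p hp).1, h.1 (S.arcs_mem p hp).2⟩,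
    S.no_loops⟩ with hD₁
  have h1 : cycleWidth S ≤ cycleWidth D₁ :=
    cw_remove_verts (D₁.verts \ S.verts).card D₁ S rfl h.1 rfl
  have h2 : cycleWidth D₁ ≤ cycleWidth D := by
    apply cycleWidth_le_glue
    · intro hh
      exact hh
    · intro _ c
      exact step_arcs D D₁ rfl h.2 c
  exact le_trans h1 h2

lemma cw_butterfly (D E : Dgraph) (h : ButterflyStep D E) :
    cycleWidth E ≤ cycleWidth D := by
  obtain ⟨u, v, x, hbc, hx, rfl⟩ := h
  apply cycleWidth_le_glue
  · intro h0
    exfalso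
    have := (D.arcs_mem _ hbc.1).1
    rw [h0] at this
    exact absurd this (Finset.notMem_empty u)
  · intro _ c
    exact step_butterfly D u v x hbc hx c

end CwAux

/-- Cyclewidth is monotone under butterfly minors. -/
theorem cycleWidth_le_of_isButterflyMinor (D D' : Dgraph) (h : IsButterflyMinor D' D) :
    cycleWidth D' ≤ cycleWidth D := by
  obtain ⟨S, hsub, hrtg⟩ := h
  have h1 : cycleWidth D' ≤ cycleWidth S := by
    induction hrtg with
    | refl => exact le_rfl
    | tail _ hstep ih => exact le_trans (CwAux.cw_butterfly _ _ hstep) ih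
  exact le_trans h1 (CwAux.cw_subgraph S D hsub)
end

section
/- Let T be a tree in which every inner vertex has degree exactly 3, let V be a finite set with |V| ≥ 3, and let φ be a bijection from the leaves of T to V. Then T contains an edge e such that the bipartition (X, V − X) of V induced by the two components of T − e (via φ) is balanced, i.e., |X| ≥ |V|/3 and |V − X| ≥ |V|/3. -/
open scoped Classical

/-! ### Auxiliary lemmas -/

set_option linter.unusedSectionVars false
set_option maxHeartbeats 1000000

section Aux
variable {W : Type} [Fintype W] {T : SimpleGraph W}

/-- The side of an edge `uv`: vertices reachable from `u` after deleting the edge. -/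
def eside (T : SimpleGraph W) (u v : W) : Set W :=
  {x | (T.deleteEdges {s(u, v)}).Reachable u x}

lemma aux_bridge (hT : T.IsTree) {u v : W} (h : T.Adj u v) :
    ¬ (T.deleteEdges {s(u,v)}).Reachable u v := by
  have hb := (SimpleGraph.isAcyclic_iff_forall_edge_isBridge.mp hT.IsAcyclic)
    (e := s(u,v)) (T.mem_edgeSet.mpr h)
  exact SimpleGraph.isBridge_iff.mp hb

lemma aux_avoid_mp (hT : T.IsTree) {u v x : W} (h : T.Adj u v)
    (hr : x ∈ eside T u v) : ∃ w : T.Walk u x, v ∉ w.support := by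
  obtain ⟨p⟩ := hr
  have hv : v ∉ p.support := by
    intro hv
    exact aux_bridge hT h ⟨p.takeUntil v hv⟩
  refine ⟨p.transfer T ?_, ?_⟩
  · intro e he
    have := p.edges_subset_edgeSet he
    rw [SimpleGraph.edgeSet_deleteEdges] at this
    exact this.1
  · rwa [SimpleGraph.Walk.support_transfer]

lemma aux_avoid_mpr {u v x : W} (w : T.Walk u x) (hv : v ∉ w.support) :
    x ∈ eside T u v := by
  refine ⟨w.transfer _ ?_⟩
  intro e he
  rw [SimpleGraph.edgeSet_deleteEdges]
  refine ⟨w.edges_subset_edgeSet he, ?_⟩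
  simp only [Set.mem_singleton_iff]
  rintro rfl
  exact hv (w.snd_mem_support_of_mem_edges he)

lemma aux_disj (hT : T.IsTree) {u v : W} (h : T.Adj u v) {x : W}
    (h1 : x ∈ eside T u v) (h2 : x ∈ eside T v u) : False := by
  have hs : s(v,u) = s(u,v) := Sym2.eq_swap
  rw [eside, hs] at h2
  exact aux_bridge hT h (h1.trans h2.symm)

lemma aux_self_mem (u v : W) : u ∈ eside T u v := SimpleGraph.Reachable.refl u

lemma aux_cover (hT : T.IsTree) {u v : W} (h : T.Adj u v) (x : W) :
    x ∈ eside T u v ∨ x ∈ eside T v u := by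
  have step : ∀ y z : W, T.Adj y z → (y ∈ eside T u v ∨ y ∈ eside T v u) →
      (z ∈ eside T u v ∨ z ∈ eside T v u) := by
    intro y z hyz hy
    by_cases he : s(y,z) = s(u,v)
    · rw [Sym2.eq_iff] at he
      rcases he with ⟨rfl, rfl⟩ | ⟨rfl, rfl⟩
      · right; exact aux_self_mem _ _
      · left; exact aux_self_mem _ _
    · have hs : s(v,u) = s(u,v) := Sym2.eq_swap
      rcases hy with hy | hy
      · left
        exact hy.trans (SimpleGraph.Adj.reachable (by simp [hyz, he]))
      · right
        refine hy.trans (SimpleGraph.Adj.reachable ?_)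
        simp only [SimpleGraph.deleteEdges_adj]
        exact ⟨hyz, by rw [hs]; simpa using he⟩
  obtain ⟨p⟩ := hT.isConnected.preconnected u x
  have main : ∀ (a b : W) (w : T.Walk a b),
      (a ∈ eside T u v ∨ a ∈ eside T v u) → (b ∈ eside T u v ∨ b ∈ eside T v u) := by
    intro a b w
    induction w with
    | nil => exact id
    | cons h' p' ih => intro ha; exact ih (step _ _ h' ha)
  exact main u x p (Or.inl (aux_self_mem _ _))

lemma aux_sub (hT : T.IsTree) {u v a : W} (huv : T.Adj u v) (hua : T.Adj u a)
    (hva : v ≠ a) : eside T a u ⊆ eside T u v := by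
  intro x hx
  obtain ⟨w, hw⟩ := aux_avoid_mp hT hua.symm hx
  have hvw : v ∉ w.support := by
    intro hv
    have h1 : v ∈ eside T a u :=
      aux_avoid_mpr (w.takeUntil v hv)
        (fun hc => hw ((w.support_takeUntil_subset hv) hc))
    have h2 : v ∈ eside T u a :=
      aux_avoid_mpr (SimpleGraph.Walk.cons huv SimpleGraph.Walk.nil)
        (by simp [hua.ne', Ne.symm hva])
    exact aux_disj hT hua.symm h1 h2
  refine aux_avoid_mpr (SimpleGraph.Walk.cons hua w) ?_
  simp only [SimpleGraph.Walk.support_cons, List.mem_cons]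
  rintro (rfl | hc)
  · exact huv.ne rfl
  · exact hvw hc

lemma aux_not_self (hT : T.IsTree) {u a : W} (hua : T.Adj u a) : u ∉ eside T a u :=
  fun h => aux_disj hT hua.symm h (aux_self_mem u a)

lemma aux_child_disj (hT : T.IsTree) {u a b : W} (hua : T.Adj u a) (hub : T.Adj u b)
    (hab : a ≠ b) {x : W} (hxa : x ∈ eside T a u) (hxb : x ∈ eside T b u) : False := by
  obtain ⟨wa, hwa⟩ := aux_avoid_mp hT hua.symm hxa
  obtain ⟨wb, hwb⟩ := aux_avoid_mp hT hub.symm hxb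
  have hb1 : b ∈ eside T a u := by
    refine aux_avoid_mpr (wa.append wb.reverse) ?_
    rw [SimpleGraph.Walk.mem_support_append_iff]
    rintro (hc | hc)
    · exact hwa hc
    · rw [SimpleGraph.Walk.support_reverse, List.mem_reverse] at hc
      exact hwb hc
  have hb2 : b ∈ eside T u a :=
    aux_avoid_mpr (SimpleGraph.Walk.cons hub SimpleGraph.Walk.nil)
      (by simp [hua.ne', hab])
  exact aux_disj hT hua.symm hb1 hb2

lemma aux_split (hT : T.IsTree) {u t a b x : W} (hut : T.Adj u t)
    (hnbhd : T.neighborSet u = {t, a, b})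
    (hx : x ∈ eside T u t) (hxu : x ≠ u) : x ∈ eside T a u ∨ x ∈ eside T b u := by
  obtain ⟨w0⟩ := hT.isConnected.preconnected u x
  set p := w0.toPath with hp
  obtain ⟨c, h, q, hq⟩ := SimpleGraph.Walk.exists_eq_cons_of_ne (Ne.symm hxu) p.val
  have hnd : (p : T.Walk u x).support.Nodup := p.property.support_nodup
  rw [hq, SimpleGraph.Walk.support_cons] at hnd
  have huq : u ∉ q.support := (List.nodup_cons.mp hnd).1
  have hxc : x ∈ eside T c u := aux_avoid_mpr q huq
  have hc : c ∈ T.neighborSet u := h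
  rw [hnbhd] at hc
  rcases hc with rfl | rfl | rfl
  · exact absurd (aux_disj hT hut hx hxc) (fun hf => hf)
  · exact Or.inl hxc
  · exact Or.inr hxc

lemma aux_leaf_side (hT : T.IsTree) {l u : W} (hl : (T.neighborSet l).ncard ≤ 1)
    (h : T.Adj l u) {x : W} (hx : x ∈ eside T l u) : x = l := by
  obtain ⟨w, hw⟩ := aux_avoid_mp hT h hx
  cases w with
  | nil => rfl
  | @cons _ c _ h' p =>
    exfalso
    have hc : c ∈ T.neighborSet l := h'
    have hu : u ∈ T.neighborSet l := h
    have hcu : c = u := Set.ncard_le_one (Set.toFinite _) |>.mp hl c hc u hu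
    apply hw
    rw [SimpleGraph.Walk.support_cons]
    exact List.mem_cons_of_mem _ (hcu ▸ p.start_mem_support)

lemma aux_extract {s : Set W} (hs : s.ncard = 3) {t : W} (ht : t ∈ s) :
    ∃ a b, a ≠ b ∧ t ≠ a ∧ t ≠ b ∧ s = {t, a, b} := by
  obtain ⟨x, y, z, hxy, hxz, hyz, rfl⟩ := Set.ncard_eq_three.mp hs
  simp only [Set.mem_insert_iff, Set.mem_singleton_iff] at ht
  rcases ht with rfl | rfl | rfl
  · exact ⟨y, z, hyz, hxy, hxz, rfl⟩
  · refine ⟨x, z, hxz, Ne.symm hxy, hyz, ?_⟩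
    ext w; simp only [Set.mem_insert_iff, Set.mem_singleton_iff]; tauto
  · refine ⟨x, y, hxy, Ne.symm hxz, Ne.symm hyz, ?_⟩
    ext w; simp only [Set.mem_insert_iff, Set.mem_singleton_iff]; tauto

lemma aux_exists_leaf (hcub : IsCubicTree T) :
    ∀ n (u v : W), T.Adj u v → (eside T u v).toFinset.card ≤ n →
      ∃ l, IsTreeLeaf T l ∧ l ∈ eside T u v := by
  intro n
  induction n with
  | zero =>
    intro u v h hc
    exfalso
    have hm : u ∈ (eside T u v).toFinset := Set.mem_toFinset.mpr (aux_self_mem u v)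
    have := Finset.card_pos.mpr ⟨u, hm⟩
    omega
  | succ n ih =>
    intro u v h hc
    by_cases hl : IsTreeLeaf T u
    · exact ⟨u, hl, aux_self_mem u v⟩
    · have h3 := hcub.2 u hl
      have hv : v ∈ T.neighborSet u := h
      obtain ⟨a, b, hab, hva, hvb, hnb⟩ := aux_extract h3 hv
      have hua : T.Adj u a := by
        have : a ∈ T.neighborSet u := by rw [hnb]; simp
        exact this
      have hsub := aux_sub hcub.1 h hua hva
      have hss : (eside T a u).toFinset ⊂ (eside T u v).toFinset := by
        rw [Finset.ssubset_iff_of_subset (Set.toFinset_subset_toFinset.mpr hsub)]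
        exact ⟨u, Set.mem_toFinset.mpr (aux_self_mem u v),
          fun hcm => aux_not_self hcub.1 hua (Set.mem_toFinset.mp hcm)⟩
      obtain ⟨l, hl', hm⟩ := ih a u hua.symm
        (by have := Finset.card_lt_card hss; omega)
      exact ⟨l, hl', hsub hm⟩

/-- The leaves lying on the `u`-side of edge `uv`. -/
def lset (T : SimpleGraph W) (u v : W) : Set W :=
  {l | IsTreeLeaf T l ∧ l ∈ eside T u v}

lemma treeShore_eq (φ : W → ℕ) (u v : W) : treeShore T φ u v = φ '' lset T u v := rfl

lemma lset_disj (hT : T.IsTree) {u v : W} (h : T.Adj u v) :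
    Disjoint (lset T u v) (lset T v u) := by
  rw [Set.disjoint_left]
  rintro x ⟨_, h1⟩ ⟨_, h2⟩
  exact aux_disj hT h h1 h2

lemma lset_card (hT : T.IsTree) {u v : W} (h : T.Adj u v) :
    (lset T u v).ncard + (lset T v u).ncard = {l | IsTreeLeaf T l}.ncard := by
  rw [← Set.ncard_union_eq (lset_disj hT h) (Set.toFinite _) (Set.toFinite _)]
  congr 1
  ext x
  constructor
  · rintro (⟨h1, _⟩ | ⟨h1, _⟩) <;> exact h1
  · intro hx
    rcases aux_cover hT h x with hc | hc
    · exact Or.inl ⟨hx, hc⟩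
    · exact Or.inr ⟨hx, hc⟩

lemma lset_compl (hT : T.IsTree) {u v : W} (h : T.Adj u v) :
    {l | IsTreeLeaf T l} \ lset T u v = lset T v u := by
  ext x
  simp only [Set.mem_diff, Set.mem_setOf_eq, lset]
  constructor
  · rintro ⟨hx, hn⟩
    rcases aux_cover hT h x with hc | hc
    · exact absurd ⟨hx, hc⟩ hn
    · exact ⟨hx, hc⟩
  · rintro ⟨hx, hc⟩
    exact ⟨hx, fun hp => aux_disj hT h hp.2 hc⟩

end Aux

/-- Every cubic tree whose leaves are in bijection with a finite set
`S` with `|S| ≥ 3` has an edge inducing a balanced bipartition of `S`: both parts have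
size at least `|S|/3`. -/
theorem exists_balanced_edge {W : Type} [Fintype W] (T : SimpleGraph W)
    (hT : IsCubicTree T) (S : Finset ℕ) (φ : W → ℕ)
    (hbij : Set.BijOn φ {l | IsTreeLeaf T l} ↑S) (hS : 3 ≤ S.card) :
    ∃ t₁ t₂ : W, T.Adj t₁ t₂ ∧
      S.card ≤ 3 * (treeShore T φ t₁ t₂).ncard ∧
      S.card ≤ 3 * ((↑S : Set ℕ) \ treeShore T φ t₁ t₂).ncard := by
  classical
  set n := S.card with hn
  have hLcard : {l | IsTreeLeaf T l}.ncard = n := by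
    have h1 := Set.ncard_image_of_injOn hbij.injOn
    rw [hbij.image_eq, Set.ncard_coe_finset] at h1
    exact h1.symm
  have gsum : ∀ u v : W, T.Adj u v →
      (lset T u v).ncard + (lset T v u).ncard = n := by
    intro u v h
    rw [lset_card hT.1 h, hLcard]
  obtain ⟨t1, t2, hadj, hle, hpmax⟩ :
      ∃ t1 t2 : W, T.Adj t1 t2 ∧ 3 * (lset T t1 t2).ncard ≤ 2 * n ∧
        ∀ c d : W, T.Adj c d → 3 * (lset T c d).ncard ≤ 2 * n →
          (lset T c d).ncard ≤ (lset T t1 t2).ncard := by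
    set cand : Finset (W × W) :=
      Finset.univ.filter (fun p : W × W => T.Adj p.1 p.2 ∧ 3 * (lset T p.1 p.2).ncard ≤ 2 * n) with hcand
    have hne : cand.Nonempty := by
      have hLne : 1 < ({l | IsTreeLeaf T l} : Set W).ncard := by omega
      obtain ⟨l, hl⟩ : ({l | IsTreeLeaf T l} : Set W).Nonempty := by
        apply Set.nonempty_of_ncard_ne_zero; omega
      obtain ⟨l', hl', hll⟩ := Set.exists_ne_of_one_lt_ncard hLne l
      obtain ⟨w⟩ := hT.1.isConnected.preconnected l l'
      obtain ⟨c, hadj, q, _⟩ := SimpleGraph.Walk.exists_eq_cons_of_ne (Ne.symm hll) w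
      have hgl : (lset T l c).ncard ≤ 1 := by
        have hsub : lset T l c ⊆ {l} := fun x hx => aux_leaf_side hT.1 hl hadj hx.2
        calc (lset T l c).ncard ≤ ({l} : Set W).ncard :=
              Set.ncard_le_ncard hsub (Set.toFinite _)
          _ = 1 := Set.ncard_singleton l
      exact ⟨(l, c), Finset.mem_filter.mpr ⟨Finset.mem_univ _, hadj, show 3 * (lset T l c).ncard ≤ 2 * n by omega⟩⟩
    obtain ⟨p, hpmem, hpmax⟩ := Finset.exists_max_image cand (fun p => (lset T p.1 p.2).ncard) hne
    obtain ⟨hadj', hle'⟩ := (Finset.mem_filter.mp hpmem).2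
    refine ⟨p.1, p.2, hadj', hle', ?_⟩
    intro c d h1 h2
    exact hpmax (c, d) (Finset.mem_filter.mpr ⟨Finset.mem_univ _, h1, h2⟩)
  have hsum12 := gsum t1 t2 hadj
  have hmain : n ≤ 3 * (lset T t1 t2).ncard := by
    by_contra hlt
    push_neg at hlt
    have ht2 : ¬ IsTreeLeaf T t2 := by
      intro hlf
      have hsub : lset T t2 t1 ⊆ {t2} :=
        fun x hx => aux_leaf_side hT.1 hlf hadj.symm hx.2
      have h1 : (lset T t2 t1).ncard ≤ 1 := by
        calc (lset T t2 t1).ncard ≤ ({t2} : Set W).ncard :=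
              Set.ncard_le_ncard hsub (Set.toFinite _)
          _ = 1 := Set.ncard_singleton t2
      omega
    have h3 := hT.2 t2 ht2
    have ht1m : t1 ∈ T.neighborSet t2 := hadj.symm
    obtain ⟨a, b, hab, h1a, h1b, hnb⟩ := aux_extract h3 ht1m
    have hta : T.Adj t2 a := by
      have : a ∈ T.neighborSet t2 := by rw [hnb]; simp
      exact this
    have htb : T.Adj t2 b := by
      have : b ∈ T.neighborSet t2 := by rw [hnb]; simp
      exact this
    have hsplit : (lset T t2 t1).ncard = (lset T a t2).ncard + (lset T b t2).ncard := by
      have hunion : lset T t2 t1 = lset T a t2 ∪ lset T b t2 := by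
        ext x
        constructor
        · rintro ⟨hx, hs⟩
          have hxu : x ≠ t2 := fun he => ht2 (he ▸ hx)
          rcases aux_split hT.1 hadj.symm hnb hs hxu with h' | h'
          · exact Or.inl ⟨hx, h'⟩
          · exact Or.inr ⟨hx, h'⟩
        · rintro (⟨hx, hs⟩ | ⟨hx, hs⟩)
          · exact ⟨hx, aux_sub hT.1 hadj.symm hta h1a hs⟩
          · exact ⟨hx, aux_sub hT.1 hadj.symm htb h1b hs⟩
      have hdisj : Disjoint (lset T a t2) (lset T b t2) := by
        rw [Set.disjoint_left]
        rintro x ⟨_, hx1⟩ ⟨_, hx2⟩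
        exact aux_child_disj hT.1 hta htb hab hx1 hx2
      show (lset T t2 t1).ncard = (lset T a t2).ncard + (lset T b t2).ncard
      rw [hunion, Set.ncard_union_eq hdisj (Set.toFinite _) (Set.toFinite _)]
    have hga1 : 1 ≤ (lset T a t2).ncard := by
      obtain ⟨l, hl, hm⟩ := aux_exists_leaf hT _ a t2 hta.symm le_rfl
      have hne' : (lset T a t2).Nonempty := ⟨l, hl, hm⟩
      exact (Set.ncard_pos (Set.toFinite _)).mpr hne'
    have hgb1 : 1 ≤ (lset T b t2).ncard := by
      obtain ⟨l, hl, hm⟩ := aux_exists_leaf hT _ b t2 htb.symm le_rfl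
      have hne' : (lset T b t2).Nonempty := ⟨l, hl, hm⟩
      exact (Set.ncard_pos (Set.toFinite _)).mpr hne'
    have hcontra : ∀ c : W, T.Adj t2 c → (lset T t1 t2).ncard + 1 ≤ (lset T c t2).ncard →
        (lset T c t2).ncard + (lset T t1 t2).ncard + 1 ≤ n → False := by
      intro c hc hge hup
      have hsum := gsum c t2 hc.symm
      by_cases h2n : 3 * (lset T c t2).ncard ≤ 2 * n
      · have hx : (lset T c t2).ncard ≤ (lset T t1 t2).ncard :=
          hpmax c t2 hc.symm h2n
        omega
      · have hx : (lset T t2 c).ncard ≤ (lset T t1 t2).ncard :=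
          hpmax t2 c hc (by omega)
        omega
    rcases le_total ((lset T b t2).ncard) ((lset T a t2).ncard) with hba | hba
    · exact hcontra a hta (by omega) (by omega)
    · exact hcontra b htb (by omega) (by omega)
  refine ⟨t1, t2, hadj, ?_, ?_⟩
  · have hcard : (treeShore T φ t1 t2).ncard = (lset T t1 t2).ncard := by
      rw [treeShore_eq,
        Set.ncard_image_of_injOn (hbij.injOn.mono (fun x hx => hx.1))]
    rw [hcard]
    exact hmain
  · have hdiff : (↑S : Set ℕ) \ treeShore T φ t1 t2 = treeShore T φ t2 t1 := by
      rw [treeShore_eq, treeShore_eq, ← hbij.image_eq,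
        ← Set.InjOn.image_diff_subset hbij.injOn (fun x hx => hx.1),
        lset_compl hT.1 hadj]
    have hcard : (treeShore T φ t2 t1).ncard = (lset T t2 t1).ncard := by
      rw [treeShore_eq,
        Set.ncard_image_of_injOn (hbij.injOn.mono (fun x hx => hx.1))]
    rw [hdiff, hcard]
    omega
end
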